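/- arXiv:1211.1953 — 4 statements merged into one kernel-verified Lean document; each statement's English description precedes it below -/
import Mathlib

section
/- In any crystallization C, the numbers of bigons in complementary pairs of colors coincide: b_01(C) = b_23(C), b_02(C) = b_13(C), and b_03(C) = b_12(C). -/
/-!
We model a (3+1)-graph on a finite nonempty vertex set `V` as a quadruple
`σ : Fin 4 → Equiv.Perm V` of fixed-point-free involutions whose generated
subgroup acts transitively on `V`.
-/

/-- `f` is a fixed-point-free involution. -/
def IsFPFInvolution {V : Type*} (f : Equiv.Perm V) : Prop :=
  (∀ x, f x ≠ x) ∧ ∀ x, f (f x) = x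

/-- `x` and `y` lie in the same `I`-residue: `y` is in the orbit of `x` under the
subgroup generated by the permutations of the colors in `I`. -/
def SameResidue {V : Type*} (σ : Fin 4 → Equiv.Perm V) (I : Set (Fin 4)) (x y : V) : Prop :=
  ∃ g ∈ Subgroup.closure (σ '' I), g x = y

/-- The set of `I`-residues (orbits on `V` of the subgroup generated by the
permutations of colors in `I`). -/
def residues {V : Type*} (σ : Fin 4 → Equiv.Perm V) (I : Set (Fin 4)) : Set (Set V) :=
  {O | ∃ x, O = {y | SameResidue σ I x y}}

/-- The number of `I`-residues. -/
noncomputable def numResidues {V : Type*} (σ : Fin 4 → Equiv.Perm V) (I : Set (Fin 4)) : ℕ :=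
  (residues σ I).ncard

/-- A (3+1)-graph: four fixed-point-free involutions generating a subgroup that acts
transitively on the vertex set. -/
def IsGraph31 {V : Type*} (σ : Fin 4 → Equiv.Perm V) : Prop :=
  (∀ c, IsFPFInvolution (σ c)) ∧ ∀ x y : V, SameResidue σ Set.univ x y

/-- `b(G)`: total number of bigons (`ij`-gons over the six unordered pairs of colors). -/
noncomputable def bCount {V : Type*} (σ : Fin 4 → Equiv.Perm V) : ℕ :=
  ∑ p ∈ Finset.univ.filter (fun p : Fin 4 × Fin 4 => p.1 < p.2),
    numResidues σ ({p.1, p.2} : Set (Fin 4))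

/-- `t(G)`: total number of 3-residues over the four 3-element subsets of colors. -/
noncomputable def tCount {V : Type*} (σ : Fin 4 → Equiv.Perm V) : ℕ :=
  ∑ c : Fin 4, numResidues σ (({c}ᶜ : Set (Fin 4)))

/-- A 3-gem: a (3+1)-graph with `v(G) + t(G) = b(G)`. -/
def IsGem {V : Type*} [Fintype V] (σ : Fin 4 → Equiv.Perm V) : Prop :=
  IsGraph31 σ ∧ Fintype.card V + tCount σ = bCount σ

/-- A crystallization: a 3-gem with no 1-dipoles, i.e. for every color `c` and vertex `x`,
the vertices `x` and `σ c x` lie in the same `({0,1,2,3} \ {c})`-residue. -/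
def IsCrystallization {V : Type*} [Fintype V] (σ : Fin 4 → Equiv.Perm V) : Prop :=
  IsGem σ ∧ ∀ (c : Fin 4) (x : V), SameResidue σ (({c}ᶜ : Set (Fin 4))) x (σ c x)



namespace Crys

open Equiv Subgroup

variable {V : Type*}

def orel (H : Subgroup (Equiv.Perm V)) (x y : V) : Prop := ∃ g ∈ H, g x = y

lemma orel_refl (H : Subgroup (Equiv.Perm V)) (x : V) : orel H x x := ⟨1, H.one_mem, rfl⟩

lemma orel_symm {H : Subgroup (Equiv.Perm V)} {x y : V} : orel H x y → orel H y x := by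
  rintro ⟨g, hg, rfl⟩
  exact ⟨g⁻¹, H.inv_mem hg, by simp⟩

lemma orel_trans {H : Subgroup (Equiv.Perm V)} {x y z : V} :
    orel H x y → orel H y z → orel H x z := by
  rintro ⟨g, hg, rfl⟩ ⟨g', hg', rfl⟩
  exact ⟨g' * g, H.mul_mem hg' hg, by simp⟩

lemma orel_mono {H K : Subgroup (Equiv.Perm V)} (h : H ≤ K) {x y : V} :
    orel H x y → orel K x y := by
  rintro ⟨g, hg, rfl⟩; exact ⟨g, h hg, rfl⟩

lemma orel_of_mem {H : Subgroup (Equiv.Perm V)} {g : Equiv.Perm V} (hg : g ∈ H) (x : V) :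
    orel H x (g x) := ⟨g, hg, rfl⟩

def oSetoid (H : Subgroup (Equiv.Perm V)) : Setoid V :=
  ⟨orel H, ⟨orel_refl H, orel_symm, orel_trans⟩⟩

noncomputable def oc (H : Subgroup (Equiv.Perm V)) : ℕ := Nat.card (Quotient (oSetoid H))

instance ocFin [Finite V] (H : Subgroup (Equiv.Perm V)) : Finite (Quotient (oSetoid H)) :=
  Quotient.finite _

lemma numResidues_eq_oc (σ : Fin 4 → Equiv.Perm V) (I : Set (Fin 4)) :
    numResidues σ I = oc (Subgroup.closure (σ '' I)) := by
  set H := Subgroup.closure (σ '' I) with hH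
  set f : V → Set V := fun x => {y | orel H x y} with hf
  have hres : residues σ I = Set.range f := by
    ext O
    constructor
    · rintro ⟨x, rfl⟩; exact ⟨x, rfl⟩
    · rintro ⟨x, rfl⟩; exact ⟨x, rfl⟩
  have hker : Setoid.ker f = oSetoid H := by
    apply Setoid.ext
    intro a b
    constructor
    · intro h
      have hb : b ∈ f b := orel_refl H b
      have : b ∈ f a := by
        have h' : f a = f b := h
        rw [h']; exact hb
      exact this
    · intro h
      show f a = f b
      ext y
      constructor
      · intro hy; exact orel_trans (orel_symm h) hy
      · intro hy; exact orel_trans h hy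
  have : numResidues σ I = Nat.card (Set.range f) := by
    rw [numResidues, hres, ← Nat.card_coe_set_eq]
  rw [this, ← Nat.card_congr (Setoid.quotientKerEquivRange f), oc, hker]

/-- Invariance of a finite set under a closure. -/
lemma closure_mapsTo [Finite V] {S : Set (Equiv.Perm V)} {T : Set V}
    (hinv : ∀ s ∈ S, ∀ t ∈ T, s t ∈ T) :
    ∀ g ∈ Subgroup.closure S, ∀ t ∈ T, g t ∈ T := by
  intro g hg
  induction hg using Subgroup.closure_induction with
  | mem s hs => exact hinv s hs
  | one => simpa using fun t ht => ht
  | mul g h _ _ ihg ihh =>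
    intro t ht
    have : (g * h) t = g (h t) := rfl
    rw [this]; exact ihg _ (ihh t ht)
  | inv g _ ih =>
    intro t ht
    have himg : g '' T = T := by
      apply Set.eq_of_subset_of_ncard_le
      · rintro _ ⟨u, hu, rfl⟩; exact ih u hu
      · rw [Set.ncard_image_of_injective _ g.injective]
      · exact Set.toFinite T
    rw [← himg] at ht
    obtain ⟨u, hu, he⟩ := ht
    have : g⁻¹ (g u) = u := by simp
    rw [← he, this]; exact hu

lemma oc_le_oc [Finite V] {H K : Subgroup (Equiv.Perm V)} (h : H ≤ K) : oc K ≤ oc H := by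
  apply Nat.card_le_card_of_surjective
    (Quotient.lift (fun v => (Quotient.mk (oSetoid K) v))
      (fun a b hab => Quotient.sound (orel_mono h hab)))
  intro c
  induction c using Quotient.ind with
  | _ v => exact ⟨Quotient.mk _ v, rfl⟩

/-- surjective and non-injective gives card + 1 ≤ card -/
lemma card_add_one_le_of_surj {A B : Type*} [Finite A] [Finite B] (f : A → B)
    (hf : Function.Surjective f) (a₁ a₂ : A) (hne : a₁ ≠ a₂) (heq : f a₁ = f a₂) :
    Nat.card B + 1 ≤ Nat.card A := by
  obtain ⟨s, hs⟩ := hf.hasRightInverse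
  have hsinj : Function.Injective s := fun b b' h => by rw [← hs b, ← hs b', h]
  classical
  set a₀ : A := if s (f a₁) = a₁ then a₂ else a₁ with ha₀
  have ha₀r : a₀ ∉ Set.range s := by
    rintro ⟨b, hb⟩
    by_cases hc : s (f a₁) = a₁
    · have : a₀ = a₂ := by rw [ha₀, if_pos hc]
      rw [this] at hb
      have : b = f a₂ := by rw [← hb, hs]
      rw [this, ← heq, hc] at hb
      exact hne hb
    · have : a₀ = a₁ := by rw [ha₀, if_neg hc]
      rw [this] at hb
      have : b = f a₁ := by rw [← hb, hs]
      rw [this] at hb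
      exact hc hb
  have : Function.Injective (fun x : B ⊕ Unit => Sum.elim s (fun _ => a₀) x) := by
    rintro (b | u) (b' | u') h
    · simp only [Sum.elim_inl] at h; rw [hsinj h]
    · exact absurd ⟨b, h⟩ ha₀r
    · exact absurd ⟨b', h.symm⟩ ha₀r
    · cases u; cases u'; rfl
  have hle := Nat.card_le_card_of_injective _ this
  rw [Nat.card_sum] at hle
  simpa using hle

lemma oc_bot [Fintype V] : oc (⊥ : Subgroup (Equiv.Perm V)) = Fintype.card V := by
  have F : Quotient (oSetoid (⊥ : Subgroup (Equiv.Perm V))) ≃ V := by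
    refine ⟨Quotient.lift id ?_, fun v => Quotient.mk _ v, ?_, ?_⟩
    · rintro a b ⟨g, hg, rfl⟩
      rw [Subgroup.mem_bot] at hg
      subst hg; rfl
    · intro q; induction q using Quotient.ind with
      | _ v => rfl
    · intro v; rfl
  rw [oc, Nat.card_congr F, Nat.card_eq_fintype_card]

lemma oc_eq_one [Finite V] [Nonempty V] {H : Subgroup (Equiv.Perm V)}
    (htr : ∀ x y : V, orel H x y) : oc H = 1 := by
  rw [oc, Nat.card_eq_one_iff_unique]
  constructor
  · constructor
    intro a b
    induction a using Quotient.ind with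
    | _ x =>
      induction b using Quotient.ind with
      | _ y => exact Quotient.sound (htr x y)
  · exact ⟨Quotient.mk _ (Classical.arbitrary V)⟩

end Crys

namespace Crys2
open Equiv Subgroup Crys

variable {V : Type*} [Finite V] [DecidableEq V]

/-- L2: inserting a swap into the generators loses at most one orbit. -/
lemma oc_le_insert_swap {S : Set (Equiv.Perm V)} {x y : V} (hxy : x ≠ y) :
    oc (Subgroup.closure S) ≤ oc (Subgroup.closure (insert (Equiv.swap x y) S)) + 1 := by
  classical
  set s := Equiv.swap x y with hs
  set H := Subgroup.closure S with hH
  set K := Subgroup.closure (insert s S) with hK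
  have hHK : H ≤ K := Subgroup.closure_mono (Set.subset_insert _ _)
  have hsK : s ∈ K := Subgroup.subset_closure (Set.mem_insert _ _)
  -- claim A
  have claimA : ∀ z w : V, ¬ orel K z x → orel K z w → orel H z w := by
    intro z w hzx hzw
    have hT : ∀ g ∈ K, ∀ t ∈ {t | orel H z t}, g t ∈ {t | orel H z t} := by
      apply closure_mapsTo
      rintro g hg t (ht : orel H z t)
      rcases hg with rfl | hgS
      · by_cases h1 : t = x
        · exact absurd (orel_mono hHK (h1 ▸ ht)) hzx
        · by_cases h2 : t = y
          · exfalso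
            apply hzx
            refine orel_trans (orel_mono hHK ht) ⟨s, hsK, ?_⟩
            rw [h2]
            exact Equiv.swap_apply_right x y
          · show orel H z (s t)
            rw [hs, Equiv.swap_apply_of_ne_of_ne h1 h2]
            exact ht
      · exact orel_trans ht ⟨g, Subgroup.subset_closure hgS, rfl⟩
    obtain ⟨g, hg, rfl⟩ := hzw
    exact hT g hg z (orel_refl H z)
  -- claim B
  have claimB : ∀ z : V, orel K z x → orel H z x ∨ orel H z y := by
    intro z hzx
    have hT : ∀ g ∈ K, ∀ t ∈ {t | orel H x t ∨ orel H y t},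
        g t ∈ {t | orel H x t ∨ orel H y t} := by
      apply closure_mapsTo
      rintro g hg t ht
      rcases hg with rfl | hgS
      · by_cases h1 : t = x
        · subst h1
          right
          rw [Equiv.swap_apply_left]
          exact orel_refl H y
        · by_cases h2 : t = y
          · subst h2
            left
            rw [Equiv.swap_apply_right]
            exact orel_refl H x
          · rw [Equiv.swap_apply_of_ne_of_ne h1 h2]; exact ht
      · rcases ht with ht | ht
        · exact Or.inl (orel_trans ht ⟨g, Subgroup.subset_closure hgS, rfl⟩)
        · exact Or.inr (orel_trans ht ⟨g, Subgroup.subset_closure hgS, rfl⟩)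
    obtain ⟨g, hg, rfl⟩ := orel_symm hzx
    rcases hT g hg x (Or.inl (orel_refl H x)) with h | h
    · exact Or.inl (orel_symm h)
    · exact Or.inr (orel_symm h)
  -- the injection
  set F : V → Quotient (oSetoid K) ⊕ Unit := fun z =>
    if orel H z y ∧ ¬ orel H z x then Sum.inr () else Sum.inl (Quotient.mk (oSetoid K) z) with hF
  have hFconst : ∀ a b : V, orel H a b → F a = F b := by
    intro a b hab
    have h1 : (orel H a y ∧ ¬ orel H a x) ↔ (orel H b y ∧ ¬ orel H b x) := by
      constructor
      · rintro ⟨h, h'⟩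
        exact ⟨orel_trans (orel_symm hab) h, fun hc => h' (orel_trans hab hc)⟩
      · rintro ⟨h, h'⟩
        exact ⟨orel_trans hab h, fun hc => h' (orel_trans (orel_symm hab) hc)⟩
    by_cases hc : orel H a y ∧ ¬ orel H a x
    · rw [hF]; simp only [if_pos hc, if_pos (h1.mp hc)]
    · rw [hF]
      simp only [if_neg hc, if_neg (fun h => hc (h1.mpr h))]
      exact congrArg _ (Quotient.sound (orel_mono hHK hab))
  have hinj : Function.Injective (Quotient.lift F hFconst :
      Quotient (oSetoid H) → Quotient (oSetoid K) ⊕ Unit) := by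
    intro c c'
    induction c using Quotient.ind with
    | _ z =>
    induction c' using Quotient.ind with
    | _ z' =>
    intro h
    change F z = F z' at h
    apply Quotient.sound
    show orel H z z'
    by_cases h1 : orel H z y ∧ ¬ orel H z x
    · by_cases h2 : orel H z' y ∧ ¬ orel H z' x
      · exact orel_trans h1.1 (orel_symm h2.1)
      · rw [hF] at h; simp [if_pos h1, if_neg h2] at h
    · by_cases h2 : orel H z' y ∧ ¬ orel H z' x
      · rw [hF] at h; simp [if_neg h1, if_pos h2] at h
      · rw [hF] at h
        simp only [if_neg h1, if_neg h2, Sum.inl.injEq] at h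
        have hKzz' : orel K z z' := Quotient.exact h
        by_cases h3 : orel K z x
        · have hzx : orel H z x := by
            rcases claimB z h3 with h4 | h4
            · exact h4
            · rcases not_and_or.mp h1 with h5 | h5
              · exact absurd h4 h5
              · exact not_not.mp h5
          have hz'x : orel H z' x := by
            have h3' : orel K z' x := orel_trans (orel_symm hKzz') h3
            rcases claimB z' h3' with h4 | h4
            · exact h4
            · rcases not_and_or.mp h2 with h5 | h5
              · exact absurd h4 h5
              · exact not_not.mp h5
          exact orel_trans hzx (orel_symm hz'x)
        · exact claimA z z' h3 hKzz'
  have hle := Nat.card_le_card_of_injective _ hinj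
  rw [Nat.card_sum] at hle
  simpa [oc] using hle

/-- L3: splitting a cycle by a swap. -/
lemma oc_add_one_le_split {g : Equiv.Perm V} {a : V} (ha : g a ≠ a) :
    oc (Subgroup.closure {g}) + 1 ≤ oc (Subgroup.closure {Equiv.swap a (g a) * g}) := by
  set b := g a with hb
  set s := Equiv.swap a b with hs
  set g' := s * g with hg'
  set G := Subgroup.closure ({g} : Set (Equiv.Perm V)) with hG
  set G' := Subgroup.closure ({g'} : Set (Equiv.Perm V)) with hG'
  have hgmem : g ∈ G := Subgroup.subset_closure rfl
  -- refinement: every G' move stays in G orbits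
  have href : ∀ z w : V, orel G' z w → orel G z w := by
    intro z w hzw
    have hT : ∀ h ∈ G', ∀ t ∈ {t | orel G z t}, h t ∈ {t | orel G z t} := by
      apply closure_mapsTo
      rintro h (rfl : h = g') t (ht : orel G z t)
      show orel G z (g' t)
      have hgt : orel G z (g t) := orel_trans ht ⟨g, hgmem, rfl⟩
      have : g' t = s (g t) := rfl
      rw [this]
      by_cases h1 : g t = a
      · rw [h1, Equiv.swap_apply_left]
        have : orel G a b := ⟨g, hgmem, rfl⟩
        exact orel_trans (h1 ▸ hgt) this
      · by_cases h2 : g t = b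
        · rw [h2, Equiv.swap_apply_right]
          have : orel G a b := ⟨g, hgmem, rfl⟩
          exact orel_trans (h2 ▸ hgt) (orel_symm this)
        · rw [Equiv.swap_apply_of_ne_of_ne h1 h2]; exact hgt
    obtain ⟨h, hh, rfl⟩ := hzw
    exact hT h hh z (orel_refl G z)
  -- a is fixed by G'
  have hfix : ∀ h ∈ G', h a = a := by
    have hT : ∀ h ∈ G', ∀ t ∈ ({a} : Set V), h t ∈ ({a} : Set V) := by
      apply closure_mapsTo
      rintro h (rfl : h = g') t (rfl : t = a)
      show g' t = t
      show s (g t) = t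
      rw [← hb, Equiv.swap_apply_right]
    intro h hh
    exact hT h hh a rfl
  have hne : ¬ orel G' a b := by
    rintro ⟨h, hh, he⟩
    rw [hfix h hh] at he
    exact ha he.symm
  -- surjection Q G' -> Q G, with classes of a and b merging
  have hsurj : Function.Surjective (Quotient.lift
      (fun v => (Quotient.mk (oSetoid G) v)) (fun u v huv => Quotient.sound (href u v huv)) :
      Quotient (oSetoid G') → Quotient (oSetoid G)) := by
    intro c
    induction c using Quotient.ind with
    | _ v => exact ⟨Quotient.mk _ v, rfl⟩
  have := card_add_one_le_of_surj _ hsurj (Quotient.mk _ a) (Quotient.mk _ b)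
    (fun h => hne (Quotient.exact h)) (Quotient.sound ⟨g, hgmem, rfl⟩)
  simpa [oc] using this

/-- Lemma B: short factorisation into swaps. -/
lemma exists_swap_factorisation [Fintype V] (g : Equiv.Perm V) :
    ∃ L : List (Equiv.Perm V), (∀ τ ∈ L, Equiv.Perm.IsSwap τ) ∧ L.prod = g ∧
      L.length + oc (Subgroup.closure {g}) ≤ Fintype.card V := by
  generalize hm : g.support.card = m
  induction m using Nat.strong_induction_on generalizing g with
  | _ m IH =>
  by_cases hg1 : g = 1
  · refine ⟨[], by simp, by simp [hg1], ?_⟩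
    subst hg1
    rw [Subgroup.closure_singleton_one]
    simp [oc_bot]
  · obtain ⟨a, ha⟩ : ∃ a, g a ≠ a := by
      by_contra hc
      push_neg at hc
      exact hg1 (Equiv.ext hc)
    have hab : a ≠ g a := fun h => ha h.symm
    set g' := Equiv.swap a (g a) * g with hg'
    have hsub : g'.support ⊆ g.support := by
      intro z hz
      rw [Equiv.Perm.mem_support] at hz ⊢
      intro hgz
      apply hz
      show (Equiv.swap a (g a)) (g z) = z
      rw [hgz]
      apply Equiv.swap_apply_of_ne_of_ne
      · intro h; rw [h] at hgz; exact ha hgz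
      · intro h
        rw [h] at hgz
        exact hab (g.injective hgz.symm)
    have hanotin : a ∉ g'.support := by
      rw [Equiv.Perm.mem_support]
      push_neg
      show (Equiv.swap a (g a)) (g a) = a
      rw [Equiv.swap_apply_right]
    have hain : a ∈ g.support := Equiv.Perm.mem_support.mpr ha
    have hlt : g'.support.card < m := by
      rw [← hm]
      apply Finset.card_lt_card
      exact ⟨hsub, fun h => hanotin (h hain)⟩
    obtain ⟨L', hL'sw, hL'p, hL'len⟩ := IH _ hlt g' rfl
    refine ⟨Equiv.swap a (g a) :: L', ?_, ?_, ?_⟩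
    · intro τ hτ
      rcases List.mem_cons.mp hτ with rfl | hτ
      · exact ⟨a, g a, hab, rfl⟩
      · exact hL'sw τ hτ
    · rw [List.prod_cons, hL'p, hg', ← mul_assoc, Equiv.swap_mul_self, one_mul]
    · have hsplit := oc_add_one_le_split ha
      rw [← hg'] at hsplit
      simp only [List.length_cons]
      omega

end Crys2

namespace Crys3
open Equiv Subgroup Crys Crys2

variable {V : Type*} [Finite V] [DecidableEq V]

def cnt (a : V) : List (Equiv.Perm V) → ℕ
  | [] => 0
  | τ :: M => cnt a M + (if τ a = a then 0 else 1)

lemma listSet_cons (τ : Equiv.Perm V) (M : List (Equiv.Perm V)) :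
    {g | g ∈ (τ :: M)} = insert τ {g | g ∈ M} := by
  ext g; simp [List.mem_cons, Set.mem_insert_iff]

lemma prod_fix (a : V) : ∀ (L : List (Equiv.Perm V)), (∀ τ ∈ L, τ a = a) → L.prod a = a := by
  intro L
  induction L with
  | nil => intro _; rfl
  | cons τ M ih =>
    intro h
    rw [List.prod_cons]
    show τ (M.prod a) = a
    rw [ih (fun ρ hρ => h ρ (List.mem_cons_of_mem _ hρ)), h τ (List.mem_cons_self)]

lemma isSwap_moving {f : Equiv.Perm V} (hf : f.IsSwap) {a : V} (ha : f a ≠ a) :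
    f = Equiv.swap a (f a) ∧ f a ≠ a := by
  obtain ⟨u, v, huv, rfl⟩ := hf
  constructor
  · by_cases h1 : a = u
    · subst h1; rw [Equiv.swap_apply_left]
    · by_cases h2 : a = v
      · subst h2
        rw [Equiv.swap_apply_right, Equiv.swap_comm]
      · exact absurd (Equiv.swap_apply_of_ne_of_ne h1 h2) ha
  · exact ha

lemma conj_isSwap {f τ : Equiv.Perm V} (hf : f.IsSwap) (τi : τ * τ = 1) :
    (τ * f * τ).IsSwap := by
  obtain ⟨u, v, huv, rfl⟩ := hf
  refine ⟨τ u, τ v, fun h => huv (τ.injective h), ?_⟩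
  have : τ⁻¹ = τ := by
    rw [← mul_one τ⁻¹, ← τi, ← mul_assoc, inv_mul_cancel, one_mul]
  rw [Equiv.swap_apply_apply, this]

/-- Bubble a swap moving `a` to the front of the list. -/
lemma bubble (a : V) : ∀ (L : List (Equiv.Perm V)), (∀ τ ∈ L, τ.IsSwap) →
    (∃ τ ∈ L, τ a ≠ a) →
    ∃ (c : V) (M : List (Equiv.Perm V)), c ≠ a ∧ (∀ τ ∈ M, τ.IsSwap) ∧
      ((Equiv.swap a c) :: M).prod = L.prod ∧
      M.length + 1 = L.length ∧
      Subgroup.closure {g | g ∈ (Equiv.swap a c) :: M} = Subgroup.closure {g | g ∈ L} ∧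
      cnt a ((Equiv.swap a c) :: M) = cnt a L := by
  intro L
  induction L with
  | nil => rintro _ ⟨τ, h, _⟩; exact absurd h List.not_mem_nil
  | cons τ₀ L' ih =>
    intro hsw hmov
    by_cases h0 : τ₀ a = a
    · -- head fixes a, recurse
      have hmov' : ∃ τ ∈ L', τ a ≠ a := by
        obtain ⟨τ, hτ, hτa⟩ := hmov
        rcases List.mem_cons.mp hτ with rfl | h
        · exact absurd h0 hτa
        · exact ⟨τ, h, hτa⟩
      obtain ⟨c, M, hca, hMsw, hMp, hMlen, hMcl, hMcnt⟩ :=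
        ih (fun τ h => hsw τ (List.mem_cons_of_mem _ h)) hmov'
      have hτ0sw : τ₀.IsSwap := hsw τ₀ (List.mem_cons_self)
      have hτ0i : τ₀ * τ₀ = 1 := by
        obtain ⟨u, v, huv, rfl⟩ := hτ0sw
        exact Equiv.swap_mul_self u v
      set s := Equiv.swap a c with hs
      set s' := τ₀ * s * τ₀ with hs'
      have hs'v : s' = Equiv.swap a (τ₀ c) := by
        have hτinv : τ₀⁻¹ = τ₀ := by
          rw [← mul_one τ₀⁻¹, ← hτ0i, ← mul_assoc, inv_mul_cancel, one_mul]
        have h := (Equiv.swap_apply_apply τ₀ a c).symm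
        rw [hτinv] at h
        rw [hs', hs, h, h0]
      refine ⟨τ₀ c, τ₀ :: M, ?_, ?_, ?_, ?_, ?_, ?_⟩
      · intro h
        apply hca
        have : τ₀ (τ₀ c) = τ₀ a := by rw [h]
        have h2 : τ₀ (τ₀ c) = c := by
          have := congrArg (fun f : Equiv.Perm V => f c) hτ0i
          simpa using this
        rw [h2, h0] at this
        exact this
      · intro τ hτ
        rcases List.mem_cons.mp hτ with rfl | h
        · exact hτ0sw
        · exact hMsw τ h
      · rw [← hs'v]
        have : (s' :: τ₀ :: M) = [s', τ₀] ++ M := rfl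
        rw [this, List.prod_append, List.prod_cons, List.prod_cons, List.prod_nil, mul_one, hs']
        have : τ₀ * s * τ₀ * τ₀ * M.prod = τ₀ * (s * M.prod) := by
          rw [mul_assoc (τ₀ * s) τ₀ τ₀, hτ0i, mul_one, mul_assoc]
        rw [this]
        have hsM : s * M.prod = L'.prod := by
          have := hMp
          rw [List.prod_cons] at this
          exact this
        rw [hsM, List.prod_cons]
      · simp only [List.length_cons] at hMlen ⊢
        omega
      · rw [← hs'v, listSet_cons, listSet_cons, listSet_cons]
        have hL' : Subgroup.closure (insert s {g | g ∈ M}) =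
            Subgroup.closure {g | g ∈ L'} := by
          rw [← listSet_cons]; exact hMcl
        apply le_antisymm
        · rw [Subgroup.closure_le]
          intro g hg
          rcases Set.mem_insert_iff.mp hg with rfl | hg
          · -- s' ∈ closure (insert τ₀ L')
            have hsmem : s ∈ Subgroup.closure (insert τ₀ {g | g ∈ L'}) := by
              have : s ∈ Subgroup.closure {g | g ∈ L'} := by
                rw [← hL']
                exact Subgroup.subset_closure (Set.mem_insert _ _)
              exact Subgroup.closure_mono (Set.subset_insert _ _) this
            have hτmem : τ₀ ∈ Subgroup.closure (insert τ₀ {g | g ∈ L'}) :=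
              Subgroup.subset_closure (Set.mem_insert _ _)
            exact Subgroup.mul_mem _ (Subgroup.mul_mem _ hτmem hsmem) hτmem
          · rcases Set.mem_insert_iff.mp hg with rfl | hg
            · exact Subgroup.subset_closure (Set.mem_insert _ _)
            · have : g ∈ Subgroup.closure {g | g ∈ L'} := by
                rw [← hL']
                exact Subgroup.subset_closure (Set.mem_insert_iff.mpr (Or.inr hg))
              exact Subgroup.closure_mono (Set.subset_insert _ _) this
        · rw [Subgroup.closure_le]
          intro g hg
          rcases Set.mem_insert_iff.mp hg with rfl | hg
          · exact Subgroup.subset_closure (Set.mem_insert_iff.mpr (Or.inr (Set.mem_insert _ _)))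
          · -- g ∈ L' : g ∈ closure (s :: M) = closure(insert s M)
            have hgm : g ∈ Subgroup.closure (insert s {g | g ∈ M}) := by
              rw [hL']
              exact Subgroup.subset_closure hg
            have hsub : insert s {g | g ∈ M} ⊆
                ↑(Subgroup.closure (insert s' (insert τ₀ {g | g ∈ M}))) := by
              intro x hx
              rcases Set.mem_insert_iff.mp hx with rfl | hx
              · -- s = τ₀ * s' * τ₀
                have h1 : τ₀ ∈ Subgroup.closure (insert s' (insert τ₀ {g | g ∈ M})) :=
                  Subgroup.subset_closure (Set.mem_insert_iff.mpr
                    (Or.inr (Set.mem_insert _ _)))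
                have h2 : s' ∈ Subgroup.closure (insert s' (insert τ₀ {g | g ∈ M})) :=
                  Subgroup.subset_closure (Set.mem_insert _ _)
                have : s = τ₀ * s' * τ₀ := by
                  rw [hs', ← mul_assoc, ← mul_assoc, hτ0i, one_mul, mul_assoc, hτ0i, mul_one]
                rw [this]
                exact Subgroup.mul_mem _ (Subgroup.mul_mem _ h1 h2) h1
              · exact Subgroup.subset_closure
                  (Set.mem_insert_iff.mpr (Or.inr (Set.mem_insert_iff.mpr (Or.inr hx))))
            exact (Subgroup.closure_le _).mpr hsub hgm
      · rw [← hs'v]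
        have h2' : τ₀ (τ₀ c) = c := by
          have := congrArg (fun f : Equiv.Perm V => f c) hτ0i
          simpa using this
        have hs'a : s' a ≠ a := by
          intro h
          have h3 : s' a = τ₀ c := by rw [hs'v, Equiv.swap_apply_left]
          rw [h] at h3
          have h4 : τ₀ a = τ₀ (τ₀ c) := congrArg τ₀ h3
          rw [h0, h2'] at h4
          exact hca h4.symm
        show cnt a (s' :: τ₀ :: M) = cnt a (τ₀ :: L')
        have e1 : cnt a (s' :: τ₀ :: M) =
            cnt a M + (if τ₀ a = a then 0 else 1) + (if s' a = a then 0 else 1) := rfl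
        have e2 : cnt a (τ₀ :: L') = cnt a L' + (if τ₀ a = a then 0 else 1) := rfl
        have e3 : cnt a (s :: M) = cnt a M + (if s a = a then 0 else 1) := rfl
        have hsa : s a ≠ a := by
          rw [hs, Equiv.swap_apply_left]; exact hca
        rw [e1, e2, ← hMcnt, e3, if_neg hs'a, if_neg hsa, if_pos h0]
    · -- head moves a
      obtain ⟨heq, _⟩ := isSwap_moving (hsw τ₀ (List.mem_cons_self)) h0
      refine ⟨τ₀ a, L', h0, fun τ h => hsw τ (List.mem_cons_of_mem _ h), ?_, rfl, ?_, ?_⟩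
      · rw [← heq]
      · rw [← heq]
      · rw [← heq]

end Crys3

namespace Crys4
open Equiv Subgroup Crys Crys2 Crys3

variable {V : Type*} [Fintype V] [DecidableEq V]

lemma Caux : ∀ N : ℕ, ∀ (L : List (Equiv.Perm V)) (a : V),
    (∀ τ ∈ L, τ.IsSwap) → L.prod = 1 → (∀ τ ∈ L.take 1, τ a ≠ a) →
    L.length ^ 2 + cnt a L ≤ N →
    2 * Fintype.card V ≤ L.length + 2 * oc (Subgroup.closure {g | g ∈ L}) := by
  intro N
  induction N with
  | zero =>
    intro L a hsw hp hh hm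
    -- length = 0
    have : L = [] := by
      cases L with
      | nil => rfl
      | cons τ M =>
        exfalso
        have h2 : 0 < (τ :: M).length := by simp
        have h3 : 0 < (τ :: M).length ^ 2 := by positivity
        omega
    subst this
    have : ({g | g ∈ ([] : List (Equiv.Perm V))} : Set (Equiv.Perm V)) = ∅ := by
      ext g; simp
    rw [this, Subgroup.closure_empty]
    simp [oc_bot]
  | succ N IH =>
    intro L a hsw hp hh hm
    cases hL : L with
    | nil =>
      have : ({g | g ∈ ([] : List (Equiv.Perm V))} : Set (Equiv.Perm V)) = ∅ := by
        ext g; simp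
      rw [this, Subgroup.closure_empty]
      simp [oc_bot]
    | cons τ₀ L' =>
    subst hL
    have hτ0 : τ₀ a ≠ a := hh τ₀ (by simp)
    have hτ0sw := hsw τ₀ (List.mem_cons_self)
    obtain ⟨hτ0eq, _⟩ := isSwap_moving hτ0sw hτ0
    set b := τ₀ a with hbdef
    have hab : a ≠ b := fun h => hτ0 h.symm
    -- L'.prod = τ₀
    have hτ0i : τ₀ * τ₀ = 1 := by
      rw [hτ0eq]; exact Equiv.swap_mul_self _ _
    have hL'p : L'.prod = τ₀ := by
      rw [List.prod_cons] at hp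
      have := congrArg (fun x => τ₀ * x) hp
      simpa [← mul_assoc, hτ0i] using this
    -- some element of L' moves a
    have hmov : ∃ τ ∈ L', τ a ≠ a := by
      by_contra hc
      push_neg at hc
      have := prod_fix a L' hc
      rw [hL'p] at this
      exact hτ0 this
    obtain ⟨c, M, hca, hMsw, hMp, hMlen, hMcl, hMcnt⟩ :=
      bubble a L' (fun τ h => hsw τ (List.mem_cons_of_mem _ h)) hmov
    set s := Equiv.swap a c with hs
    by_cases hcb : c = b
    · -- cancellation: s = τ₀, M.prod = 1
      have hsτ : s = τ₀ := by rw [hs, hcb, hτ0eq]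
      have hMprod : M.prod = 1 := by
        have h1 : (s :: M).prod = τ₀ := by rw [hMp, hL'p]
        rw [List.prod_cons, hsτ] at h1
        have := congrArg (fun x => τ₀⁻¹ * x) h1
        simpa [← mul_assoc] using this
      -- closure L = closure (insert τ₀ Mset)
      have hclL : Subgroup.closure {g | g ∈ (τ₀ :: L')} =
          Subgroup.closure (insert τ₀ {g | g ∈ M}) := by
        rw [listSet_cons]
        apply le_antisymm
        · rw [Subgroup.closure_le]
          intro g hg
          rcases Set.mem_insert_iff.mp hg with rfl | hg
          · exact Subgroup.subset_closure (Set.mem_insert _ _)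
          · have : g ∈ Subgroup.closure {g | g ∈ (s :: M)} := by
              rw [hMcl]; exact Subgroup.subset_closure hg
            rw [listSet_cons, hsτ] at this
            exact this
        · rw [Subgroup.closure_le]
          intro g hg
          rcases Set.mem_insert_iff.mp hg with rfl | hg
          · exact Subgroup.subset_closure (Set.mem_insert _ _)
          · have : g ∈ Subgroup.closure {g | g ∈ (s :: M)} :=
              Subgroup.subset_closure (by rw [listSet_cons]; exact Set.mem_insert_iff.mpr (Or.inr hg))
            rw [hMcl] at this
            exact Subgroup.closure_mono (Set.subset_insert _ _) this
      have hkey : oc (Subgroup.closure {g | g ∈ M}) ≤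
          oc (Subgroup.closure {g | g ∈ (τ₀ :: L')}) + 1 := by
        rw [hclL, hτ0eq]
        exact oc_le_insert_swap hab
      -- recurse on M
      have hrec : 2 * Fintype.card V ≤ M.length + 2 * oc (Subgroup.closure {g | g ∈ M}) := by
        cases hM : M with
        | nil =>
          -- M empty : 2n ≤ 0 + 2n
          have : ({g | g ∈ ([] : List (Equiv.Perm V))} : Set (Equiv.Perm V)) = ∅ := by
            ext g; simp
          rw [this, Subgroup.closure_empty]
          simp [oc_bot]
        | cons ρ M' =>
          subst hM
          have hρsw : ρ.IsSwap := hMsw ρ (List.mem_cons_self)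
          obtain ⟨u, v, huv, hρeq⟩ := hρsw
          have hρu : ρ u ≠ u := by
            rw [hρeq, Equiv.swap_apply_left]; exact fun h => huv h.symm
          apply IH (ρ :: M') u hMsw hMprod
          · intro τ hτ
            simp only [List.take, List.mem_singleton] at hτ
            rw [show τ = ρ from by simpa using hτ]
            exact hρu
          · -- measure
            have hlen : (ρ :: M').length + 2 ≤ (τ₀ :: L').length := by
              simp only [List.length_cons] at hMlen ⊢
              omega
            have hcnt : cnt u (ρ :: M') ≤ (ρ :: M').length := by
              clear hlen
              induction (ρ :: M') with
              | nil => simp [cnt]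
              | cons x xs ihx =>
                simp only [cnt, List.length_cons]
                split <;> omega
            have h1 : (ρ :: M').length ^ 2 + cnt u (ρ :: M') ≤
                (ρ :: M').length ^ 2 + (ρ :: M').length := by omega
            have h2 : (ρ :: M').length ^ 2 + (ρ :: M').length < (τ₀ :: L').length ^ 2 := by
              set k := (τ₀ :: L').length with hk
              set m := (ρ :: M').length with hmm
              have hm2 : m + 2 ≤ k := hlen
              nlinarith
            have h3 : (τ₀ :: L').length ^ 2 ≤ N + 1 := le_trans (Nat.le_add_right _ _) hm
            omega
      calc 2 * Fintype.card V ≤ M.length + 2 * oc (Subgroup.closure {g | g ∈ M}) := hrec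
        _ ≤ M.length + 2 * (oc (Subgroup.closure {g | g ∈ (τ₀ :: L')}) + 1) := by omega
        _ ≤ (τ₀ :: L').length + 2 * oc (Subgroup.closure {g | g ∈ (τ₀ :: L')}) := by
            simp only [List.length_cons] at hMlen ⊢
            omega
    · -- Hurwitz move: τ₀ * s = s * (s * τ₀ * s), new list s :: (s*τ₀*s) :: M
      have hsi : s * s = 1 := Equiv.swap_mul_self _ _
      set ρ := s * τ₀ * s with hρ
      have hρeq : ρ = Equiv.swap b c := by
        have h := (Equiv.swap_apply_apply s a b).symm
        have hsinv : s⁻¹ = s := Equiv.swap_inv a c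
        rw [hsinv] at h
        have hsa : s a = c := Equiv.swap_apply_left a c
        have hsb : s b = b := by
          apply Equiv.swap_apply_of_ne_of_ne
          · exact fun h' => hab h'.symm
          · exact fun h' => hcb (h'.symm)
        rw [hsa, hsb] at h
        rw [hρ, hτ0eq]
        exact h.trans (Equiv.swap_comm c b)
      set L₂ := s :: ρ :: M with hL₂
      have hL₂p : L₂.prod = 1 := by
        rw [hL₂, List.prod_cons, List.prod_cons]
        have : s * (ρ * M.prod) = τ₀ * (s * M.prod) := by
          rw [hρ]
          have : s * (s * τ₀ * s * M.prod) = (s * s) * τ₀ * s * M.prod := by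
            simp [mul_assoc]
          rw [this, hsi, one_mul, mul_assoc]
        rw [this]
        have h2 : s * M.prod = L'.prod := by rw [← List.prod_cons, hMp]
        rw [h2, hL'p, hτ0i]
      have hL₂sw : ∀ τ ∈ L₂, τ.IsSwap := by
        intro τ hτ
        rw [hL₂] at hτ
        rcases List.mem_cons.mp hτ with rfl | hτ
        · exact ⟨a, c, fun h => hca h.symm, rfl⟩
        · rcases List.mem_cons.mp hτ with rfl | hτ
          · rw [hρeq]
            exact ⟨b, c, fun h => hcb h.symm, rfl⟩
          · exact hMsw τ hτ
      have hL₂cl : Subgroup.closure {g | g ∈ L₂} = Subgroup.closure {g | g ∈ (τ₀ :: L')} := by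
        rw [hL₂, listSet_cons, listSet_cons, listSet_cons]
        have hins : Subgroup.closure (insert s {g | g ∈ M}) = Subgroup.closure {g | g ∈ L'} := by
          rw [← listSet_cons]; exact hMcl
        apply le_antisymm
        · rw [Subgroup.closure_le]
          intro g hg
          have hsmem : s ∈ Subgroup.closure (insert τ₀ {g | g ∈ L'}) := by
            apply Subgroup.closure_mono (Set.subset_insert _ _)
            rw [← hins]
            exact Subgroup.subset_closure (Set.mem_insert _ _)
          have hτmem : τ₀ ∈ Subgroup.closure (insert τ₀ {g | g ∈ L'}) :=
            Subgroup.subset_closure (Set.mem_insert _ _)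
          rcases Set.mem_insert_iff.mp hg with rfl | hg
          · exact hsmem
          · rcases Set.mem_insert_iff.mp hg with rfl | hg
            · rw [hρ]
              exact Subgroup.mul_mem _ (Subgroup.mul_mem _ hsmem hτmem) hsmem
            · apply Subgroup.closure_mono (Set.subset_insert _ _)
              rw [← hins]
              exact Subgroup.subset_closure (Set.mem_insert_iff.mpr (Or.inr hg))
        · rw [Subgroup.closure_le]
          intro g hg
          have hsmem : s ∈ Subgroup.closure (insert s (insert ρ {g | g ∈ M})) :=
            Subgroup.subset_closure (Set.mem_insert _ _)
          have hρmem : ρ ∈ Subgroup.closure (insert s (insert ρ {g | g ∈ M})) :=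
            Subgroup.subset_closure (Set.mem_insert_iff.mpr (Or.inr (Set.mem_insert _ _)))
          have hτmem : τ₀ ∈ Subgroup.closure (insert s (insert ρ {g | g ∈ M})) := by
            have : τ₀ = s * ρ * s := by
              rw [hρ, ← mul_assoc, ← mul_assoc, hsi, one_mul, mul_assoc, hsi, mul_one]
            rw [this]
            exact Subgroup.mul_mem _ (Subgroup.mul_mem _ hsmem hρmem) hsmem
          rcases Set.mem_insert_iff.mp hg with rfl | hg
          · exact hτmem
          · -- g ∈ L' ⊆ closure (insert s Mset)
            have : g ∈ Subgroup.closure (insert s {g | g ∈ M}) := by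
              rw [hins]; exact Subgroup.subset_closure hg
            have hsub : insert s {g | g ∈ M} ⊆
                ↑(Subgroup.closure (insert s (insert ρ {g | g ∈ M}))) := by
              intro x hx
              rcases Set.mem_insert_iff.mp hx with rfl | hx
              · exact hsmem
              · exact Subgroup.subset_closure
                  (Set.mem_insert_iff.mpr (Or.inr (Set.mem_insert_iff.mpr (Or.inr hx))))
            exact (Subgroup.closure_le _).mpr hsub this
      -- measure decreases
      have hcntL₂ : cnt a L₂ + 1 = cnt a (τ₀ :: L') := by
        have e1 : cnt a L₂ = cnt a M + (if ρ a = a then 0 else 1) + (if s a = a then 0 else 1) := rfl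
        have e2 : cnt a (τ₀ :: L') = cnt a L' + (if τ₀ a = a then 0 else 1) := rfl
        have e3 : cnt a (s :: M) = cnt a M + (if s a = a then 0 else 1) := rfl
        have hsa : s a ≠ a := by
          rw [hs, Equiv.swap_apply_left]
          exact hca
        have hρa : ρ a = a := by
          rw [hρeq]
          apply Equiv.swap_apply_of_ne_of_ne
          · exact hab
          · exact fun h => hca h.symm
        rw [e1, e2, ← hMcnt, e3, if_pos hρa, if_neg hsa, if_neg hτ0]
      have hlenL₂ : L₂.length = (τ₀ :: L').length := by
        rw [hL₂]
        simp only [List.length_cons] at hMlen ⊢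
        omega
      have hres := IH L₂ a hL₂sw hL₂p
        (by
          intro τ hτ
          rw [hL₂] at hτ
          simp only [List.take, List.mem_singleton] at hτ
          rw [show τ = s from by simpa using hτ, hs, Equiv.swap_apply_left]
          exact hca)
        (by rw [hlenL₂]; omega)
      rw [hlenL₂, hL₂cl] at hres
      exact hres

lemma lemmaC (L : List (Equiv.Perm V)) (hsw : ∀ τ ∈ L, τ.IsSwap) (hp : L.prod = 1) :
    2 * Fintype.card V ≤ L.length + 2 * oc (Subgroup.closure {g | g ∈ L}) := by
  cases hL : L with
  | nil =>
    have : ({g | g ∈ ([] : List (Equiv.Perm V))} : Set (Equiv.Perm V)) = ∅ := by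
      ext g; simp
    rw [this, Subgroup.closure_empty]
    simp [oc_bot]
  | cons τ₀ L' =>
    subst hL
    have hτ0sw := hsw τ₀ (List.mem_cons_self)
    obtain ⟨u, v, huv, hueq⟩ := hτ0sw
    have hτu : τ₀ u ≠ u := by
      rw [hueq, Equiv.swap_apply_left]; exact fun h => huv h.symm
    exact Caux ((τ₀ :: L').length ^ 2 + cnt u (τ₀ :: L')) (τ₀ :: L') u hsw hp
      (by
        intro τ hτ
        simp only [List.take, List.mem_singleton] at hτ
        rw [show τ = τ₀ from by simpa using hτ]
        exact hτu)
      le_rfl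

/-- L8: the genus bound. -/
lemma genus_bound (x y z : Equiv.Perm V) (hxyz : x * y * z = 1) :
    oc (Subgroup.closure {x}) + oc (Subgroup.closure {y}) + oc (Subgroup.closure {z})
      ≤ Fintype.card V + 2 * oc (Subgroup.closure {x, y, z}) := by
  obtain ⟨Lx, hLxsw, hLxp, hLxlen⟩ := exists_swap_factorisation x
  obtain ⟨Ly, hLysw, hLyp, hLylen⟩ := exists_swap_factorisation y
  obtain ⟨Lz, hLzsw, hLzp, hLzlen⟩ := exists_swap_factorisation z
  set L := Lx ++ Ly ++ Lz with hLdef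
  have hsw : ∀ τ ∈ L, τ.IsSwap := by
    intro τ hτ
    rw [hLdef] at hτ
    rcases List.mem_append.mp hτ with hτ | hτ
    · rcases List.mem_append.mp hτ with hτ | hτ
      · exact hLxsw τ hτ
      · exact hLysw τ hτ
    · exact hLzsw τ hτ
  have hp : L.prod = 1 := by
    rw [hLdef, List.prod_append, List.prod_append, hLxp, hLyp, hLzp, hxyz]
  have hC := lemmaC L hsw hp
  have hle : Subgroup.closure ({x, y, z} : Set (Equiv.Perm V)) ≤
      Subgroup.closure {g | g ∈ L} := by
    rw [Subgroup.closure_le]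
    intro g hg
    have hmem : ∀ (L₀ : List (Equiv.Perm V)), (∀ τ ∈ L₀, τ ∈ ({g | g ∈ L} : Set (Equiv.Perm V))) →
        L₀.prod ∈ Subgroup.closure {g | g ∈ L} := by
      intro L₀ h
      apply Subgroup.list_prod_mem
      intro τ hτ
      exact Subgroup.subset_closure (h τ hτ)
    rcases hg with rfl | hg
    · have : g = Lx.prod := hLxp.symm
      rw [SetLike.mem_coe, this]
      exact hmem Lx (fun τ hτ => by rw [hLdef]; simp [hτ])
    · rcases hg with rfl | hg
      · rw [SetLike.mem_coe, ← hLyp]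
        exact hmem Ly (fun τ hτ => by rw [hLdef]; simp [hτ])
      · rw [Set.mem_singleton_iff] at hg
        subst hg
        rw [SetLike.mem_coe, ← hLzp]
        exact hmem Lz (fun τ hτ => by rw [hLdef]; simp [hτ])
  have hocle : oc (Subgroup.closure {g | g ∈ L}) ≤ oc (Subgroup.closure {x, y, z}) :=
    oc_le_oc hle
  have hlen : L.length = Lx.length + Ly.length + Lz.length := by
    rw [hLdef]; simp [List.length_append]; omega
  omega

end Crys4

namespace Crys5
open Equiv Subgroup Crys Crys2 Crys3 Crys4

variable {V : Type*} [Finite V] [DecidableEq V]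

lemma inv_self {α : Equiv.Perm V} (h : α * α = 1) : α⁻¹ = α := by
  rw [← mul_one α⁻¹, ← h, ← mul_assoc, inv_mul_cancel, one_mul]

lemma sq_one_of_invol {α : Equiv.Perm V} (h : ∀ v, α (α v) = v) : α * α = 1 :=
  Equiv.ext fun v => h v

/-- key conjugation: α x^k α = x^(-k) for x = α β. -/
lemma conj_zpow_pair {α β : Equiv.Perm V} (hα : α * α = 1) (hβ : β * β = 1) (k : ℤ) :
    α * (α * β) ^ k = (α * β) ^ (-k) * α := by
  set x := α * β with hx
  have h1 : α * x * α⁻¹ = x⁻¹ := by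
    rw [inv_self hα]
    have h2 : α * x * α = β * α := by
      have h2a : α * x * α = (α * α) * (β * α) := by rw [hx]; group
      rw [h2a, hα, one_mul]
    rw [h2, hx, mul_inv_rev, inv_self hα, inv_self hβ]
  have h3 : α * x ^ k * α⁻¹ = (x ^ k)⁻¹ := by
    have := map_zpow (MulAut.conj α) x k
    simp only [MulAut.conj_apply] at this
    rw [this, h1, inv_zpow]
  rw [inv_self hα] at h3
  have h5 : α * x ^ k * α * α = α * x ^ k := by
    rw [mul_assoc (α * x ^ k) α α, hα, mul_one]
  have h4 : α * x ^ k = (x ^ k)⁻¹ * α := by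
    rw [← h5, h3]
  rw [h4, zpow_neg]

lemma conj_zpow_pair_apply {α β : Equiv.Perm V} (hα : α * α = 1) (hβ : β * β = 1) (k : ℤ)
    (u : V) : α (((α * β) ^ k) u) = ((α * β) ^ (-k)) (α u) := by
  have := congrArg (fun g : Equiv.Perm V => g u) (conj_zpow_pair hα hβ k)
  simpa using this

/-- distinctness : z and α z are in different ⟨αβ⟩-orbits. -/
lemma no_meet {α β : Equiv.Perm V} (hα₁ : ∀ v, α v ≠ v) (hα₂ : ∀ v, α (α v) = v)
    (hβ₁ : ∀ v, β v ≠ v) (hβ₂ : ∀ v, β (β v) = v) (z : V) :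
    ¬ orel (Subgroup.closure {α * β}) z (α z) := by
  set x := α * β with hx
  have hα : α * α = 1 := sq_one_of_invol hα₂
  have hβ : β * β = 1 := sq_one_of_invol hβ₂
  rintro ⟨g, hg, he⟩
  obtain ⟨k, rfl⟩ := Subgroup.mem_closure_singleton.mp hg
  -- he : (x ^ k) z = α z
  have hβeq : β = α * x := by rw [hx, ← mul_assoc, hα, one_mul]
  have hA : ∀ m : ℤ, (x ^ (k - m)) z ≠ (x ^ m) z := by
    intro m h
    apply hα₁ ((x ^ m) z)
    have h1 : α ((x ^ m) z) = (x ^ (-m)) (α z) := conj_zpow_pair_apply hα hβ m z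
    rw [← he] at h1
    have h2 : (x ^ (-m)) ((x ^ k) z) = (x ^ (k - m)) z := by
      have : x ^ (-m) * x ^ k = x ^ (k - m) := by
        rw [← zpow_add]; ring_nf
      rw [← this]; rfl
    rw [h2] at h1
    rw [h1, h]
  have hB : ∀ m : ℤ, (x ^ (k - m - 1)) z ≠ (x ^ m) z := by
    intro m h
    apply hβ₁ ((x ^ m) z)
    have h0 : β ((x ^ m) z) = α ((x ^ (m + 1)) z) := by
      rw [hβeq]
      have : (α * x) ((x ^ m) z) = α (x ((x ^ m) z)) := rfl
      rw [this]
      congr 1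
      have : x * x ^ m = x ^ (m + 1) := by
        rw [← zpow_one_add]; ring_nf
      rw [← this]; rfl
    have h1 : α ((x ^ (m + 1)) z) = (x ^ (-(m+1))) (α z) := conj_zpow_pair_apply hα hβ (m+1) z
    rw [← he] at h1
    have h2 : (x ^ (-(m+1))) ((x ^ k) z) = (x ^ (k - m - 1)) z := by
      have : x ^ (-(m+1)) * x ^ k = x ^ (k - m - 1) := by
        rw [← zpow_add]; ring_nf
      rw [← this]; rfl
    rw [h2] at h1
    rw [h0, h1, h]
  rcases Int.even_or_odd k with ⟨m, hme⟩ | ⟨m, hme⟩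
  · exact hA m (by rw [show k - m = m by omega])
  · exact hB m (by rw [show k - m - 1 = m by omega])

/-- structure of ⟨α,β⟩ orbits. -/
lemma pair_orbit_eq {α β : Equiv.Perm V} (hα₂ : ∀ v, α (α v) = v) (hβ₂ : ∀ v, β (β v) = v)
    (z w : V) :
    orel (Subgroup.closure {α, β}) z w ↔
      (orel (Subgroup.closure {α * β}) z w ∨ orel (Subgroup.closure {α * β}) (α z) w) := by
  set x := α * β with hx
  have hα : α * α = 1 := sq_one_of_invol hα₂
  have hβ : β * β = 1 := sq_one_of_invol hβ₂
  set X := Subgroup.closure ({x} : Set (Equiv.Perm V)) with hX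
  set H := Subgroup.closure ({α, β} : Set (Equiv.Perm V)) with hH
  have hβeq : β = α * x := by rw [hx, ← mul_assoc, hα, one_mul]
  have hαH : α ∈ H := Subgroup.subset_closure (Set.mem_insert _ _)
  have hXH : X ≤ H := by
    rw [hX, Subgroup.closure_le]
    intro g hg
    rw [Set.mem_singleton_iff] at hg
    subst hg
    exact Subgroup.mul_mem _ hαH
      (Subgroup.subset_closure (Set.mem_insert_iff.mpr (Or.inr rfl)))
  constructor
  · rintro ⟨g, hg, rfl⟩
    have hT : ∀ g ∈ H, ∀ t ∈ {t | orel X z t ∨ orel X (α z) t},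
        g t ∈ {t | orel X z t ∨ orel X (α z) t} := by
      apply closure_mapsTo
      rintro s hs t ht
      have hαcase : ∀ t ∈ {t | orel X z t ∨ orel X (α z) t},
          α t ∈ {t | orel X z t ∨ orel X (α z) t} := by
        rintro t (⟨g', hg', rfl⟩ | ⟨g', hg', rfl⟩)
        · obtain ⟨k, rfl⟩ := Subgroup.mem_closure_singleton.mp hg'
          right
          exact ⟨x ^ (-k), Subgroup.mem_closure_singleton.mpr ⟨-k, rfl⟩,
            (conj_zpow_pair_apply hα hβ k z).symm⟩
        · obtain ⟨k, rfl⟩ := Subgroup.mem_closure_singleton.mp hg'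
          left
          refine ⟨x ^ (-k), Subgroup.mem_closure_singleton.mpr ⟨-k, rfl⟩, ?_⟩
          have hcc := conj_zpow_pair_apply hα hβ k (α z)
          rw [hα₂] at hcc
          exact hcc.symm
        -- done
      have hxcase : ∀ t ∈ {t | orel X z t ∨ orel X (α z) t},
          x t ∈ {t | orel X z t ∨ orel X (α z) t} := by
        rintro t (ht | ht)
        · exact Or.inl (orel_trans ht ⟨x, Subgroup.subset_closure rfl, rfl⟩)
        · exact Or.inr (orel_trans ht ⟨x, Subgroup.subset_closure rfl, rfl⟩)
      rcases Set.mem_insert_iff.mp hs with rfl | hs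
      · exact hαcase t ht
      · rw [Set.mem_singleton_iff] at hs
        subst hs
        have : s t = α (x t) := by rw [hβeq]; rfl
        rw [this]
        exact hαcase _ (hxcase t ht)
    exact hT g hg z (Or.inl (orel_refl X z))
  · rintro (h | h)
    · exact orel_mono hXH h
    · exact orel_trans ⟨α, hαH, rfl⟩ (orel_mono hXH h)

/-- L4 : doubling. -/
lemma oc_pair_double {α β : Equiv.Perm V} (hα₁ : ∀ v, α v ≠ v) (hα₂ : ∀ v, α (α v) = v)
    (hβ₁ : ∀ v, β v ≠ v) (hβ₂ : ∀ v, β (β v) = v) :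
    oc (Subgroup.closure {α * β}) = 2 * oc (Subgroup.closure {α, β}) := by
  set x := α * β with hx
  set X := Subgroup.closure ({x} : Set (Equiv.Perm V)) with hX
  set H := Subgroup.closure ({α, β} : Set (Equiv.Perm V)) with hH
  have hαH : α ∈ H := Subgroup.subset_closure (Set.mem_insert _ _)
  have hXH : X ≤ H := by
    rw [hX, Subgroup.closure_le]
    intro g hg
    rw [Set.mem_singleton_iff] at hg
    subst hg
    exact Subgroup.mul_mem _ hαH
      (Subgroup.subset_closure (Set.mem_insert_iff.mpr (Or.inr rfl)))
  set F : Quotient (oSetoid H) × Bool → Quotient (oSetoid X) := fun p =>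
    if p.2 then Quotient.mk (oSetoid X) p.1.out else Quotient.mk (oSetoid X) (α p.1.out)
    with hF
  have hQeq : ∀ q q' : Quotient (oSetoid H), orel H q.out q'.out → q = q' := by
    intro q q' h
    rw [← Quotient.out_eq q, ← Quotient.out_eq q']
    exact Quotient.sound h
  have hinj : Function.Injective F := by
    rintro ⟨q, b⟩ ⟨q', b'⟩ h
    rw [hF] at h
    cases b <;> cases b' <;> simp only [if_true, if_false, Bool.false_eq_true] at h ⊢
    · -- both false
      have h1 : orel X (α q.out) (α q'.out) := Quotient.exact h
      have h2 : orel H q.out q'.out := by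
        have ha : orel H q.out (α q.out) := ⟨α, hαH, rfl⟩
        have hb : orel H q'.out (α q'.out) := ⟨α, hαH, rfl⟩
        exact orel_trans (orel_trans ha (orel_mono hXH h1)) (orel_symm hb)
      rw [hQeq q q' h2]
    · -- false true : α q.out ~X q'.out
      exfalso
      have h1 : orel X (α q.out) q'.out := Quotient.exact h
      have h2 : orel H q.out q'.out :=
        orel_trans ⟨α, hαH, rfl⟩ (orel_mono hXH h1)
      have h3 : q = q' := hQeq q q' h2
      subst h3
      exact no_meet hα₁ hα₂ hβ₁ hβ₂ q.out (orel_symm h1)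
    · -- true false
      exfalso
      have h1 : orel X q.out (α q'.out) := Quotient.exact h
      have h2 : orel H q.out q'.out :=
        orel_trans (orel_mono hXH h1) (orel_symm ⟨α, hαH, rfl⟩)
      have h3 : q = q' := hQeq q q' h2
      subst h3
      exact no_meet hα₁ hα₂ hβ₁ hβ₂ q.out h1
    · -- both true
      have h1 : orel X q.out q'.out := Quotient.exact h
      rw [hQeq q q' (orel_mono hXH h1)]
  have hsurj : Function.Surjective F := by
    intro c
    induction c using Quotient.ind with
    | _ w =>
      set q : Quotient (oSetoid H) := Quotient.mk (oSetoid H) w with hq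
      have h1 : orel H q.out w := Quotient.exact (q.out_eq.trans hq)
      rcases (pair_orbit_eq hα₂ hβ₂ q.out w).mp h1 with h | h
      · exact ⟨⟨q, true⟩, by rw [hF]; simpa using Quotient.sound h⟩
      · exact ⟨⟨q, false⟩, by rw [hF]; simpa using Quotient.sound h⟩
  have hcard := Nat.card_eq_of_bijective F ⟨hinj, hsurj⟩
  rw [Nat.card_prod] at hcard
  simp only [Nat.card_eq_fintype_card, Fintype.card_bool] at hcard
  rw [oc, oc, ← hcard, mul_comm]

/-- conjugation stability helper. -/
lemma conj_mem_closure {δ : Equiv.Perm V} (hδ : δ * δ = 1) {S : Set (Equiv.Perm V)}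
    (h : ∀ s ∈ S, δ * s * δ ∈ Subgroup.closure S) :
    ∀ e ∈ Subgroup.closure S, δ * e * δ ∈ Subgroup.closure S := by
  intro e he
  induction he using Subgroup.closure_induction with
  | mem s hs => exact h s hs
  | one =>
    have : δ * 1 * δ = 1 := by rw [mul_one, hδ]
    rw [this]; exact Subgroup.one_mem _
  | mul g g' _ _ ihg ihg' =>
    have : δ * (g * g') * δ = (δ * g * δ) * (δ * g' * δ) := by
      have h2 : (δ * g * δ) * (δ * g' * δ) = δ * g * (δ * δ) * g' * δ := by group
      rw [h2, hδ]; group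
    rw [this]; exact Subgroup.mul_mem _ ihg ihg'
  | inv g _ ihg =>
    have : δ * g⁻¹ * δ = (δ * g * δ)⁻¹ := by
      rw [mul_inv_rev, mul_inv_rev, inv_self hδ]; group
    rw [this]; exact Subgroup.inv_mem _ ihg

/-- L5 : even subgroup has at most 2 orbits. -/
lemma even_orbits_le_two [Nonempty V] {α β γ : Equiv.Perm V}
    (hα : α * α = 1) (hβ : β * β = 1) (hγ : γ * γ = 1)
    (htr : ∀ z w : V, orel (Subgroup.closure {α, β, γ}) z w) :
    oc (Subgroup.closure {α * β, β * γ, γ * α}) ≤ 2 := by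
  set E := Subgroup.closure ({α * β, β * γ, γ * α} : Set (Equiv.Perm V)) with hE
  have hab : α * β ∈ E := Subgroup.subset_closure (by left; rfl)
  have hbc : β * γ ∈ E := Subgroup.subset_closure (by right; left; rfl)
  have hca : γ * α ∈ E := Subgroup.subset_closure (by right; right; rfl)
  have hba : β * α ∈ E := by
    have : β * α = (α * β)⁻¹ := by rw [mul_inv_rev, inv_self hα, inv_self hβ]
    rw [this]; exact Subgroup.inv_mem _ hab
  have hcb : γ * β ∈ E := by
    have : γ * β = (β * γ)⁻¹ := by rw [mul_inv_rev, inv_self hβ, inv_self hγ]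
    rw [this]; exact Subgroup.inv_mem _ hbc
  have hac : α * γ ∈ E := by
    have : α * γ = (γ * α)⁻¹ := by rw [mul_inv_rev, inv_self hγ, inv_self hα]
    rw [this]; exact Subgroup.inv_mem _ hca
  have hconjα : ∀ e ∈ E, α * e * α ∈ E := by
    apply conj_mem_closure hα
    rintro s (rfl | rfl | rfl)
    · have : α * (α * β) * α = β * α := by
        have h2 : α * (α * β) * α = (α * α) * (β * α) := by group
        rw [h2, hα, one_mul]
      rw [this]; exact hba
    · have : α * (β * γ) * α = (α * β) * (γ * α) := by group
      rw [this]; exact Subgroup.mul_mem _ hab hca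
    · have : α * (γ * α) * α = α * γ := by
        have h2 : α * (γ * α) * α = (α * γ) * (α * α) := by group
        rw [h2, hα, mul_one]
      rw [this]; exact hac
  have hconjβ : ∀ e ∈ E, β * e * β ∈ E := by
    apply conj_mem_closure hβ
    rintro s (rfl | rfl | rfl)
    · have : β * (α * β) * β = β * α := by
        have h2 : β * (α * β) * β = (β * α) * (β * β) := by group
        rw [h2, hβ, mul_one]
      rw [this]; exact hba
    · have : β * (β * γ) * β = γ * β := by
        have h2 : β * (β * γ) * β = (β * β) * (γ * β) := by group
        rw [h2, hβ, one_mul]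
      rw [this]; exact hcb
    · have : β * (γ * α) * β = (β * γ) * (α * β) := by group
      rw [this]; exact Subgroup.mul_mem _ hbc hab
  have hconjγ : ∀ e ∈ E, γ * e * γ ∈ E := by
    apply conj_mem_closure hγ
    rintro s (rfl | rfl | rfl)
    · have : γ * (α * β) * γ = (γ * α) * (β * γ) := by group
      rw [this]; exact Subgroup.mul_mem _ hca hbc
    · have : γ * (β * γ) * γ = γ * β := by
        have h2 : γ * (β * γ) * γ = (γ * β) * (γ * γ) := by group
        rw [h2, hγ, mul_one]
      rw [this]; exact hcb
    · have : γ * (γ * α) * γ = α * γ := by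
        have h2 : γ * (γ * α) * γ = (γ * γ) * (α * γ) := by group
        rw [h2, hγ, one_mul]
      rw [this]; exact hac
  obtain ⟨v⟩ := ‹Nonempty V›
  have hα2 : ∀ u, α (α u) = u := fun u => by
    have := congrArg (fun g : Equiv.Perm V => g u) hα
    simpa using this
  have hβ2 : ∀ u, β (β u) = u := fun u => by
    have := congrArg (fun g : Equiv.Perm V => g u) hβ
    simpa using this
  have hγ2 : ∀ u, γ (γ u) = u := fun u => by
    have := congrArg (fun g : Equiv.Perm V => g u) hγ
    simpa using this
  have hT : ∀ w : V, orel E v w ∨ orel E (α v) w := by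
    intro w
    obtain ⟨g, hg, rfl⟩ := htr v w
    have hinv : ∀ s ∈ ({α, β, γ} : Set (Equiv.Perm V)),
        ∀ t ∈ {t | orel E v t ∨ orel E (α v) t}, s t ∈ {t | orel E v t ∨ orel E (α v) t} := by
      rintro s hs t ht
      rcases Set.mem_insert_iff.mp hs with rfl | hs
      · rcases ht with ⟨e, he, rfl⟩ | ⟨e, he, rfl⟩
        · right
          refine ⟨s * e * s, hconjα e he, ?_⟩
          simp [Equiv.Perm.mul_apply, hα2]
        · left
          refine ⟨s * e * s, hconjα e he, ?_⟩
          simp [Equiv.Perm.mul_apply, hα2]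
      · rcases Set.mem_insert_iff.mp hs with rfl | hs
        · rcases ht with ⟨e, he, rfl⟩ | ⟨e, he, rfl⟩
          · right
            refine ⟨(s * e * s) * (s * α), Subgroup.mul_mem _ (hconjβ e he) hba, ?_⟩
            simp [Equiv.Perm.mul_apply, hβ2, hα2]
          · left
            refine ⟨(s * e * s) * (s * α), Subgroup.mul_mem _ (hconjβ e he) hba, ?_⟩
            simp [Equiv.Perm.mul_apply, hβ2, hα2]
        · rw [Set.mem_singleton_iff] at hs
          subst hs
          rcases ht with ⟨e, he, rfl⟩ | ⟨e, he, rfl⟩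
          · right
            refine ⟨(s * e * s) * (s * α), Subgroup.mul_mem _ (hconjγ e he) hca, ?_⟩
            simp [Equiv.Perm.mul_apply, hγ2, hα2]
          · left
            refine ⟨(s * e * s) * (s * α), Subgroup.mul_mem _ (hconjγ e he) hca, ?_⟩
            simp [Equiv.Perm.mul_apply, hγ2, hα2]
    exact closure_mapsTo hinv g hg v (Or.inl (orel_refl E v))
  have hsurj : Function.Surjective (fun b : Bool =>
      if b then Quotient.mk (oSetoid E) v else Quotient.mk (oSetoid E) (α v)) := by
    intro c
    induction c using Quotient.ind with
    | _ w =>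
      rcases hT w with h | h
      · exact ⟨true, by simpa using Quotient.sound h⟩
      · exact ⟨false, by simpa using Quotient.sound h⟩
  have := Nat.card_le_card_of_surjective _ hsurj
  simpa [oc] using this

end Crys5

namespace Crys6
open Equiv Subgroup Crys Crys2 Crys3 Crys4 Crys5

variable {V : Type*} [Fintype V] [DecidableEq V]

lemma compl_transitive (σ : Fin 4 → Equiv.Perm V) (hgr : IsGraph31 σ)
    (hcr : ∀ (c : Fin 4) (x : V), SameResidue σ (({c}ᶜ : Set (Fin 4))) x (σ c x))
    (c : Fin 4) : ∀ z w : V, orel (Subgroup.closure (σ '' ({c}ᶜ : Set (Fin 4)))) z w := by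
  intro z w
  set Ec := Subgroup.closure (σ '' ({c}ᶜ : Set (Fin 4))) with hEc
  obtain ⟨g, hg, rfl⟩ := hgr.2 z w
  have hinv : ∀ s ∈ σ '' (Set.univ : Set (Fin 4)), ∀ t ∈ {t | orel Ec z t},
      s t ∈ {t | orel Ec z t} := by
    rintro s ⟨d, -, rfl⟩ t ht
    by_cases hd : d = c
    · subst hd
      exact orel_trans ht (hcr d t)
    · refine orel_trans ht ⟨σ d, Subgroup.subset_closure ⟨d, hd, rfl⟩, rfl⟩
  exact closure_mapsTo hinv g hg z (orel_refl Ec z)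

lemma numResidues_compl_eq_one [Nonempty V] (σ : Fin 4 → Equiv.Perm V) (hgr : IsGraph31 σ)
    (hcr : ∀ (c : Fin 4) (x : V), SameResidue σ (({c}ᶜ : Set (Fin 4))) x (σ c x))
    (c : Fin 4) : numResidues σ (({c}ᶜ : Set (Fin 4))) = 1 := by
  rw [numResidues_eq_oc]
  exact oc_eq_one (compl_transitive σ hgr hcr c)

lemma tCount_eq_four [Nonempty V] (σ : Fin 4 → Equiv.Perm V) (hgr : IsGraph31 σ)
    (hcr : ∀ (c : Fin 4) (x : V), SameResidue σ (({c}ᶜ : Set (Fin 4))) x (σ c x)) :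
    tCount σ = 4 := by
  rw [tCount, Fin.sum_univ_four, numResidues_compl_eq_one σ hgr hcr,
    numResidues_compl_eq_one σ hgr hcr, numResidues_compl_eq_one σ hgr hcr,
    numResidues_compl_eq_one σ hgr hcr]

lemma triple_bound [Nonempty V] (σ : Fin 4 → Equiv.Perm V) (hgr : IsGraph31 σ)
    (hcr : ∀ (c : Fin 4) (x : V), SameResidue σ (({c}ᶜ : Set (Fin 4))) x (σ c x))
    (c i j k : Fin 4) (hcs : ({c}ᶜ : Set (Fin 4)) = {i, j, k}) :
    2 * (numResidues σ {i, j} + numResidues σ {j, k} + numResidues σ {k, i})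
      ≤ Fintype.card V + 4 := by
  set α := σ i with hαdef
  set β := σ j with hβdef
  set γ := σ k with hγdef
  have hα₁ : ∀ v, α v ≠ v := (hgr.1 i).1
  have hα₂ : ∀ v, α (α v) = v := (hgr.1 i).2
  have hβ₁ : ∀ v, β v ≠ v := (hgr.1 j).1
  have hβ₂ : ∀ v, β (β v) = v := (hgr.1 j).2
  have hγ₁ : ∀ v, γ v ≠ v := (hgr.1 k).1
  have hγ₂ : ∀ v, γ (γ v) = v := (hgr.1 k).2
  have hα : α * α = 1 := sq_one_of_invol hα₂
  have hβ : β * β = 1 := sq_one_of_invol hβ₂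
  have hγ : γ * γ = 1 := sq_one_of_invol hγ₂
  have him : σ '' ({c}ᶜ : Set (Fin 4)) = {α, β, γ} := by
    rw [hcs]
    rw [Set.image_insert_eq, Set.image_pair]
  have htr : ∀ z w : V, orel (Subgroup.closure {α, β, γ}) z w := by
    have := compl_transitive σ hgr hcr c
    rw [him] at this
    exact this
  have hxyz : (α * β) * (β * γ) * (γ * α) = 1 := by
    apply Equiv.ext
    intro v
    simp [Equiv.Perm.mul_apply, hα₂, hβ₂, hγ₂]
  have hgen := genus_bound (α * β) (β * γ) (γ * α) hxyz
  have heven := even_orbits_le_two hα hβ hγ htr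
  have h1 : numResidues σ {i, j} = oc (Subgroup.closure {α, β}) := by
    rw [numResidues_eq_oc, Set.image_pair]
  have h2 : numResidues σ {j, k} = oc (Subgroup.closure {β, γ}) := by
    rw [numResidues_eq_oc, Set.image_pair]
  have h3 : numResidues σ {k, i} = oc (Subgroup.closure {γ, α}) := by
    rw [numResidues_eq_oc, Set.image_pair]
  have hd1 : oc (Subgroup.closure {α * β}) = 2 * oc (Subgroup.closure {α, β}) :=
    oc_pair_double hα₁ hα₂ hβ₁ hβ₂
  have hd2 : oc (Subgroup.closure {β * γ}) = 2 * oc (Subgroup.closure {β, γ}) :=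
    oc_pair_double hβ₁ hβ₂ hγ₁ hγ₂
  have hd3 : oc (Subgroup.closure {γ * α}) = 2 * oc (Subgroup.closure {γ, α}) :=
    oc_pair_double hγ₁ hγ₂ hα₁ hα₂
  rw [h1, h2, h3]
  omega

end Crys6

theorem complementary_bigons' {V : Type*} [Fintype V] [Nonempty V]
    (σ : Fin 4 → Equiv.Perm V) (hC : IsCrystallization σ) :
    numResidues σ ({0, 1} : Set (Fin 4)) = numResidues σ ({2, 3} : Set (Fin 4)) ∧
    numResidues σ ({0, 2} : Set (Fin 4)) = numResidues σ ({1, 3} : Set (Fin 4)) ∧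
    numResidues σ ({0, 3} : Set (Fin 4)) = numResidues σ ({1, 2} : Set (Fin 4)) := by
  classical
  obtain ⟨⟨hgr, hgem⟩, hcr⟩ := hC
  have ht4 := Crys6.tCount_eq_four σ hgr hcr
  -- complements
  have hc0 : ({(0 : Fin 4)}ᶜ : Set (Fin 4)) = {1, 2, 3} := by
    ext x
    simp only [Set.mem_compl_iff, Set.mem_singleton_iff, Set.mem_insert_iff]
    fin_cases x <;> decide
  have hc1 : ({(1 : Fin 4)}ᶜ : Set (Fin 4)) = {0, 2, 3} := by
    ext x
    simp only [Set.mem_compl_iff, Set.mem_singleton_iff, Set.mem_insert_iff]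
    fin_cases x <;> decide
  have hc2 : ({(2 : Fin 4)}ᶜ : Set (Fin 4)) = {0, 1, 3} := by
    ext x
    simp only [Set.mem_compl_iff, Set.mem_singleton_iff, Set.mem_insert_iff]
    fin_cases x <;> decide
  have hc3 : ({(3 : Fin 4)}ᶜ : Set (Fin 4)) = {0, 1, 2} := by
    ext x
    simp only [Set.mem_compl_iff, Set.mem_singleton_iff, Set.mem_insert_iff]
    fin_cases x <;> decide
  have hb3 := Crys6.triple_bound σ hgr hcr 3 0 1 2 hc3
  have hb2 := Crys6.triple_bound σ hgr hcr 2 0 1 3 hc2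
  have hb1 := Crys6.triple_bound σ hgr hcr 1 0 2 3 hc1
  have hb0 := Crys6.triple_bound σ hgr hcr 0 1 2 3 hc0
  -- normalize unordered pairs
  have hp20 : ({2, 0} : Set (Fin 4)) = {0, 2} := Set.pair_comm 2 0
  have hp30 : ({3, 0} : Set (Fin 4)) = {0, 3} := Set.pair_comm 3 0
  have hp31 : ({3, 1} : Set (Fin 4)) = {1, 3} := Set.pair_comm 3 1
  rw [hp20] at hb3
  rw [hp30] at hb2
  rw [hp30] at hb1
  rw [hp31] at hb0
  -- bCount expansion
  have hfil : (Finset.univ.filter fun p : Fin 4 × Fin 4 => p.1 < p.2) =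
      ({((0 : Fin 4), (1 : Fin 4)), (0, 2), (0, 3), (1, 2), (1, 3), (2, 3)} :
        Finset (Fin 4 × Fin 4)) := by decide
  have hbC : bCount σ = numResidues σ {0, 1} + numResidues σ {0, 2} + numResidues σ {0, 3}
      + numResidues σ {1, 2} + numResidues σ {1, 3} + numResidues σ {2, 3} := by
    rw [bCount, hfil]
    rw [Finset.sum_insert (by decide), Finset.sum_insert (by decide),
      Finset.sum_insert (by decide), Finset.sum_insert (by decide),
      Finset.sum_insert (by decide), Finset.sum_singleton]
    ring
  rw [ht4, hbC] at hgem
  refine ⟨?_, ?_, ?_⟩ <;> omega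

/-- In any crystallization `C`, the numbers of bigons in complementary
pairs of colors coincide: `b₀₁(C) = b₂₃(C)`, `b₀₂(C) = b₁₃(C)`, `b₀₃(C) = b₁₂(C)`. -/
theorem complementary_bigons {V : Type*} [Fintype V] [Nonempty V]
    (σ : Fin 4 → Equiv.Perm V) (hC : IsCrystallization σ) :
    numResidues σ ({0, 1} : Set (Fin 4)) = numResidues σ ({2, 3} : Set (Fin 4)) ∧
    numResidues σ ({0, 2} : Set (Fin 4)) = numResidues σ ({1, 3} : Set (Fin 4)) ∧
    numResidues σ ({0, 3} : Set (Fin 4)) = numResidues σ ({1, 2} : Set (Fin 4)) := by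
  exact complementary_bigons' σ hC
end

section
/- Let G be a bipartite 3-gem, let (i,j,k) be a permutation of (1,2,3), and let {u,v} be a j-twistor of G. Then the ji-twisting of G at {u,v} is again a bipartite 3-gem: the new quadruple consists of fixed-point-free involutions whose generated subgroup acts transitively on V, the relation v+t=b still holds for the new graph, and the same parity map exhibits it as bipartite. -/
/-- `{u, v}` is a `t`-twistor of the bipartite gem `σ` (with parity map `ε`), where
`a`, `b` are the other two nonzero colors: `u ≠ v` have equal parity, lie in the same
`{0,t}`-residue and the same `{a,b}`-residue, and in distinct `{0,a}`-, `{t,b}`-,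
`{0,b}`- and `{t,a}`-residues. -/
def IsTwistor {V : Type*} (σ : Fin 4 → Equiv.Perm V) (ε : V → ZMod 2)
    (t a b : Fin 4) (u v : V) : Prop :=
  u ≠ v ∧ ε u = ε v ∧
  SameResidue σ ({0, t} : Set (Fin 4)) u v ∧
  SameResidue σ ({a, b} : Set (Fin 4)) u v ∧
  ¬ SameResidue σ ({0, a} : Set (Fin 4)) u v ∧
  ¬ SameResidue σ ({t, b} : Set (Fin 4)) u v ∧
  ¬ SameResidue σ ({0, b} : Set (Fin 4)) u v ∧
  ¬ SameResidue σ ({t, a} : Set (Fin 4)) u v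

/-- The `ji`-twisting at `{u,v}`: replace `σ i` by `τ ∘ σ i ∘ τ` and `σ j` by
`τ ∘ σ j ∘ τ`, where `τ` is the transposition exchanging `u` and `v`; the other two
permutations are unchanged. -/
def jiTwisting {V : Type*} [DecidableEq V] (σ : Fin 4 → Equiv.Perm V)
    (i j : Fin 4) (u v : V) : Fin 4 → Equiv.Perm V :=
  fun c => if c = i ∨ c = j then Equiv.swap u v * σ c * Equiv.swap u v else σ c

section GemTwist

open Equiv Relation

variable {V : Type*}

/-- One step along a colored edge. -/
def Step (σ : Fin 4 → Equiv.Perm V) (I : Set (Fin 4)) (x y : V) : Prop :=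
  ∃ c ∈ I, σ c x = y

/-- Reachability in the colored graph. -/
def Reach (σ : Fin 4 → Equiv.Perm V) (I : Set (Fin 4)) : V → V → Prop :=
  Relation.ReflTransGen (Step σ I)

variable {σ : Fin 4 → Equiv.Perm V} {I : Set (Fin 4)} {x y z : V}

lemma step_symm (hinv : ∀ c x, σ c (σ c x) = x) (h : Step σ I x y) : Step σ I y x := by
  obtain ⟨c, hc, rfl⟩ := h
  exact ⟨c, hc, hinv c x⟩

lemma reach_symm (hinv : ∀ c x, σ c (σ c x) = x) (h : Reach σ I x y) : Reach σ I y x :=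
  (@Relation.ReflTransGen.stdSymm _ _ ⟨fun _ _ h => step_symm hinv h⟩).symm _ _ h

lemma reach_trans (h : Reach σ I x y) (h' : Reach σ I y z) : Reach σ I x z := h.trans h'

lemma step_reach (h : Step σ I x y) : Reach σ I x y := Relation.ReflTransGen.single h

lemma sameResidue_iff_reach (hinv : ∀ c x, σ c (σ c x) = x) :
    SameResidue σ I x y ↔ Reach σ I x y := by
  constructor
  · rintro ⟨g, hg, rfl⟩
    refine Subgroup.closure_induction (p := fun g _ => ∀ x, Reach σ I x (g x))
      ?_ ?_ ?_ ?_ hg x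
    · rintro g ⟨c, hc, rfl⟩ x
      exact step_reach ⟨c, hc, rfl⟩
    · intro x; exact Relation.ReflTransGen.refl
    · intro g h _ _ hg hh x
      exact (hh x).trans (hg (h x))
    · intro g _ hg x
      have := hg (g⁻¹ x)
      rw [show g (g⁻¹ x) = x from Equiv.apply_symm_apply g x] at this
      exact reach_symm hinv this
  · intro h
    induction h with
    | refl => exact ⟨1, one_mem _, rfl⟩
    | tail _ hstep ih =>
      obtain ⟨g, hg, rfl⟩ := ih
      obtain ⟨c, hc, rfl⟩ := hstep
      exact ⟨σ c * g, mul_mem (Subgroup.subset_closure ⟨c, hc, rfl⟩) hg, rfl⟩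

lemma reach_mono {J : Set (Fin 4)} (hIJ : I ⊆ J) (h : Reach σ I x y) : Reach σ J x y :=
  Relation.ReflTransGen.mono (p := Step σ J) (fun _ _ ⟨c, hc, h⟩ => ⟨c, hIJ hc, h⟩) _ _ h

lemma sameResidue_refl : SameResidue σ I x x := ⟨1, one_mem _, rfl⟩

lemma sameResidue_symm (h : SameResidue σ I x y) : SameResidue σ I y x := by
  obtain ⟨g, hg, rfl⟩ := h
  exact ⟨g⁻¹, inv_mem hg, Equiv.symm_apply_apply g x⟩

lemma sameResidue_trans (h : SameResidue σ I x y) (h' : SameResidue σ I y z) :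
    SameResidue σ I x z := by
  obtain ⟨g, hg, rfl⟩ := h
  obtain ⟨g', hg', rfl⟩ := h'
  exact ⟨g' * g, mul_mem hg' hg, rfl⟩

end GemTwist
section GemTwist2

open Equiv Relation

variable {V : Type*} [DecidableEq V]

lemma zmod2_trans_ne {a b c : ZMod 2} (h : a ≠ b) (h' : b ≠ c) : a = c := by
  revert h h'; revert a b c; decide

/-- Bundle of standing hypotheses. -/
structure Good (σ : Fin 4 → Equiv.Perm V) (ε : V → ZMod 2) : Prop where
  inv : ∀ c x, σ c (σ c x) = x
  bip : ∀ c x, ε (σ c x) ≠ ε x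

namespace Good

variable {σ : Fin 4 → Equiv.Perm V} {ε : V → ZMod 2} {i j c : Fin 4} {u v x y : V}

lemma fpf (h : Good σ ε) (c : Fin 4) (x : V) : σ c x ≠ x :=
  fun he => h.bip c x (by rw [he])

lemma nu (h : Good σ ε) (hε : ε u = ε v) (c : Fin 4) : σ c u ≠ v :=
  fun he => h.bip c u (by rw [he, hε])

lemma nv (h : Good σ ε) (hε : ε u = ε v) (c : Fin 4) : σ c v ≠ u :=
  fun he => h.bip c v (by rw [he, hε])

end Good

lemma eps_swap {ε : V → ZMod 2} {u v : V} (hε : ε u = ε v) (x : V) :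
    ε (Equiv.swap u v x) = ε x := by
  rcases eq_or_ne x u with rfl | hu
  · rw [Equiv.swap_apply_left]; exact hε.symm
  rcases eq_or_ne x v with rfl | hv
  · rw [Equiv.swap_apply_right]; exact hε
  · rw [Equiv.swap_apply_of_ne_of_ne hu hv]

section Twist

variable {σ : Fin 4 → Equiv.Perm V} {ε : V → ZMod 2} {i j : Fin 4} {u v : V}

lemma tw_unswitched {c : Fin 4} (hc : ¬(c = i ∨ c = j)) :
    jiTwisting σ i j u v c = σ c := by simp [jiTwisting, hc]

lemma tw_switched {c : Fin 4} (hc : c = i ∨ c = j) :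
    jiTwisting σ i j u v c = Equiv.swap u v * σ c * Equiv.swap u v := by
  simp [jiTwisting, hc]

lemma tw_rel (c : Fin 4) :
    jiTwisting σ i j u v c = σ c ∨
      jiTwisting σ i j u v c = Equiv.swap u v * σ c * Equiv.swap u v := by
  by_cases hc : c = i ∨ c = j
  · exact Or.inr (tw_switched hc)
  · exact Or.inl (tw_unswitched hc)

variable (h : Good σ ε) (hε : ε u = ε v) (huv : u ≠ v)
include h hε

lemma Good.tw : Good (jiTwisting σ i j u v) ε := by
  constructor
  · intro c x
    rcases tw_rel (σ := σ) (i := i) (j := j) (u := u) (v := v) c with hc | hc <;> rw [hc]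
    · exact h.inv c x
    · simp only [Equiv.Perm.mul_apply, Equiv.swap_apply_self, h.inv]
  · intro c x
    rcases tw_rel (σ := σ) (i := i) (j := j) (u := u) (v := v) c with hc | hc <;> rw [hc]
    · exact h.bip c x
    · simp only [Equiv.Perm.mul_apply, eps_swap hε]
      exact fun he => h.bip c (Equiv.swap u v x) (by rw [he, eps_swap hε])

variable {c : Fin 4} (hc : c = i ∨ c = j)
include hc

lemma tw_u : jiTwisting σ i j u v c u = σ c v := by
  rw [tw_switched hc]
  simp only [Equiv.Perm.mul_apply, Equiv.swap_apply_left]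
  exact Equiv.swap_apply_of_ne_of_ne (h.nv hε c) (h.fpf c v)

lemma tw_v : jiTwisting σ i j u v c v = σ c u := by
  rw [tw_switched hc]
  simp only [Equiv.Perm.mul_apply, Equiv.swap_apply_right]
  exact Equiv.swap_apply_of_ne_of_ne (h.fpf c u) (h.nu hε c)

include huv in
lemma tw_su : jiTwisting σ i j u v c (σ c u) = v := by
  rw [tw_switched hc]
  simp only [Equiv.Perm.mul_apply]
  rw [Equiv.swap_apply_of_ne_of_ne (h.fpf c u) (h.nu hε c), h.inv, Equiv.swap_apply_left]

include huv in
lemma tw_sv : jiTwisting σ i j u v c (σ c v) = u := by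
  rw [tw_switched hc]
  simp only [Equiv.Perm.mul_apply]
  rw [Equiv.swap_apply_of_ne_of_ne (h.nv hε c) (h.fpf c v), h.inv, Equiv.swap_apply_right]

lemma tw_other {x : V} (hxu : x ≠ u) (hxv : x ≠ v) (hx1 : x ≠ σ c u) (hx2 : x ≠ σ c v) :
    jiTwisting σ i j u v c x = σ c x := by
  rw [tw_switched hc]
  simp only [Equiv.Perm.mul_apply]
  rw [Equiv.swap_apply_of_ne_of_ne hxu hxv]
  refine Equiv.swap_apply_of_ne_of_ne (fun he => hx1 ?_) (fun he => hx2 ?_)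
  · rw [← he, h.inv]
  · rw [← he, h.inv]

end Twist

lemma tw_tw {σ : Fin 4 → Equiv.Perm V} {i j : Fin 4} {u v : V} :
    jiTwisting (jiTwisting σ i j u v) i j u v = σ := by
  funext c
  by_cases hc : c = i ∨ c = j
  · simp only [jiTwisting, if_pos hc]
    ext x
    simp [Equiv.Perm.mul_apply, Equiv.swap_apply_self]
  · simp only [jiTwisting, if_neg hc]

end GemTwist2
section GemTwist3
set_option linter.unusedSectionVars false

open Equiv Relation

variable {V : Type*} [DecidableEq V]
variable {σ : Fin 4 → Equiv.Perm V} {ε : V → ZMod 2} {i j : Fin 4} {u v : V}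
variable {I : Set (Fin 4)} {x y : V}

lemma reach_tw_of_reach (h : Good σ ε) (hε : ε u = ε v) (huv : u ≠ v)
    (hR : Reach (jiTwisting σ i j u v) I u v)
    (hxy : Reach σ I x y) : Reach (jiTwisting σ i j u v) I x y := by
  have h' : Good (jiTwisting σ i j u v) ε := h.tw hε
  induction hxy with
  | refl => exact .refl
  | @tail b y hab hstep ih =>
    obtain ⟨c, hcI, rfl⟩ := hstep
    by_cases hc : c = i ∨ c = j
    · rcases eq_or_ne b u with rfl | hbu
      · exact ih.trans (hR.tail ⟨c, hcI, tw_v h hε hc⟩)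
      rcases eq_or_ne b v with rfl | hbv
      · exact ih.trans ((reach_symm h'.inv hR).tail ⟨c, hcI, tw_u h hε hc⟩)
      rcases eq_or_ne b (σ c u) with rfl | hb1
      · rw [h.inv c u]
        exact (ih.tail ⟨c, hcI, tw_su h hε huv hc⟩).trans (reach_symm h'.inv hR)
      rcases eq_or_ne b (σ c v) with rfl | hb2
      · rw [h.inv c v]
        exact (ih.tail ⟨c, hcI, tw_sv h hε huv hc⟩).trans hR
      · exact ih.tail ⟨c, hcI, tw_other h hε hc hbu hbv hb1 hb2⟩
    · exact ih.tail ⟨c, hcI, by rw [tw_unswitched hc]⟩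

lemma reach_cover (h : Good σ ε) (hε : ε u = ε v) (huv : u ≠ v)
    (hxy : Reach (jiTwisting σ i j u v) I x y) :
    Reach σ I x y ∨ (Reach σ I x u ∧ Reach σ I v y) ∨
      (Reach σ I x v ∧ Reach σ I u y) := by
  induction hxy with
  | refl => exact Or.inl .refl
  | @tail b y hab hstep ih =>
    obtain ⟨c, hcI, rfl⟩ := hstep
    by_cases hc : c = i ∨ c = j
    · rcases eq_or_ne b u with rfl | hbu
      · rw [tw_u h hε hc]
        rcases ih with h1 | ⟨h1, h2⟩ | ⟨h1, h2⟩
        · exact Or.inr (Or.inl ⟨h1, step_reach ⟨c, hcI, rfl⟩⟩)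
        · exact Or.inr (Or.inl ⟨h1, step_reach ⟨c, hcI, rfl⟩⟩)
        · exact Or.inl (h1.tail ⟨c, hcI, rfl⟩)
      rcases eq_or_ne b v with rfl | hbv
      · rw [tw_v h hε hc]
        rcases ih with h1 | ⟨h1, h2⟩ | ⟨h1, h2⟩
        · exact Or.inr (Or.inr ⟨h1, step_reach ⟨c, hcI, rfl⟩⟩)
        · exact Or.inl (h1.tail ⟨c, hcI, rfl⟩)
        · exact Or.inl ((h1.trans (reach_symm h.inv h2)).tail ⟨c, hcI, rfl⟩)
      rcases eq_or_ne b (σ c u) with rfl | hb1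
      · rw [tw_su h hε huv hc]
        rcases ih with h1 | ⟨h1, h2⟩ | ⟨h1, h2⟩
        · exact Or.inr (Or.inl ⟨h1.tail ⟨c, hcI, h.inv c u⟩, .refl⟩)
        · exact Or.inr (Or.inl ⟨h1, .refl⟩)
        · exact Or.inl h1
      rcases eq_or_ne b (σ c v) with rfl | hb2
      · rw [tw_sv h hε huv hc]
        rcases ih with h1 | ⟨h1, h2⟩ | ⟨h1, h2⟩
        · exact Or.inr (Or.inr ⟨h1.tail ⟨c, hcI, h.inv c v⟩, .refl⟩)
        · exact Or.inl h1
        · exact Or.inr (Or.inr ⟨h1, .refl⟩)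
      · rw [tw_other h hε hc hbu hbv hb1 hb2]
        rcases ih with h1 | ⟨h1, h2⟩ | ⟨h1, h2⟩
        · exact Or.inl (h1.tail ⟨c, hcI, rfl⟩)
        · exact Or.inr (Or.inl ⟨h1, h2.tail ⟨c, hcI, rfl⟩⟩)
        · exact Or.inr (Or.inr ⟨h1, h2.tail ⟨c, hcI, rfl⟩⟩)
    · rw [tw_unswitched hc]
      rcases ih with h1 | ⟨h1, h2⟩ | ⟨h1, h2⟩
      · exact Or.inl (h1.tail ⟨c, hcI, rfl⟩)
      · exact Or.inr (Or.inl ⟨h1, h2.tail ⟨c, hcI, rfl⟩⟩)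
      · exact Or.inr (Or.inr ⟨h1, h2.tail ⟨c, hcI, rfl⟩⟩)

end GemTwist3
section GemTwist4
set_option linter.unusedSectionVars false

open Equiv Relation Function

variable {V : Type*} [DecidableEq V] [Fintype V]
variable {σ : Fin 4 → Equiv.Perm V} {ε : V → ZMod 2} {i j : Fin 4} {u v : V}
variable {I : Set (Fin 4)} {c d : Fin 4}

lemma perm_iterate_fix (g : Equiv.Perm V) (x : V) :
    (⇑g)^[Function.minimalPeriod ⇑g x] x = x :=
  Function.iterate_minimalPeriod

lemma perm_minimalPeriod_pos (g : Equiv.Perm V) (x : V) :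
    0 < Function.minimalPeriod ⇑g x := by
  have hper : Function.IsPeriodicPt ⇑g (orderOf g) x := by
    show (⇑g)^[orderOf g] x = x
    rw [← Equiv.Perm.coe_pow, pow_orderOf_eq_one]; rfl
  exact hper.minimalPeriod_pos (orderOf_pos g)

lemma iter_eps (h : Good σ ε) (e f : Fin 4) (x : V) (t : ℕ) :
    ε ((⇑(σ e * σ f))^[t] x) = ε x := by
  induction t with
  | zero => rfl
  | succ t ih =>
    rw [Function.iterate_succ_apply']
    have : (σ e * σ f) ((⇑(σ e * σ f))^[t] x) = σ e (σ f ((⇑(σ e * σ f))^[t] x)) := rfl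
    rw [this]
    exact (zmod2_trans_ne (h.bip e _) (h.bip f _)).trans ih

lemma iter_reach (heI : c ∈ I) (hfI : d ∈ I) (x : V) (t : ℕ) :
    Reach σ I x ((⇑(σ c * σ d))^[t] x) := by
  induction t with
  | zero => exact .refl
  | succ t ih =>
    rw [Function.iterate_succ_apply']
    exact (ih.tail ⟨d, hfI, rfl⟩).tail ⟨c, heI, rfl⟩

/-- If `u, v` are in distinct `I`-residues and the colors of `I` include the unswitched
`c` and switched `d`, then after twisting `u` and `v` become connected. -/
lemma merge_connect (h : Good σ ε) (hε : ε u = ε v) (huv : u ≠ v)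
    (hdc : d = i ∨ d = j) (hcc : ¬(c = i ∨ c = j)) (hcI : c ∈ I) (hdI : d ∈ I)
    (hnr : ¬ Reach σ I u v) :
    Reach (jiTwisting σ i j u v) I u v := by
  set σ' := jiTwisting σ i j u v with hσ'
  have h' : Good σ' ε := h.tw hε
  set s : Equiv.Perm V := σ d * σ c with hs
  set q := Function.minimalPeriod ⇑s v with hq
  have hq0 : 0 < q := perm_minimalPeriod_pos s v
  have hvu : ∀ z, Reach σ I v z → z ≠ u := fun z hz he =>
    hnr (reach_symm h.inv (he ▸ hz))
  have heps : ∀ t, ε ((⇑s)^[t] v) = ε v := fun t => iter_eps h d c v t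
  have hreach : ∀ t, Reach σ I v ((⇑s)^[t] v) := fun t => iter_reach hdI hcI v t
  have main : ∀ t, t < q → Reach σ' I v ((⇑s)^[t] v) := by
    intro t
    induction t with
    | zero => intro _; exact .refl
    | succ t ih =>
      intro htq
      have ht : t < q := Nat.lt_of_succ_lt htq
      have R := ih ht
      set x := (⇑s)^[t] v with hx
      have hstep1 : Reach σ' I v (σ c x) := R.tail ⟨c, hcI, by rw [hσ', tw_unswitched hcc]⟩
      set w := σ c x with hw
      have hwu : w ≠ u := hvu w ((hreach t).tail ⟨c, hcI, rfl⟩)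
      have hwv : w ≠ v := fun he => h.bip c x (by rw [← hw, he, heps])
      have hwdu : w ≠ σ d u := by
        intro he
        exact hvu (σ d w) (((hreach t).tail ⟨c, hcI, rfl⟩).tail ⟨d, hdI, rfl⟩)
          (by rw [he, h.inv])
      have hwdv : w ≠ σ d v := by
        intro he
        have : (⇑s)^[t + 1] v = v := by
          rw [Function.iterate_succ_apply']
          show s x = v
          show σ d (σ c x) = v
          rw [← hw, he, h.inv]
        exact absurd (Function.IsPeriodicPt.minimalPeriod_le (Nat.succ_pos t) this) (by omega)
      have hfinal : σ' d w = (⇑s)^[t + 1] v := by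
        rw [tw_other h hε hdc hwu hwv hwdu hwdv, Function.iterate_succ_apply']
        rfl
      exact hstep1.tail ⟨d, hdI, hfinal⟩
  have R1 : Reach σ' I v ((⇑s)^[q - 1] v) := main (q - 1) (by omega)
  have hkey : σ c ((⇑s)^[q - 1] v) = σ d v := by
    have h1 : (⇑s)^[q] v = v := perm_iterate_fix s v
    have h2 : (⇑s)^[q] v = σ d (σ c ((⇑s)^[q - 1] v)) := by
      conv_lhs => rw [show q = (q - 1) + 1 by omega]
      rw [Function.iterate_succ_apply']
      rfl
    have h3 : σ d (σ c ((⇑s)^[q - 1] v)) = v := by rw [← h2, h1]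
    calc σ c ((⇑s)^[q - 1] v) = σ d (σ d (σ c ((⇑s)^[q - 1] v))) := (h.inv d _).symm
    _ = σ d v := by rw [h3]
  have R2 : Reach σ' I v (σ d v) :=
    R1.tail ⟨c, hcI, by rw [hσ', tw_unswitched hcc, hkey]⟩
  have R3 : Reach σ' I v u := R2.tail ⟨d, hdI, tw_sv h hε huv hdc⟩
  exact reach_symm h'.inv R3

end GemTwist4
section GemTwist5
set_option linter.unusedSectionVars false

open Equiv Relation Function

variable {V : Type*} [DecidableEq V] [Fintype V]
variable {σ : Fin 4 → Equiv.Perm V} {ε : V → ZMod 2} {i j : Fin 4} {u v : V}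
variable {I : Set (Fin 4)} {c d : Fin 4}

/-- If `u, v` are in the same `{c,d}`-residue (`c` unswitched, `d` switched), with equal
parity, then after twisting they are in distinct residues. -/
lemma split_nonreach (h : Good σ ε) (hε : ε u = ε v) (huv : u ≠ v)
    (hdc : d = i ∨ d = j) (hcc : ¬(c = i ∨ c = j)) (hcI : c ∈ I) (hdI : d ∈ I)
    (hIcd : ∀ e ∈ I, e = c ∨ e = d)
    (hr : Reach σ I u v) :
    ¬ Reach (jiTwisting σ i j u v) I u v := by
  set σ' := jiTwisting σ i j u v with hσ'
  have h' : Good σ' ε := h.tw hε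
  set r : Equiv.Perm V := σ c * σ d with hrdef
  set p := Function.minimalPeriod ⇑r u with hp
  have hp0 : 0 < p := perm_minimalPeriod_pos r u
  have hpu : (⇑r)^[p] u = u := perm_iterate_fix r u
  have heps : ∀ t, ε ((⇑r)^[t] u) = ε u := fun t => iter_eps h c d u t
  have hab : ∀ t, σ c ((⇑r)^[t + 1] u) = σ d ((⇑r)^[t] u) := by
    intro t
    rw [Function.iterate_succ_apply']
    show σ c (σ c (σ d ((⇑r)^[t] u))) = _
    rw [h.inv]
  have hba : ∀ t, σ c (σ d ((⇑r)^[t] u)) = (⇑r)^[t + 1] u := by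
    intro t
    rw [Function.iterate_succ_apply']
    rfl
  have hinj : ∀ s t : ℕ, s < p → t < p → (⇑r)^[s] u = (⇑r)^[t] u → s = t := by
    intro s t hs ht hst
    exact Function.iterate_injOn_Iio_minimalPeriod hs ht hst
  have hcu : σ c u = σ d ((⇑r)^[p - 1] u) := by
    have e1 : σ c ((⇑r)^[p] u) = σ d ((⇑r)^[p - 1] u) := by
      conv_lhs => rw [show p = (p - 1) + 1 by omega]
      exact hab (p - 1)
    rw [← e1, hpu]
  -- Step 1 : v = r^[m] u for some 0 < m < p
  obtain ⟨m, hm0, hmp, hmv⟩ : ∃ m, 0 < m ∧ m < p ∧ (⇑r)^[m] u = v := by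
    have hT : ∀ z, Reach σ I u z → ∃ t, z = (⇑r)^[t] u ∨ z = σ d ((⇑r)^[t] u) := by
      intro z hz
      induction hz with
      | refl => exact ⟨0, Or.inl rfl⟩
      | @tail b y hreach hstep ih =>
        obtain ⟨e, heI, rfl⟩ := hstep
        obtain ⟨t, hb | hb⟩ := ih
        · rcases hIcd e heI with rfl | rfl
          · rcases Nat.eq_zero_or_pos t with rfl | ht
            · refine ⟨p - 1, Or.inr ?_⟩
              rw [hb]
              simp only [Function.iterate_zero_apply]
              exact hcu
            · refine ⟨t - 1, Or.inr ?_⟩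
              rw [hb, ← hab (t - 1), show t - 1 + 1 = t by omega]
          · exact ⟨t, Or.inr (by rw [hb])⟩
        · rcases hIcd e heI with rfl | rfl
          · exact ⟨t + 1, Or.inl (by rw [hb, hba])⟩
          · exact ⟨t, Or.inl (by rw [hb, h.inv])⟩
    obtain ⟨t, hv | hv⟩ := hT v hr
    · have hv' : (⇑r)^[t % p] u = v := by
        rw [hp, Function.iterate_mod_minimalPeriod_eq, ← hv]
      refine ⟨t % p, ?_, Nat.mod_lt t hp0, hv'⟩
      rcases Nat.eq_zero_or_pos (t % p) with h0 | h0
      · exfalso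
        rw [h0] at hv'
        simp only [Function.iterate_zero_apply] at hv'
        exact huv hv'
      · exact h0
    · exfalso
      have h1 : ε v = ε ((σ d) ((⇑r)^[t] u)) := by rw [← hv]
      have h2 : ε ((σ d) ((⇑r)^[t] u)) ≠ ε ((⇑r)^[t] u) := h.bip d _
      rw [heps t] at h2
      exact h2 (by rw [← h1]; exact hε.symm)
  -- Step 2 : invariant set
  set S : Set V := {u} ∪ {z | ∃ t, m < t ∧ t < p ∧ z = (⇑r)^[t] u} with hS
  have hSeps : ∀ z ∈ S, ε z = ε u := by
    rintro z (rfl | ⟨t, _, _, rfl⟩)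
    · rfl
    · exact heps t
  have hznu : ∀ t, m < t → t < p → (⇑r)^[t] u ≠ u := by
    intro t hmt htp he
    have : t = 0 := hinj t 0 htp hp0 (by simpa using he)
    omega
  have hznv : ∀ t, m < t → t < p → (⇑r)^[t] u ≠ v := by
    intro t hmt htp he
    have : t = m := hinj t m htp hmp (by rw [he, hmv])
    omega
  have hbz : ∀ t, m < t → t < p → σ' d ((⇑r)^[t] u) = σ d ((⇑r)^[t] u) := by
    intro t hmt htp
    refine tw_other h hε hdc (hznu t hmt htp) (hznv t hmt htp) ?_ ?_
    · exact fun he => h.bip d u (by rw [← he, heps])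
    · exact fun he => h.bip d v (by rw [← he, heps, hε])
  have hbu' : σ' d u = σ d v := tw_u h hε hdc
  set P : Set V := S ∪ ⇑(σ' d) '' S with hP
  have hSP : S ⊆ P := Set.subset_union_left
  have hrin : ∀ t, m < t → t ≤ p → (⇑r)^[t] u ∈ S := by
    intro t hmt htp
    rcases eq_or_lt_of_le htp with rfl | htp'
    · exact Or.inl (by rw [hpu]; rfl)
    · exact Or.inr ⟨t, hmt, htp', rfl⟩
  have hclosed : ∀ z ∈ P, ∀ e ∈ I, σ' e z ∈ P := by
    intro z hz e heI
    rcases hIcd e heI with he | he <;> rw [he]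
    · -- unswitched color c
      have hcc' : σ' c = σ c := by rw [hσ', tw_unswitched hcc]
      rcases hz with hzS | ⟨w, hwS, hwz⟩
      · rcases hzS with hzu | ⟨t, hmt, htp, hzt⟩
        · -- z = u
          rw [hzu, hcc', hcu]
          rcases eq_or_lt_of_le (show m ≤ p - 1 by omega) with he | hlt
          · rw [← he, hmv, ← hbu']
            exact Or.inr ⟨u, Or.inl rfl, rfl⟩
          · rw [← hbz (p - 1) hlt (by omega)]
            exact Or.inr ⟨_, Or.inr ⟨p - 1, hlt, by omega, rfl⟩, rfl⟩
        · -- z = r^[t] u, m < t < p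
          have ht1 : t - 1 + 1 = t := by omega
          rw [hzt, hcc', show t = t - 1 + 1 from ht1.symm, hab (t - 1)]
          rcases eq_or_lt_of_le (show m ≤ t - 1 by omega) with he | hlt
          · rw [← he, hmv, ← hbu']
            exact Or.inr ⟨u, Or.inl rfl, rfl⟩
          · rw [← hbz (t - 1) hlt (by omega)]
            exact Or.inr ⟨_, Or.inr ⟨t - 1, hlt, by omega, rfl⟩, rfl⟩
      · -- z = σ' d w, w ∈ S
        rw [← hwz, hcc']
        rcases hwS with hwu | ⟨t, hmt, htp, hwt⟩
        · rw [hwu, hbu', ← hmv, hba m]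
          exact hSP (hrin (m + 1) (by omega) (by omega))
        · rw [hwt, hbz t hmt htp, hba t]
          exact hSP (hrin (t + 1) (by omega) (by omega))
    · -- switched color d
      rcases hz with hzS | ⟨w, hwS, hwz⟩
      · exact Or.inr ⟨z, hzS, rfl⟩
      · rw [← hwz, h'.inv d w]
        exact hSP hwS
  have hvP : v ∉ P := by
    rintro (hv | ⟨w, hwS, hw⟩)
    · rcases hv with hv | ⟨t, hmt, htp, hv⟩
      · exact huv hv.symm
      · exact hznv t hmt htp hv.symm
    · exact h'.bip d w (by rw [hw, hSeps w hwS, hε])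
  intro hR'
  have hmemP : ∀ z, Reach σ' I u z → z ∈ P := by
    intro z hz
    induction hz with
    | refl => exact hSP (Or.inl rfl)
    | @tail b y hreach hstep ih =>
      obtain ⟨e, heI, rfl⟩ := hstep
      exact hclosed b ih e heI
  exact hvP (hmemP v hR')

end GemTwist5
section GemTwist6
set_option linter.unusedSectionVars false

open Equiv

variable {V : Type*} [Fintype V]
variable {I : Set (Fin 4)} {x y : V}

lemma residues_congr {σA σB : Fin 4 → Equiv.Perm V}
    (h : ∀ x y, SameResidue σA I x y ↔ SameResidue σB I x y) :
    residues σA I = residues σB I := by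
  unfold residues
  ext O
  simp only [Set.mem_setOf_eq]
  constructor
  · rintro ⟨x, rfl⟩
    exact ⟨x, Set.ext fun z => by simp only [Set.mem_setOf_eq]; exact h x z⟩
  · rintro ⟨x, rfl⟩
    exact ⟨x, Set.ext fun z => by simp only [Set.mem_setOf_eq]; exact (h x z).symm⟩

lemma sameResidue_congr_fun {σA σB : Fin 4 → Equiv.Perm V}
    (h : ∀ c ∈ I, σA c = σB c) (x y : V) :
    SameResidue σA I x y ↔ SameResidue σB I x y := by
  unfold SameResidue
  rw [Set.image_congr h]

lemma merge_count (σA σB : Fin 4 → Equiv.Perm V) (I : Set (Fin 4)) (u v : V)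
    (h1 : ∀ x y, SameResidue σA I x y → SameResidue σB I x y)
    (h2 : SameResidue σB I u v)
    (h3 : ¬ SameResidue σA I u v)
    (h4 : ∀ x y, SameResidue σB I x y → SameResidue σA I x y ∨
      (SameResidue σA I x u ∧ SameResidue σA I v y) ∨
      (SameResidue σA I x v ∧ SameResidue σA I u y)) :
    numResidues σA I = numResidues σB I + 1 := by
  classical
  set A : V → Set V := fun x => {y | SameResidue σA I x y} with hA
  set B : V → Set V := fun x => {y | SameResidue σB I x y} with hB
  have hmemA : ∀ {x y}, y ∈ A x ↔ SameResidue σA I x y := Iff.rfl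
  have hAcongr : ∀ {x y}, SameResidue σA I x y → A x = A y := by
    intro x y hxy
    ext z
    exact ⟨fun hz => sameResidue_trans (sameResidue_symm hxy) hz,
      fun hz => sameResidue_trans hxy hz⟩
  have hBcongr : ∀ {x y}, SameResidue σB I x y → B x = B y := by
    intro x y hxy
    ext z
    exact ⟨fun hz => sameResidue_trans (sameResidue_symm hxy) hz,
      fun hz => sameResidue_trans hxy hz⟩
  have hBu : B u = A u ∪ A v := by
    ext z
    constructor
    · intro hz
      rcases h4 u z hz with hz' | ⟨_, hz'⟩ | ⟨huv', _⟩
      · exact Or.inl hz'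
      · exact Or.inr hz'
      · exact absurd huv' h3
    · rintro (hz | hz)
      · exact h1 u z hz
      · exact sameResidue_trans h2 (h1 v z hz)
  have hBv : B v = A u ∪ A v := by rw [← hBu]; exact (hBcongr h2).symm
  have hBother : ∀ x, ¬ SameResidue σA I x u → ¬ SameResidue σA I x v → B x = A x := by
    intro x hxu hxv
    ext z
    constructor
    · intro hz
      rcases h4 x z hz with hz' | ⟨hz', _⟩ | ⟨hz', _⟩
      · exact hz'
      · exact absurd hz' hxu
      · exact absurd hz' hxv
    · exact h1 x z
  set T : Set (Set V) := {O | ∃ x, ¬ SameResidue σA I x u ∧ ¬ SameResidue σA I x v ∧ O = A x}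
    with hT
  have hresA : residues σA I = insert (A u) (insert (A v) T) := by
    ext O
    constructor
    · rintro ⟨x, rfl⟩
      by_cases hxu : SameResidue σA I x u
      · exact Or.inl (hAcongr hxu)
      by_cases hxv : SameResidue σA I x v
      · exact Or.inr (Or.inl (hAcongr hxv))
      · exact Or.inr (Or.inr ⟨x, hxu, hxv, rfl⟩)
    · rintro (rfl | rfl | ⟨x, _, _, rfl⟩)
      · exact ⟨u, rfl⟩
      · exact ⟨v, rfl⟩
      · exact ⟨x, rfl⟩
  have hresB : residues σB I = insert (A u ∪ A v) T := by
    ext O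
    constructor
    · rintro ⟨x, rfl⟩
      by_cases hxu : SameResidue σA I x u
      · exact Or.inl (by show B x = _; rw [hBcongr (h1 _ _ hxu), hBu])
      by_cases hxv : SameResidue σA I x v
      · exact Or.inl (by show B x = _; rw [hBcongr (h1 _ _ hxv), hBv])
      · exact Or.inr ⟨x, hxu, hxv, show B x = A x from hBother x hxu hxv⟩
    · rintro (rfl | ⟨x, hxu, hxv, rfl⟩)
      · exact ⟨u, hBu.symm⟩
      · exact ⟨x, (hBother x hxu hxv).symm⟩
  have hself : ∀ z, z ∈ A z := fun z => sameResidue_refl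
  have hAuv : A u ≠ A v := by
    intro he
    have h' : v ∈ A u := by rw [he]; exact hself v
    simp only [hA, Set.mem_setOf_eq] at h'
    exact h3 h'
  have hAuT : A u ∉ T := by
    rintro ⟨x, hxu, _, he⟩
    have h' : u ∈ A x := by rw [← he]; exact hself u
    simp only [hA, Set.mem_setOf_eq] at h'
    exact hxu h'
  have hAvT : A v ∉ T := by
    rintro ⟨x, _, hxv, he⟩
    have h' : v ∈ A x := by rw [← he]; exact hself v
    simp only [hA, Set.mem_setOf_eq] at h'
    exact hxv h'
  have hUT : (A u ∪ A v) ∉ T := by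
    rintro ⟨x, hxu, hxv, he⟩
    have h' : x ∈ A u ∪ A v := by rw [he]; exact hself x
    simp only [hA, Set.mem_union, Set.mem_setOf_eq] at h'
    rcases h' with hx | hx
    · exact hxu (sameResidue_symm hx)
    · exact hxv (sameResidue_symm hx)
  have e1 : numResidues σA I = T.ncard + 2 := by
    rw [numResidues, hresA, Set.ncard_insert_of_notMem (by
        simp only [Set.mem_insert_iff, not_or]; exact ⟨hAuv, hAuT⟩),
      Set.ncard_insert_of_notMem hAvT]
  have e2 : numResidues σB I = T.ncard + 1 := by
    rw [numResidues, hresB, Set.ncard_insert_of_notMem hUT]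
  rw [e1, e2]

lemma count_conj [DecidableEq V] {σ : Fin 4 → Equiv.Perm V} {i j : Fin 4} {u v : V}
    (hall : ∀ c ∈ I, jiTwisting σ i j u v c = Equiv.swap u v * σ c * Equiv.swap u v) :
    numResidues (jiTwisting σ i j u v) I = numResidues σ I := by
  classical
  have hconj : ∀ g : Equiv.Perm V, (MulAut.conj (Equiv.swap u v)) g =
      Equiv.swap u v * g * Equiv.swap u v := by
    intro g
    rw [MulAut.conj_apply, Equiv.swap_inv]
  have hmapcl : Subgroup.map (MulAut.conj (Equiv.swap u v)).toMonoidHom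
      (Subgroup.closure (σ '' I)) = Subgroup.closure (jiTwisting σ i j u v '' I) := by
    rw [MonoidHom.map_closure]
    congr 1
    ext g
    constructor
    · rintro ⟨g₀, ⟨c, hc, rfl⟩, rfl⟩
      refine ⟨c, hc, ?_⟩
      simp only [MulEquiv.coe_toMonoidHom]
      rw [hall c hc, hconj]
    · rintro ⟨c, hc, rfl⟩
      refine ⟨σ c, ⟨c, hc, rfl⟩, ?_⟩
      simp only [MulEquiv.coe_toMonoidHom]
      rw [hconj, hall c hc]
  have key : ∀ x y, SameResidue (jiTwisting σ i j u v) I x y ↔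
      SameResidue σ I (Equiv.swap u v x) (Equiv.swap u v y) := by
    intro x y
    constructor
    · rintro ⟨g, hg, rfl⟩
      rw [← hmapcl, Subgroup.mem_map] at hg
      obtain ⟨g₀, hg₀, rfl⟩ := hg
      refine ⟨g₀, hg₀, ?_⟩
      simp only [MulEquiv.coe_toMonoidHom]
      rw [hconj]
      simp [Equiv.Perm.mul_apply, Equiv.swap_apply_self]
    · rintro ⟨g, hg, hxy⟩
      refine ⟨Equiv.swap u v * g * Equiv.swap u v, ?_, ?_⟩
      · rw [← hmapcl]
        exact ⟨g, hg, hconj g⟩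
      · simp only [Equiv.Perm.mul_apply, Equiv.swap_apply_self]
        rw [hxy]
        exact Equiv.swap_apply_self _ _ _
  have hres : residues (jiTwisting σ i j u v) I =
      (fun O => ⇑(Equiv.swap u v) '' O) '' residues σ I := by
    ext O
    constructor
    · rintro ⟨x, rfl⟩
      refine ⟨{y | SameResidue σ I (Equiv.swap u v x) y}, ⟨Equiv.swap u v x, rfl⟩, ?_⟩
      ext z
      simp only [Set.mem_image, Set.mem_setOf_eq]
      constructor
      · rintro ⟨w, hw, rfl⟩
        exact (key x (Equiv.swap u v w)).mpr (by rwa [Equiv.swap_apply_self])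
      · intro hz
        exact ⟨Equiv.swap u v z, (key x z).mp hz, Equiv.swap_apply_self _ _ _⟩
    · rintro ⟨P, ⟨x, rfl⟩, rfl⟩
      refine ⟨Equiv.swap u v x, ?_⟩
      ext z
      simp only [Set.mem_image, Set.mem_setOf_eq]
      constructor
      · rintro ⟨w, hw, rfl⟩
        refine (key (Equiv.swap u v x) (Equiv.swap u v w)).mpr ?_
        rwa [Equiv.swap_apply_self, Equiv.swap_apply_self]
      · intro hz
        have h' := (key (Equiv.swap u v x) z).mp hz
        rw [Equiv.swap_apply_self] at h'
        exact ⟨Equiv.swap u v z, h', Equiv.swap_apply_self _ _ _⟩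
  rw [numResidues, numResidues, hres,
    Set.ncard_image_of_injective _ (Set.image_injective.mpr (Equiv.swap u v).injective)]

end GemTwist6
section GemTwist7
set_option linter.unusedSectionVars false
set_option maxHeartbeats 1000000

open Equiv

variable {V : Type*} [Fintype V]

lemma numResidues_def (σ : Fin 4 → Equiv.Perm V) (I : Set (Fin 4)) :
    numResidues σ I = (residues σ I).ncard := rfl

lemma bCount_eq (σ : Fin 4 → Equiv.Perm V) :
    bCount σ = numResidues σ {0, 1} + numResidues σ {0, 2} + numResidues σ {0, 3}
      + numResidues σ {1, 2} + numResidues σ {1, 3} + numResidues σ {2, 3} := by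
  have hfil : Finset.univ.filter (fun p : Fin 4 × Fin 4 => p.1 < p.2) =
      ({((0 : Fin 4), (1 : Fin 4)), (0, 2), (0, 3), (1, 2), (1, 3), (2, 3)} :
        Finset (Fin 4 × Fin 4)) := by decide
  rw [bCount, hfil]
  rw [Finset.sum_insert (by decide), Finset.sum_insert (by decide),
    Finset.sum_insert (by decide), Finset.sum_insert (by decide),
    Finset.sum_insert (by decide), Finset.sum_singleton]
  ring

lemma tCount_eq (σ : Fin 4 → Equiv.Perm V) :
    tCount σ = numResidues σ ({0}ᶜ) + numResidues σ ({1}ᶜ) + numResidues σ ({2}ᶜ)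
      + numResidues σ ({3}ᶜ) := by
  rw [tCount, Fin.sum_univ_four]

end GemTwist7

set_option maxHeartbeats 2000000 in
/-- Let `G` be a bipartite 3-gem, `(i,j,k)` a permutation of `(1,2,3)`,
and `{u,v}` a `j`-twistor of `G`. Then the `ji`-twisting of `G` at `{u,v}` is again a
bipartite 3-gem, and the same parity map `ε` exhibits it as bipartite. -/
theorem jiTwisting_isGem {V : Type*} [Fintype V] [DecidableEq V] [Nonempty V]
    (σ : Fin 4 → Equiv.Perm V) (ε : V → ZMod 2)
    (hgem : IsGem σ) (hbip : ∀ (c : Fin 4) (x : V), ε (σ c x) ≠ ε x)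
    (i j k : Fin 4) (hperm : ({i, j, k} : Finset (Fin 4)) = ({1, 2, 3} : Finset (Fin 4)))
    (u v : V) (htw : IsTwistor σ ε j i k u v) :
    IsGem (jiTwisting σ i j u v) ∧
    ∀ (c : Fin 4) (x : V), ε (jiTwisting σ i j u v c x) ≠ ε x := by
  classical
  obtain ⟨⟨hfpfinv, htrans⟩, hcount⟩ := hgem
  have hinv : ∀ c (x : V), σ c (σ c x) = x := fun c x => (hfpfinv c).2 x
  have h : Good σ ε := ⟨hinv, hbip⟩
  obtain ⟨huv, hε, hs0j, hsik, hn0i, hnjk, hn0k, hnji⟩ := htw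
  set σ' := jiTwisting σ i j u v with hσ'def
  have h' : Good σ' ε := h.tw hε
  have htt : jiTwisting σ' i j u v = σ := tw_tw
  -- distinctness of the colors
  obtain ⟨hi, hj, hk, hij, hik, hjk⟩ :
      i ≠ 0 ∧ j ≠ 0 ∧ k ≠ 0 ∧ i ≠ j ∧ i ≠ k ∧ j ≠ k :=
    (by decide : ∀ a b c : Fin 4, ({a, b, c} : Finset (Fin 4)) = {1, 2, 3} →
      a ≠ 0 ∧ b ≠ 0 ∧ c ≠ 0 ∧ a ≠ b ∧ a ≠ c ∧ b ≠ c) i j k hperm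
  have hcc0 : ¬((0 : Fin 4) = i ∨ (0 : Fin 4) = j) := by
    rintro (h0 | h0)
    · exact hi h0.symm
    · exact hj h0.symm
  have hcck : ¬(k = i ∨ k = j) := by
    rintro (h0 | h0)
    · exact hik h0.symm
    · exact hjk h0.symm
  -- iff conversions
  have sr : ∀ (I : Set (Fin 4)) (x y : V), SameResidue σ I x y ↔ Reach σ I x y :=
    fun I x y => sameResidue_iff_reach hinv
  have sr' : ∀ (I : Set (Fin 4)) (x y : V), SameResidue σ' I x y ↔ Reach σ' I x y :=
    fun I x y => sameResidue_iff_reach h'.inv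
  -- reach facts from the twistor
  have r0jR : Reach σ {0, j} u v := (sr _ u v).mp hs0j
  have rikR : Reach σ {i, k} u v := (sr _ u v).mp hsik
  have n0iR : ¬ Reach σ {0, i} u v := fun hr => hn0i ((sr _ u v).mpr hr)
  have njkR : ¬ Reach σ {j, k} u v := fun hr => hnjk ((sr _ u v).mpr hr)
  -- memberships
  have m00i : (0 : Fin 4) ∈ ({0, i} : Set (Fin 4)) := Set.mem_insert _ _
  have mi0i : i ∈ ({0, i} : Set (Fin 4)) := Set.mem_insert_of_mem _ rfl
  have m00j : (0 : Fin 4) ∈ ({0, j} : Set (Fin 4)) := Set.mem_insert _ _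
  have mj0j : j ∈ ({0, j} : Set (Fin 4)) := Set.mem_insert_of_mem _ rfl
  have mjjk : j ∈ ({j, k} : Set (Fin 4)) := Set.mem_insert _ _
  have mkjk : k ∈ ({j, k} : Set (Fin 4)) := Set.mem_insert_of_mem _ rfl
  have miik : i ∈ ({i, k} : Set (Fin 4)) := Set.mem_insert _ _
  have mkik : k ∈ ({i, k} : Set (Fin 4)) := Set.mem_insert_of_mem _ rfl
  -- merged pairs in the new graph
  have R0i' : Reach σ' {0, i} u v :=
    merge_connect h hε huv (Or.inl rfl) hcc0 m00i mi0i n0iR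
  have Rjk' : Reach σ' {j, k} u v :=
    merge_connect h hε huv (Or.inr rfl) hcck mkjk mjjk njkR
  -- split pairs in the new graph
  have n0jR' : ¬ Reach σ' {0, j} u v :=
    split_nonreach h hε huv (Or.inr rfl) hcc0 m00j mj0j
      (by intro e he
          simp only [Set.mem_insert_iff, Set.mem_singleton_iff] at he
          exact he) r0jR
  have nikR' : ¬ Reach σ' {i, k} u v :=
    split_nonreach h hε huv (Or.inl rfl) hcck mkik miik
      (by intro e he
          simp only [Set.mem_insert_iff, Set.mem_singleton_iff] at he
          tauto) rikR
  -- transfer lemmas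
  have transfer_old_new : ∀ (I : Set (Fin 4)), Reach σ' I u v →
      ∀ x y, Reach σ I x y → Reach σ' I x y :=
    fun I hR x y hxy => reach_tw_of_reach h hε huv hR hxy
  have transfer_new_old : ∀ (I : Set (Fin 4)), Reach σ I u v →
      ∀ x y, Reach σ' I x y → Reach σ I x y := by
    intro I hR x y hxy
    have hR2 : Reach (jiTwisting σ' i j u v) I u v := by rw [htt]; exact hR
    have := reach_tw_of_reach h' hε huv hR2 hxy
    rwa [htt] at this
  have cover_new_old : ∀ (I : Set (Fin 4)) (x y : V), Reach σ' I x y →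
      Reach σ I x y ∨ (Reach σ I x u ∧ Reach σ I v y) ∨
        (Reach σ I x v ∧ Reach σ I u y) :=
    fun I x y hxy => reach_cover h hε huv hxy
  have cover_old_new : ∀ (I : Set (Fin 4)) (x y : V), Reach σ I x y →
      Reach σ' I x y ∨ (Reach σ' I x u ∧ Reach σ' I v y) ∨
        (Reach σ' I x v ∧ Reach σ' I u y) := by
    intro I x y hxy
    have hxy2 : Reach (jiTwisting σ' i j u v) I x y := by rw [htt]; exact hxy
    exact reach_cover h' hε huv hxy2
  -- transitivity of the twisted graph
  have htrans' : ∀ x y : V, SameResidue σ' Set.univ x y := by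
    intro x y
    have hRuniv : Reach σ' Set.univ u v :=
      reach_mono (Set.subset_univ _) R0i'
    exact (sr' _ x y).mpr
      (transfer_old_new Set.univ hRuniv x y ((sr _ x y).mp (htrans x y)))
  -- the six bigon relations
  have e1 : numResidues σ {0, i} = numResidues σ' {0, i} + 1 := by
    refine merge_count σ σ' {0, i} u v ?_ ?_ hn0i ?_
    · exact fun x y hxy => (sr' _ x y).mpr
        (transfer_old_new _ R0i' x y ((sr _ x y).mp hxy))
    · exact (sr' _ u v).mpr R0i'
    · intro x y hxy
      rcases cover_new_old _ x y ((sr' _ x y).mp hxy) with hc | ⟨ha, hb⟩ | ⟨ha, hb⟩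
      · exact Or.inl ((sr _ x y).mpr hc)
      · exact Or.inr (Or.inl ⟨(sr _ x u).mpr ha, (sr _ v y).mpr hb⟩)
      · exact Or.inr (Or.inr ⟨(sr _ x v).mpr ha, (sr _ u y).mpr hb⟩)
  have e2 : numResidues σ {j, k} = numResidues σ' {j, k} + 1 := by
    refine merge_count σ σ' {j, k} u v ?_ ?_ hnjk ?_
    · exact fun x y hxy => (sr' _ x y).mpr
        (transfer_old_new _ Rjk' x y ((sr _ x y).mp hxy))
    · exact (sr' _ u v).mpr Rjk'
    · intro x y hxy
      rcases cover_new_old _ x y ((sr' _ x y).mp hxy) with hc | ⟨ha, hb⟩ | ⟨ha, hb⟩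
      · exact Or.inl ((sr _ x y).mpr hc)
      · exact Or.inr (Or.inl ⟨(sr _ x u).mpr ha, (sr _ v y).mpr hb⟩)
      · exact Or.inr (Or.inr ⟨(sr _ x v).mpr ha, (sr _ u y).mpr hb⟩)
  have e3 : numResidues σ' {0, j} = numResidues σ {0, j} + 1 := by
    refine merge_count σ' σ {0, j} u v ?_ hs0j (fun hs => n0jR' ((sr' _ u v).mp hs)) ?_
    · exact fun x y hxy => (sr _ x y).mpr
        (transfer_new_old _ r0jR x y ((sr' _ x y).mp hxy))
    · intro x y hxy
      rcases cover_old_new _ x y ((sr _ x y).mp hxy) with hc | ⟨ha, hb⟩ | ⟨ha, hb⟩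
      · exact Or.inl ((sr' _ x y).mpr hc)
      · exact Or.inr (Or.inl ⟨(sr' _ x u).mpr ha, (sr' _ v y).mpr hb⟩)
      · exact Or.inr (Or.inr ⟨(sr' _ x v).mpr ha, (sr' _ u y).mpr hb⟩)
  have e4 : numResidues σ' {i, k} = numResidues σ {i, k} + 1 := by
    refine merge_count σ' σ {i, k} u v ?_ hsik (fun hs => nikR' ((sr' _ u v).mp hs)) ?_
    · exact fun x y hxy => (sr _ x y).mpr
        (transfer_new_old _ rikR x y ((sr' _ x y).mp hxy))
    · intro x y hxy
      rcases cover_old_new _ x y ((sr _ x y).mp hxy) with hc | ⟨ha, hb⟩ | ⟨ha, hb⟩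
      · exact Or.inl ((sr' _ x y).mpr hc)
      · exact Or.inr (Or.inl ⟨(sr' _ x u).mpr ha, (sr' _ v y).mpr hb⟩)
      · exact Or.inr (Or.inr ⟨(sr' _ x v).mpr ha, (sr' _ u y).mpr hb⟩)
  have e5 : numResidues σ' {0, k} = numResidues σ {0, k} := by
    rw [numResidues_def, numResidues_def, residues_congr (σA := σ') (σB := σ)
      (sameResidue_congr_fun (fun c hc => by
        simp only [Set.mem_insert_iff, Set.mem_singleton_iff] at hc
        rcases hc with rfl | rfl
        · exact tw_unswitched hcc0
        · exact tw_unswitched hcck))]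
  have e6 : numResidues σ' {i, j} = numResidues σ {i, j} := by
    refine count_conj (fun c hc => ?_)
    simp only [Set.mem_insert_iff, Set.mem_singleton_iff] at hc
    rcases hc with rfl | rfl
    · exact tw_switched (Or.inl rfl)
    · exact tw_switched (Or.inr rfl)
  -- triples
  have hsub2 : ∀ (a b c : Fin 4), a ≠ c → b ≠ c →
      ({a, b} : Set (Fin 4)) ⊆ ({c}ᶜ : Set (Fin 4)) := by
    intro a b c ha hb x hx
    simp only [Set.mem_insert_iff, Set.mem_singleton_iff] at hx
    simp only [Set.mem_compl_iff, Set.mem_singleton_iff]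
    rcases hx with rfl | rfl
    · exact ha
    · exact hb
  have hnum_eq : ∀ (I : Set (Fin 4)), Reach σ I u v → Reach σ' I u v →
      numResidues σ' I = numResidues σ I := by
    intro I hRo hRn
    rw [numResidues_def, numResidues_def,
      residues_congr (σA := σ') (σB := σ) (fun x y => ⟨
        fun hxy => (sr _ x y).mpr (transfer_new_old I hRo x y ((sr' _ x y).mp hxy)),
        fun hxy => (sr' _ x y).mpr (transfer_old_new I hRn x y ((sr _ x y).mp hxy))⟩)]
  have hcompl : ∀ c : Fin 4, c = 0 ∨ c = i ∨ c = j ∨ c = k :=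
    fun c => (by decide : ∀ a b c d : Fin 4, a ≠ 0 → b ≠ 0 → c ≠ 0 →
      a ≠ b → a ≠ c → b ≠ c → d = 0 ∨ d = a ∨ d = b ∨ d = c)
      i j k c hi hj hk hij hik hjk
  have e7 : ∀ c : Fin 4, numResidues σ' ({c}ᶜ : Set (Fin 4)) =
      numResidues σ ({c}ᶜ : Set (Fin 4)) := by
    intro c
    rcases hcompl c with rfl | rfl | rfl | rfl
    · exact hnum_eq _ (reach_mono (hsub2 i k 0 hi hk) rikR)
        (reach_mono (hsub2 j k 0 hj hk) Rjk')
    · exact hnum_eq _ (reach_mono (hsub2 0 j c (Ne.symm hi) (Ne.symm hij)) r0jR)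
        (reach_mono (hsub2 j k c (Ne.symm hij) (Ne.symm hik)) Rjk')
    · exact hnum_eq _ (reach_mono (hsub2 i k c hij (Ne.symm hjk)) rikR)
        (reach_mono (hsub2 0 i c (Ne.symm hj) hij) R0i')
    · exact hnum_eq _ (reach_mono (hsub2 0 j c (Ne.symm hk) hjk) r0jR)
        (reach_mono (hsub2 0 i c (Ne.symm hk) hik) R0i')
  have et : tCount σ' = tCount σ := by
    rw [tCount, tCount]
    exact Finset.sum_congr rfl fun c _ => e7 c
  -- bigon total
  have eb : bCount σ' = bCount σ := by
    have hcases6 : (i = 1 ∧ j = 2 ∧ k = 3) ∨ (i = 1 ∧ j = 3 ∧ k = 2) ∨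
        (i = 2 ∧ j = 1 ∧ k = 3) ∨ (i = 2 ∧ j = 3 ∧ k = 1) ∨
        (i = 3 ∧ j = 1 ∧ k = 2) ∨ (i = 3 ∧ j = 2 ∧ k = 1) :=
      (by decide : ∀ a b c : Fin 4, ({a, b, c} : Finset (Fin 4)) = {1, 2, 3} →
        ((a = 1 ∧ b = 2 ∧ c = 3) ∨ (a = 1 ∧ b = 3 ∧ c = 2) ∨
         (a = 2 ∧ b = 1 ∧ c = 3) ∨ (a = 2 ∧ b = 3 ∧ c = 1) ∨
         (a = 3 ∧ b = 1 ∧ c = 2) ∨ (a = 3 ∧ b = 2 ∧ c = 1))) i j k hperm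
    clear_value σ'
    rcases hcases6 with ⟨rfl, rfl, rfl⟩ | ⟨rfl, rfl, rfl⟩ | ⟨rfl, rfl, rfl⟩ |
      ⟨rfl, rfl, rfl⟩ | ⟨rfl, rfl, rfl⟩ | ⟨rfl, rfl, rfl⟩
    · rw [bCount_eq, bCount_eq]
      omega
    · rw [Set.pair_comm (3 : Fin 4) 2] at e2
      rw [bCount_eq, bCount_eq]
      omega
    · rw [Set.pair_comm (2 : Fin 4) 1] at e6
      rw [bCount_eq, bCount_eq]
      omega
    · rw [Set.pair_comm (3 : Fin 4) 1] at e2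
      rw [Set.pair_comm (2 : Fin 4) 1] at e4
      rw [bCount_eq, bCount_eq]
      omega
    · rw [Set.pair_comm (3 : Fin 4) 1] at e6
      rw [Set.pair_comm (3 : Fin 4) 2] at e4
      rw [bCount_eq, bCount_eq]
      omega
    · rw [Set.pair_comm (3 : Fin 4) 2] at e6
      rw [Set.pair_comm (3 : Fin 4) 1] at e4
      rw [Set.pair_comm (2 : Fin 4) 1] at e2
      rw [bCount_eq, bCount_eq]
      omega
  refine ⟨⟨⟨fun c => ⟨h'.fpf c, h'.inv c⟩, htrans'⟩, ?_⟩, h'.bip⟩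
  rw [et, eb]
  exact hcount
end

section
/- Let G be a bipartite 3-gem, let (i,j,k) be a permutation of (1,2,3), and let {u,v} be a j-twistor of G. Then in the ji-twisting of G at {u,v}, the pair {u,v} is an i-twistor: in the twisted graph, u and v have equal parity and lie in the same {0,i}-residue and the same {j,k}-residue, and in distinct {0,j}-residues, distinct {i,k}-residues, distinct {0,k}-residues and distinct {i,j}-residues. -/
namespace JiTwistAux

open Equiv

variable {V : Type*}

lemma perm_apply_inv_self (f : Equiv.Perm V) (x : V) : f (f⁻¹ x) = x :=
  Equiv.apply_symm_apply f x

lemma perm_inv_apply_self (f : Equiv.Perm V) (x : V) : f⁻¹ (f x) = x :=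
  Equiv.symm_apply_apply f x

lemma zmod2_ne_ne {p q r : ZMod 2} (h1 : p ≠ q) (h2 : q ≠ r) : p = r := by
  revert h1 h2; revert p q r; decide

lemma fix_zpow {h : Equiv.Perm V} {x : V} (hx : h x = x) : ∀ n : ℤ, (h ^ n) x = x := by
  intro n
  induction n using Int.induction_on with
  | zero => simp
  | succ n ih => rw [zpow_add_one, Equiv.Perm.mul_apply, hx, ih]
  | pred n ih =>
      have hx' : h⁻¹ x = x := by
        conv_lhs => rw [← hx]
        exact perm_inv_apply_self h x
      rw [zpow_sub_one, Equiv.Perm.mul_apply, hx', ih]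

lemma zpow_mod_point {g : Equiv.Perm V} {x : V} {m : ℕ} (hm : 0 < m)
    (hx : (g ^ m) x = x) (n : ℤ) : (g ^ n) x = (g ^ (n % (m : ℤ)).toNat) x := by
  have hfix : ((g ^ (m : ℤ)) x = x) := by rw [zpow_natCast]; exact hx
  have h0 : n % (m : ℤ) + (m : ℤ) * (n / (m : ℤ)) = n := Int.emod_add_mul_ediv n m
  have h1 : (g ^ n) x = (g ^ (n % (m : ℤ))) x := by
    conv_lhs => rw [← h0]
    rw [zpow_add, Equiv.Perm.mul_apply, zpow_mul, fix_zpow hfix]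
  rw [h1, ← zpow_natCast, Int.toNat_of_nonneg (Int.emod_nonneg n (by exact_mod_cast hm.ne'))]

lemma eps_zpow {ε : V → ZMod 2} {g : Equiv.Perm V} (h : ∀ x, ε (g x) = ε x) :
    ∀ (n : ℤ) (x : V), ε ((g ^ n) x) = ε x := by
  have hinv : ∀ x, ε (g⁻¹ x) = ε x := by
    intro x
    conv_rhs => rw [← perm_apply_inv_self g x]
    rw [h]
  intro n
  induction n using Int.induction_on with
  | zero => simp
  | succ n ih => intro x; rw [zpow_add_one, Equiv.Perm.mul_apply, ih, h]  -- careful order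
  | pred n ih => intro x; rw [zpow_sub_one, Equiv.Perm.mul_apply, ih, hinv]

lemma eps_pow {ε : V → ZMod 2} {g : Equiv.Perm V} (h : ∀ x, ε (g x) = ε x)
    (n : ℕ) (x : V) : ε ((g ^ n) x) = ε x := by
  have := eps_zpow h (n : ℤ) x
  rwa [zpow_natCast] at this

/-- Pointwise conjugation: `b ∘ (a*b)^n = (a*b)^(-n) ∘ b` for involutions. -/
lemma conj_zpow_apply {a b : Equiv.Perm V} (ha : ∀ x, a (a x) = x) (hb : ∀ x, b (b x) = x) :
    ∀ (n : ℤ) (x : V), b (((a * b) ^ n) x) = ((a * b) ^ (-n)) (b x) := by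
  have hpt : ∀ x : V, b ((a * b) x) = (a * b)⁻¹ (b x) := by
    intro x
    rw [Equiv.Perm.eq_inv_iff_eq]
    simp [Equiv.Perm.mul_apply, ha, hb]
  have hpt' : ∀ x : V, b ((a * b)⁻¹ x) = (a * b) (b x) := by
    intro x
    have := hpt ((a * b)⁻¹ x)
    rw [perm_apply_inv_self] at this
    rw [this, perm_apply_inv_self]
  intro n
  induction n using Int.induction_on with
  | zero => simp
  | succ n ih =>
      intro x
      rw [zpow_add_one, Equiv.Perm.mul_apply, ih, hpt,
        show (-(n + 1) : ℤ) = -n + -1 by ring, zpow_add, Equiv.Perm.mul_apply, zpow_neg_one]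
  | pred n ih =>
      intro x
      rw [zpow_sub_one, Equiv.Perm.mul_apply, ih, hpt',
        show (-(-(n : ℤ) - 1) : ℤ) = -(-(n:ℤ)) + 1 by ring, zpow_add, zpow_one]
      simp [Equiv.Perm.mul_apply, hb]


/-- Normal form for elements of the subgroup generated by two involutions. -/
lemma closure_pair_form {a b : Equiv.Perm V} (ha : ∀ x, a (a x) = x) (hb : ∀ x, b (b x) = x)
    {p : Equiv.Perm V} (hp : p ∈ Subgroup.closure ({a, b} : Set (Equiv.Perm V))) :
    ∀ x : V, ∃ n : ℤ, p x = ((a * b) ^ n) x ∨ p x = ((a * b) ^ n) (b x) := by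
  have hcj := conj_zpow_apply ha hb
  induction hp using Subgroup.closure_induction with
  | mem q hq =>
      intro x
      rcases hq with rfl | rfl
      · refine ⟨1, Or.inr ?_⟩
        rw [zpow_one, Equiv.Perm.mul_apply, hb]
      · exact ⟨0, Or.inr (by simp)⟩
  | one => intro x; exact ⟨0, Or.inl (by simp)⟩
  | mul p q _ _ ihp ihq =>
      intro x
      obtain ⟨n, hn⟩ := ihq x
      rcases hn with h | h
      · obtain ⟨n', hn'⟩ := ihp (((a * b) ^ n) x)
        rcases hn' with h' | h'
        · refine ⟨n' + n, Or.inl ?_⟩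
          rw [Equiv.Perm.mul_apply, h, h', zpow_add, Equiv.Perm.mul_apply]
        · refine ⟨n' + -n, Or.inr ?_⟩
          rw [Equiv.Perm.mul_apply, h, h', hcj, zpow_add, Equiv.Perm.mul_apply]
      · obtain ⟨n', hn'⟩ := ihp (((a * b) ^ n) (b x))
        rcases hn' with h' | h'
        · refine ⟨n' + n, Or.inr ?_⟩
          rw [Equiv.Perm.mul_apply, h, h', zpow_add, Equiv.Perm.mul_apply]
        · refine ⟨n' + -n, Or.inl ?_⟩
          rw [Equiv.Perm.mul_apply, h, h', hcj, hb, zpow_add, Equiv.Perm.mul_apply]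
  | inv p hpmem ihp =>
      intro x
      obtain ⟨n, hn⟩ := ihp (p⁻¹ x)
      rw [perm_apply_inv_self] at hn
      rcases hn with h | h
      · refine ⟨-n, Or.inl ?_⟩
        have h1 : ((a * b) ^ (-n)) (((a * b) ^ n) (p⁻¹ x)) = p⁻¹ x := by
          rw [← Equiv.Perm.mul_apply, ← zpow_add, neg_add_cancel, zpow_zero,
            Equiv.Perm.one_apply]
        rw [← h] at h1
        exact h1.symm
      · refine ⟨n, Or.inr ?_⟩
        have h1 : ((a * b) ^ (-n)) (((a * b) ^ n) (b (p⁻¹ x))) = b (p⁻¹ x) := by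
          rw [← Equiv.Perm.mul_apply, ← zpow_add, neg_add_cancel, zpow_zero,
            Equiv.Perm.one_apply]
        rw [← h] at h1
        have h2 : b (((a * b) ^ (-n)) x) = ((a * b) ^ n) (b x) := by rw [hcj, neg_neg]
        rw [← h2, h1, hb]

/-- The key walk computation: as long as the walk stays away from the modified points,
the twisted orbit of `u` traces the original orbit of `v`. -/
lemma walk [DecidableEq V] {a b : Equiv.Perm V} {u v : V} (L : ℕ)
    (hbv1 : b v ≠ u) (hbv2 : b v ≠ v)
    (hmid : ∀ t : ℕ, 1 ≤ t → t < L →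
      ((a * b) ^ t) v ≠ u ∧ ((a * b) ^ t) v ≠ v ∧
      b (((a * b) ^ t) v) ≠ u ∧ b (((a * b) ^ t) v) ≠ v) :
    ∀ s : ℕ, 1 ≤ s → s ≤ L →
      ((a * (Equiv.swap u v * b * Equiv.swap u v)) ^ s) u = ((a * b) ^ s) v := by
  intro s
  induction s with
  | zero => omega
  | succ s ih =>
      intro _ hsL
      rcases Nat.eq_zero_or_pos s with rfl | hs1
      · rw [pow_one, pow_one, Equiv.Perm.mul_apply, Equiv.Perm.mul_apply,
          Equiv.Perm.mul_apply, Equiv.Perm.mul_apply, Equiv.swap_apply_left,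
          Equiv.swap_apply_of_ne_of_ne hbv1 hbv2]
      · have hstep := hmid s hs1 (by omega)
        rw [pow_succ', Equiv.Perm.mul_apply, ih hs1 (by omega), pow_succ',
          Equiv.Perm.mul_apply, Equiv.Perm.mul_apply, Equiv.Perm.mul_apply,
          Equiv.Perm.mul_apply, Equiv.swap_apply_of_ne_of_ne hstep.1 hstep.2.1,
          Equiv.swap_apply_of_ne_of_ne hstep.2.2.1 hstep.2.2.2, Equiv.Perm.mul_apply]


lemma merge [Fintype V] [DecidableEq V] {a b : Equiv.Perm V} {ε : V → ZMod 2}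
    (ha : ∀ x, a (a x) = x) (hb : ∀ x, b (b x) = x)
    (hεa : ∀ x, ε (a x) ≠ ε x) (hεb : ∀ x, ε (b x) ≠ ε x)
    {u v : V} (hεuv : ε u = ε v)
    (hnot : ¬ ∃ p ∈ Subgroup.closure ({a, b} : Set (Equiv.Perm V)), p u = v) :
    ∃ p ∈ Subgroup.closure
      ({a, Equiv.swap u v * b * Equiv.swap u v} : Set (Equiv.Perm V)), p u = v := by
  set g := a * b with hgdef
  have haM : a ∈ Subgroup.closure ({a, b} : Set (Equiv.Perm V)) :=
    Subgroup.subset_closure (by simp)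
  have hbM : b ∈ Subgroup.closure ({a, b} : Set (Equiv.Perm V)) :=
    Subgroup.subset_closure (by simp)
  have hgM : g ∈ Subgroup.closure ({a, b} : Set (Equiv.Perm V)) := mul_mem haM hbM
  have hnot' : ∀ p ∈ Subgroup.closure ({a, b} : Set (Equiv.Perm V)), p v ≠ u := by
    intro p hp hpv
    exact hnot ⟨p⁻¹, inv_mem hp, by rw [← hpv, perm_inv_apply_self]⟩
  have hεg : ∀ x, ε (g x) = ε x := fun x => zmod2_ne_ne (hεa (b x)) (hεb x)
  have hεgp : ∀ (n : ℕ) (x : V), ε ((g ^ n) x) = ε x := eps_pow hεg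
  have hex : ∃ m : ℕ, 0 < m ∧ (g ^ m) v = v :=
    ⟨orderOf g, orderOf_pos g, by rw [pow_orderOf_eq_one]; exact Equiv.Perm.one_apply v⟩
  obtain ⟨hm0, hmv⟩ := Nat.find_spec hex
  set m := Nat.find hex with hmdef
  have hbv1 : b v ≠ u := fun h => hnot' b hbM h
  have hbv2 : b v ≠ v := fun h => hεb v (by rw [h])
  have hmid : ∀ t : ℕ, 1 ≤ t → t < m →
      (g ^ t) v ≠ u ∧ (g ^ t) v ≠ v ∧ b ((g ^ t) v) ≠ u ∧ b ((g ^ t) v) ≠ v := by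
    intro t h1 h2
    refine ⟨fun h => hnot' (g ^ t) (pow_mem hgM t) h, fun h => ?_, fun h => ?_, fun h => ?_⟩
    · exact (Nat.find_min hex h2) ⟨h1, h⟩
    · exact hnot' (b * g ^ t) (mul_mem hbM (pow_mem hgM t))
        (by rw [Equiv.Perm.mul_apply, h])
    · have hc := hεb ((g ^ t) v)
      rw [h, hεgp] at hc
      exact hc rfl
  have hw := walk m hbv1 hbv2 hmid m hm0 le_rfl
  refine ⟨(a * (Equiv.swap u v * b * Equiv.swap u v)) ^ m, ?_, ?_⟩
  · exact pow_mem (mul_mem (Subgroup.subset_closure (by simp))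
      (Subgroup.subset_closure (by simp))) m
  · rw [hw]; exact hmv

lemma split [Fintype V] [DecidableEq V] {a b : Equiv.Perm V} {ε : V → ZMod 2}
    (ha : ∀ x, a (a x) = x) (hb : ∀ x, b (b x) = x)
    (hεa : ∀ x, ε (a x) ≠ ε x) (hεb : ∀ x, ε (b x) ≠ ε x)
    {u v : V} (hεuv : ε u = ε v) (huv : u ≠ v)
    (hsame : ∃ p ∈ Subgroup.closure ({a, b} : Set (Equiv.Perm V)), p u = v) :
    ¬ ∃ p ∈ Subgroup.closure
      ({a, Equiv.swap u v * b * Equiv.swap u v} : Set (Equiv.Perm V)), p u = v := by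
  intro hcon
  set τ := Equiv.swap u v with hτ
  set b' := τ * b * τ with hb'def
  set g := a * b with hgdef
  have hεg : ∀ x, ε (g x) = ε x := fun x => zmod2_ne_ne (hεa (b x)) (hεb x)
  have hεgz : ∀ (n : ℤ) (x : V), ε ((g ^ n) x) = ε x := eps_zpow hεg
  have hεgp : ∀ (n : ℕ) (x : V), ε ((g ^ n) x) = ε x := eps_pow hεg
  obtain ⟨p, hp, hpu⟩ := hsame
  obtain ⟨n, hn⟩ := closure_pair_form ha hb hp u
  have hnv : (g ^ n) u = v := by
    rcases hn with h | h
    · rw [← hpu, h]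
    · exfalso
      have h1 : ε v = ε (b u) := by rw [← hpu, h]; exact hεgz n (b u)
      exact hεb u (h1.symm.trans hεuv.symm)
  have hexu : ∃ m : ℕ, 0 < m ∧ (g ^ m) u = u :=
    ⟨orderOf g, orderOf_pos g, by rw [pow_orderOf_eq_one]; exact Equiv.Perm.one_apply u⟩
  obtain ⟨hm0, hmu⟩ := Nat.find_spec hexu
  set m := Nat.find hexu with hmdef
  have hmin : ∀ t : ℕ, 1 ≤ t → t < m → (g ^ t) u ≠ u :=
    fun t h1 h2 h => Nat.find_min hexu h2 ⟨h1, h⟩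
  rw [zpow_mod_point hm0 hmu n] at hnv
  set r := ((n % (m : ℤ)).toNat) with hrdef
  have hrm : r < m := by
    have h2 := Int.emod_lt_of_pos n (show (0:ℤ) < (m:ℤ) by exact_mod_cast hm0)
    have h3 := Int.emod_nonneg n (show ((m:ℤ)) ≠ 0 by exact_mod_cast hm0.ne')
    omega
  have hr0 : 1 ≤ r := by
    rcases Nat.eq_zero_or_pos r with h | h
    · exfalso
      rw [h, pow_zero, Equiv.Perm.one_apply] at hnv
      exact huv hnv
    · exact h
  set L := m - r with hLdef
  have hL0 : 0 < L := by omega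
  have hLr : L + r = m := by omega
  have hshift : ∀ t : ℕ, (g ^ t) v = (g ^ (t + r)) u := by
    intro t
    rw [pow_add, Equiv.Perm.mul_apply, hnv]
  have hper : ∀ t : ℕ, (g ^ t) v = v → (g ^ t) u = u := by
    intro t ht
    have h1 : (g ^ (t + r)) u = (g ^ r) u := by rw [← hshift, ht, hnv]
    rw [add_comm t r, pow_add, Equiv.Perm.mul_apply] at h1
    exact (g ^ r).injective h1
  have hbv1 : b v ≠ u := by
    intro h
    have hc := hεb v
    rw [h] at hc
    exact hc hεuv
  have hbv2 : b v ≠ v := fun h => hεb v (by rw [h])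
  have hmid : ∀ t : ℕ, 1 ≤ t → t < L →
      (g ^ t) v ≠ u ∧ (g ^ t) v ≠ v ∧ b ((g ^ t) v) ≠ u ∧ b ((g ^ t) v) ≠ v := by
    intro t h1 h2
    refine ⟨fun h => ?_, fun h => ?_, fun h => ?_, fun h => ?_⟩
    · rw [hshift] at h
      exact hmin (t + r) (by omega) (by omega) h
    · exact hmin t h1 (by omega) (hper t h)
    · have hc := hεb ((g ^ t) v)
      rw [h, hεgp] at hc
      exact hc hεuv
    · have hc := hεb ((g ^ t) v)
      rw [h, hεgp] at hc
      exact hc rfl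
  have hw := walk L hbv1 hbv2 hmid
  have hLfix : ((a * b') ^ L) u = u := by
    rw [hw L hL0 le_rfl, hshift, hLr, hmu]
  have hb'invol : ∀ x, b' (b' x) = x := by
    intro x
    simp [hb'def, hτ, Equiv.Perm.mul_apply, Equiv.swap_apply_self, hb]
  have hετ : ∀ x, ε (τ x) = ε x := by
    intro x
    rcases eq_or_ne x u with rfl | hxu
    · rw [hτ, Equiv.swap_apply_left]; exact hεuv.symm
    rcases eq_or_ne x v with rfl | hxv
    · rw [hτ, Equiv.swap_apply_right]; exact hεuv
    · rw [hτ, Equiv.swap_apply_of_ne_of_ne hxu hxv]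
  have hεb' : ∀ x, ε (b' x) ≠ ε x := by
    intro x
    rw [hb'def, Equiv.Perm.mul_apply, Equiv.Perm.mul_apply, hετ, ← hετ x]
    exact hεb (τ x)
  obtain ⟨q, hq, hqu⟩ := hcon
  obtain ⟨n', hn'⟩ := closure_pair_form ha hb'invol hq u
  have hnv' : ((a * b') ^ n') u = v := by
    rcases hn' with h | h
    · rw [← hqu, h]
    · exfalso
      have hεg' : ∀ x, ε ((a * b') x) = ε x := fun x => zmod2_ne_ne (hεa (b' x)) (hεb' x)
      have h1 : ε v = ε (b' u) := by rw [← hqu, h]; exact eps_zpow hεg' n' (b' u)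
      exact hεb' u (h1.symm.trans hεuv.symm)
  rw [zpow_mod_point hL0 hLfix n'] at hnv'
  set s := ((n' % (L : ℤ)).toNat) with hsdef
  have hsL : s < L := by
    have h2 := Int.emod_lt_of_pos n' (show (0:ℤ) < (L:ℤ) by exact_mod_cast hL0)
    have h3 := Int.emod_nonneg n' (show ((L:ℤ)) ≠ 0 by exact_mod_cast hL0.ne')
    omega
  rcases Nat.eq_zero_or_pos s with h0 | h1
  · rw [h0, pow_zero, Equiv.Perm.one_apply] at hnv'
    exact huv hnv'
  · rw [hw s h1 (le_of_lt hsL)] at hnv'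
    exact hmin s h1 (by omega) (hper s hnv')

lemma conj_transfer [DecidableEq V] {a c : Equiv.Perm V} {u v : V}
    (h : ∃ p ∈ Subgroup.closure
        ({Equiv.swap u v * a * Equiv.swap u v,
          Equiv.swap u v * c * Equiv.swap u v} : Set (Equiv.Perm V)), p u = v) :
    ∃ p ∈ Subgroup.closure ({a, c} : Set (Equiv.Perm V)), p u = v := by
  obtain ⟨p, hp, hpu⟩ := h
  set τ := Equiv.swap u v with hτ
  have hmem : τ * p * τ ∈ Subgroup.closure ({a, c} : Set (Equiv.Perm V)) := by
    have h1 := Subgroup.mem_map_of_mem (MulEquiv.toMonoidHom (MulAut.conj τ)) hp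
    rw [MonoidHom.map_closure] at h1
    have himg : (MulEquiv.toMonoidHom (MulAut.conj τ)) ''
        ({τ * a * τ, τ * c * τ} : Set (Equiv.Perm V)) = ({a, c} : Set (Equiv.Perm V)) := by
      rw [Set.image_pair]
      congr 1
      · simp [MulAut.conj_apply, hτ, Equiv.swap_inv, mul_assoc, Equiv.swap_mul_self]
      · congr 1
        simp [MulAut.conj_apply, hτ, Equiv.swap_inv, mul_assoc, Equiv.swap_mul_self]
    rw [himg] at h1
    have hval : (MulEquiv.toMonoidHom (MulAut.conj τ)) p = τ * p * τ := by
      simp [MulAut.conj_apply, hτ, Equiv.swap_inv]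
    rwa [hval] at h1
  refine ⟨(τ * p * τ)⁻¹, inv_mem hmem, ?_⟩
  have : (τ * p * τ) v = u := by
    rw [Equiv.Perm.mul_apply, Equiv.Perm.mul_apply, hτ, Equiv.swap_apply_right, hpu,
      Equiv.swap_apply_right]
  rw [← this, perm_inv_apply_self]

end JiTwistAux

/-- Let `G` be a bipartite 3-gem, `(i,j,k)` a permutation of `(1,2,3)`,
and `{u,v}` a `j`-twistor of `G`. Then in the `ji`-twisting of `G` at `{u,v}`, the pair
`{u,v}` is an `i`-twistor: in the twisted graph, `u` and `v` have equal parity, lie in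
the same `{0,i}`-residue and the same `{j,k}`-residue, and in distinct `{0,j}`-,
`{i,k}`-, `{0,k}`- and `{i,j}`-residues. -/
theorem jiTwisting_isTwistor {V : Type*} [Fintype V] [DecidableEq V] [Nonempty V]
    (σ : Fin 4 → Equiv.Perm V) (ε : V → ZMod 2)
    (hgem : IsGem σ) (hbip : ∀ (c : Fin 4) (x : V), ε (σ c x) ≠ ε x)
    (i j k : Fin 4) (hperm : ({i, j, k} : Finset (Fin 4)) = ({1, 2, 3} : Finset (Fin 4)))
    (u v : V) (htw : IsTwistor σ ε j i k u v) :
    IsTwistor (jiTwisting σ i j u v) ε i j k u v := by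
  obtain ⟨huv, hεuv, hs0j, hsik, hn0i, hnjk, hn0k, hnji⟩ := htw
  have hfacts : ∀ i' j' k' : Fin 4, ({i', j', k'} : Finset (Fin 4)) = {1, 2, 3} →
      i' ≠ 0 ∧ j' ≠ 0 ∧ k' ≠ 0 ∧ i' ≠ j' ∧ i' ≠ k' ∧ j' ≠ k' := by decide
  obtain ⟨hi0, hj0, hk0, hij, hik, hjk⟩ := hfacts i j k hperm
  have hinv : ∀ c : Fin 4, ∀ x : V, σ c (σ c x) = x := fun c => (hgem.1.1 c).2
  set τ := Equiv.swap u v with hτ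
  set σ' := jiTwisting σ i j u v with hσ'
  have hσ'i : σ' i = τ * σ i * τ := by
    simp only [hσ', jiTwisting, hτ]
    rw [if_pos (Or.inl trivial)]
  have hσ'j : σ' j = τ * σ j * τ := by
    simp only [hσ', jiTwisting, hτ]
    rw [if_pos (Or.inr trivial)]
  have hσ'0 : σ' 0 = σ 0 := by
    simp only [hσ', jiTwisting]
    rw [if_neg (show ¬((0 : Fin 4) = i ∨ (0 : Fin 4) = j) from by
      rintro (h | h)
      · exact hi0 h.symm
      · exact hj0 h.symm)]
  have hσ'k : σ' k = σ k := by
    simp only [hσ', jiTwisting]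
    rw [if_neg (show ¬(k = i ∨ k = j) from by
      rintro (h | h)
      · exact hik h.symm
      · exact hjk h.symm)]
  have hres : ∀ (c d : Fin 4) (x y : V), SameResidue σ ({c, d} : Set (Fin 4)) x y ↔
      ∃ p ∈ Subgroup.closure ({σ c, σ d} : Set (Equiv.Perm V)), p x = y := by
    intro c d x y
    unfold SameResidue
    rw [Set.image_pair]
  have hres' : ∀ (c d : Fin 4) (x y : V), SameResidue σ' ({c, d} : Set (Fin 4)) x y ↔
      ∃ p ∈ Subgroup.closure ({σ' c, σ' d} : Set (Equiv.Perm V)), p x = y := by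
    intro c d x y
    unfold SameResidue
    rw [Set.image_pair]
  refine ⟨huv, hεuv, ?_, ?_, ?_, ?_, ?_, ?_⟩
  · -- same {0, i} residue after twisting
    rw [hres' 0 i, hσ'0, hσ'i]
    exact JiTwistAux.merge (hinv 0) (hinv i) (hbip 0) (hbip i) hεuv
      (fun hc => hn0i ((hres 0 i u v).mpr hc))
  · -- same {j, k} residue after twisting
    rw [hres' j k, hσ'j, hσ'k, Set.pair_comm (τ * σ j * τ) (σ k)]
    exact JiTwistAux.merge (hinv k) (hinv j) (hbip k) (hbip j) hεuv
      (fun hc => hnjk ((hres j k u v).mpr (by rwa [Set.pair_comm (σ k) (σ j)] at hc)))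
  · -- distinct {0, j} residues after twisting
    intro hc
    rw [hres' 0 j, hσ'0, hσ'j] at hc
    exact JiTwistAux.split (hinv 0) (hinv j) (hbip 0) (hbip j) hεuv huv
      ((hres 0 j u v).mp hs0j) hc
  · -- distinct {i, k} residues after twisting
    intro hc
    rw [hres' i k, hσ'i, hσ'k, Set.pair_comm (τ * σ i * τ) (σ k)] at hc
    exact JiTwistAux.split (hinv k) (hinv i) (hbip k) (hbip i) hεuv huv
      (by rw [Set.pair_comm (σ k) (σ i)]; exact (hres i k u v).mp hsik) hc
  · -- distinct {0, k} residues after twisting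
    intro hc
    rw [hres' 0 k, hσ'0, hσ'k] at hc
    exact hn0k ((hres 0 k u v).mpr hc)
  · -- distinct {i, j} residues after twisting
    intro hc
    rw [hres' i j, hσ'i, hσ'j] at hc
    have h2 := JiTwistAux.conj_transfer hc
    exact hnji ((hres j i u v).mpr (by rwa [Set.pair_comm (σ i) (σ j)] at h2))
end

section
/- Let C be a bipartite crystallization, let (i,j,k) be a permutation of (1,2,3), and let {u,v} be a j-twistor of C. Then the ji-twisting of C at {u,v} is again a bipartite crystallization; in particular, the twisting does not change the number of 3-residues: for each 3-element subset I of {0,1,2,3}, the twisted graph has the same number of I-residues as C (namely one). -/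
open Equiv

namespace Twist

variable {V : Type*}

/-- Orbit relation of the subgroup generated by two permutations. -/
def OrbRel (s t : Equiv.Perm V) (x y : V) : Prop :=
  ∃ g ∈ Subgroup.closure ({s, t} : Set (Equiv.Perm V)), g x = y

def orbSet (s t : Equiv.Perm V) (x : V) : Set V := {y | OrbRel s t x y}

def orbs (s t : Equiv.Perm V) : Set (Set V) := {O | ∃ x, O = orbSet s t x}

theorem orbRel_refl (s t : Equiv.Perm V) (x : V) : OrbRel s t x x :=
  ⟨1, one_mem _, rfl⟩

theorem orbRel_symm {s t : Equiv.Perm V} {x y : V} (h : OrbRel s t x y) : OrbRel s t y x := by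
  obtain ⟨g, hg, rfl⟩ := h
  exact ⟨g⁻¹, inv_mem hg, by simp⟩

theorem orbRel_trans {s t : Equiv.Perm V} {x y z : V} (h : OrbRel s t x y)
    (h' : OrbRel s t y z) : OrbRel s t x z := by
  obtain ⟨g, hg, rfl⟩ := h
  obtain ⟨g', hg', rfl⟩ := h'
  exact ⟨g' * g, mul_mem hg' hg, rfl⟩

theorem orbRel_left (s t : Equiv.Perm V) (x : V) : OrbRel s t x (s x) :=
  ⟨s, Subgroup.subset_closure (by simp), rfl⟩

theorem orbRel_right (s t : Equiv.Perm V) (x : V) : OrbRel s t x (t x) :=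
  ⟨t, Subgroup.subset_closure (by simp), rfl⟩

theorem orbRel_comm {s t : Equiv.Perm V} {x y : V} (h : OrbRel s t x y) : OrbRel t s x y := by
  obtain ⟨g, hg, rfl⟩ := h
  exact ⟨g, by rwa [Set.pair_comm], rfl⟩

theorem orbRel_pow (s t : Equiv.Perm V) (n : ℕ) (x : V) : OrbRel s t x (((t * s) ^ n) x) :=
  ⟨(t * s) ^ n, pow_mem (mul_mem (Subgroup.subset_closure (by simp))
    (Subgroup.subset_closure (by simp))) n, rfl⟩

theorem mem_orbSet_self (s t : Equiv.Perm V) (x : V) : x ∈ orbSet s t x := orbRel_refl s t x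

theorem orbSet_eq {s t : Equiv.Perm V} {x y : V} (h : OrbRel s t x y) :
    orbSet s t x = orbSet s t y := by
  ext z
  exact ⟨fun hz => orbRel_trans (orbRel_symm h) hz, fun hz => orbRel_trans h hz⟩

/-- If a set is invariant under `s`, `t` and their inverses, it absorbs orbits. -/
theorem orbRel_mem {s t : Equiv.Perm V} {T : Set V}
    (hs : ∀ x ∈ T, s x ∈ T) (hs' : ∀ x ∈ T, s⁻¹ x ∈ T)
    (ht : ∀ x ∈ T, t x ∈ T) (ht' : ∀ x ∈ T, t⁻¹ x ∈ T)
    {x y : V} (h : OrbRel s t x y) (hx : x ∈ T) : y ∈ T := by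
  obtain ⟨g, hg, rfl⟩ := h
  have key : (∀ z ∈ T, g z ∈ T) ∧ (∀ z ∈ T, g⁻¹ z ∈ T) := by
    refine Subgroup.closure_induction
      (p := fun g _ => (∀ z ∈ T, g z ∈ T) ∧ (∀ z ∈ T, g⁻¹ z ∈ T)) ?_ ?_ ?_ ?_ hg
    · rintro w hw
      rcases hw with rfl | rfl
      · exact ⟨hs, hs'⟩
      · exact ⟨ht, ht'⟩
    · simp
    · rintro a b _ _ ⟨ha, ha'⟩ ⟨hb, hb'⟩
      constructor
      · intro z hz; simpa using ha _ (hb _ hz)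
      · intro z hz; simpa using hb' _ (ha' _ hz)
    · rintro a _ ⟨ha, ha'⟩
      exact ⟨ha', by simpa using ha⟩
  exact key.1 x hx

theorem inv_mem_of_invol {s : Equiv.Perm V} (hs2 : ∀ x, s (s x) = x) {T : Set V}
    (hs : ∀ x ∈ T, s x ∈ T) : ∀ x ∈ T, s⁻¹ x ∈ T := by
  intro x hx
  have : s⁻¹ x = s x := by
    have := hs2 x
    simp [Equiv.Perm.inv_def, Equiv.symm_apply_eq, this]
  rw [this]; exact hs x hx


theorem zmod2_ne {a b : ZMod 2} (h : a ≠ b) : a = b + 1 := by revert h; revert a b; decide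

theorem zmod2_add_one_ne (a : ZMod 2) : a + 1 ≠ a := by revert a; decide

section Walk

variable [Fintype V] [DecidableEq V] {s t : Equiv.Perm V} {ε : V → ZMod 2} {u v : V}

/-- MERGE: if `u,v` lie in distinct `⟨s,t⟩`-orbits, then after conjugating `t` by
`swap u v` they lie in the same orbit. -/
theorem merge_reach (hεs : ∀ x, ε (s x) ≠ ε x) (hεt : ∀ x, ε (t x) ≠ ε x)
    (hs2 : ∀ x, s (s x) = x) (ht2 : ∀ x, t (t x) = x)
    (huv : ε u = ε v) (hne : u ≠ v) (hnrel : ¬ OrbRel s t u v) :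
    OrbRel s (Equiv.swap u v * t * Equiv.swap u v) u v := by
  set τ : Equiv.Perm V := Equiv.swap u v with hτ
  set t' : Equiv.Perm V := τ * t * τ with ht'
  set g : Equiv.Perm V := t * s with hg
  -- parity of walk
  have hgpar : ∀ n x, ε ((g ^ n) x) = ε x := by
    intro n
    induction n with
    | zero => simp
    | succ n ih =>
      intro x
      have h1 : (g ^ (n + 1)) x = (g ^ n) (t (s x)) := by
        rw [pow_succ]; rfl
      rw [h1, ih]
      have e1 := zmod2_ne (hεs x)
      have e2 := zmod2_ne (hεt (s x))
      rw [e2, e1]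
      have : ∀ a : ZMod 2, a + 1 + 1 = a := by decide
      exact this _
  -- existence of a return time
  have hex : ∃ n, 0 < n ∧ (g ^ n) v = v := by
    refine ⟨orderOf g, ?_, by rw [pow_orderOf_eq_one]; rfl⟩
    exact orderOf_pos g
  classical
  set m := Nat.find hex with hm
  obtain ⟨hm0, hmv⟩ : 0 < m ∧ (g ^ m) v = v := Nat.find_spec hex
  -- walk points
  set z : ℕ → V := fun n => (g ^ n) v with hz
  have hzsucc : ∀ n, z (n + 1) = t (s (z n)) := by
    intro n
    show (g ^ (n + 1)) v = _
    rw [pow_succ']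
    rfl
  have hzpar : ∀ n, ε (z n) = ε v := fun n => hgpar n v
  have hz0 : z 0 = v := by simp [hz]
  have hzm : z m = v := hmv
  have hz_ne_u : ∀ n, z n ≠ u := by
    intro n h
    have hp := orbRel_pow s t n v
    rw [show ((t * s) ^ n) v = z n from rfl, h] at hp
    exact hnrel (orbRel_symm hp)
  have hz_ne_v : ∀ n, 0 < n → n < m → z n ≠ v := by
    intro n h0 hlt h
    exact Nat.find_min hex hlt ⟨h0, h⟩
  have hsz_ne : ∀ n, s (z n) ≠ u ∧ s (z n) ≠ v := by
    intro n
    have hp : ε (s (z n)) = ε v + 1 := by rw [zmod2_ne (hεs (z n)), hzpar n]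
    constructor <;> intro h
    · rw [h, ← huv] at hp; exact zmod2_add_one_ne _ hp.symm
    · rw [h] at hp; exact zmod2_add_one_ne _ hp.symm
  -- R' chain
  have ht'app : ∀ x, t' x = τ (t (τ x)) := by intro x; simp [ht', Equiv.Perm.mul_apply]
  have key : ∀ d, d < m → OrbRel s t' u (z (m - 1 - d)) := by
    intro d
    induction d with
    | zero =>
      intro _
      have hb : t v = s (z (m - 1)) := by
        have h2 : z m = t (s (z (m - 1))) := by
          rw [← hzsucc]; congr 1; omega
        rw [hzm] at h2
        rw [h2, ht2]
      have ht'u : t' u = s (z (m - 1)) := by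
        rw [ht'app, hτ, Equiv.swap_apply_left, hb,
          Equiv.swap_apply_of_ne_of_ne (hsz_ne _).1 (hsz_ne _).2]
      have h1 : OrbRel s t' u (s (z (m - 1))) := ht'u ▸ orbRel_right s t' u
      have h2 : OrbRel s t' (s (z (m - 1))) (z (m - 1)) := by
        have h3 := orbRel_left s t' (s (z (m - 1)))
        rwa [hs2] at h3
      exact orbRel_trans h1 h2
    | succ d ih =>
      intro hd
      have hprev : OrbRel s t' u (z (m - 1 - d)) := ih (by omega)
      have hn1 : 1 ≤ m - 1 - d := by omega
      have hnm : m - 1 - d < m := by omega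
      have hzn : z (m - 1 - d) = t (s (z (m - 1 - d - 1))) := by
        rw [← hzsucc]; congr 1; omega
      have ht'zn : t' (z (m - 1 - d)) = s (z (m - 1 - d - 1)) := by
        rw [ht'app, hτ,
          Equiv.swap_apply_of_ne_of_ne (hz_ne_u _) (hz_ne_v _ (by omega) hnm), hzn, ht2,
          Equiv.swap_apply_of_ne_of_ne (hsz_ne _).1 (hsz_ne _).2]
      have h1 : OrbRel s t' u (s (z (m - 1 - d - 1))) :=
        orbRel_trans hprev (ht'zn ▸ orbRel_right s t' (z (m - 1 - d)))
      have h2 : OrbRel s t' (s (z (m - 1 - d - 1))) (z (m - 1 - d - 1)) := by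
        have h3 := orbRel_left s t' (s (z (m - 1 - d - 1)))
        rwa [hs2] at h3
      have h4 : OrbRel s t' u (z (m - 1 - d - 1)) := orbRel_trans h1 h2
      have he : m - 1 - d - 1 = m - 1 - (d + 1) := by omega
      rwa [he] at h4
  have hk := key (m - 1) (by omega)
  have he : m - 1 - (m - 1) = 0 := by omega
  rw [he, hz0] at hk
  exact hk

theorem pow_parity (hεs : ∀ x, ε (s x) ≠ ε x) (hεt : ∀ x, ε (t x) ≠ ε x) :
    ∀ (n : ℕ) (x : V), ε (((t * s) ^ n) x) = ε x := by
  intro n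
  induction n with
  | zero => simp
  | succ n ih =>
    intro x
    have h1 : ((t * s) ^ (n + 1)) x = ((t * s) ^ n) (t (s x)) := by
      rw [pow_succ]; rfl
    rw [h1, ih]
    rw [zmod2_ne (hεt (s x)), zmod2_ne (hεs x)]
    have : ∀ a : ZMod 2, a + 1 + 1 = a := by decide
    exact this _

/-- SPLIT: if `u,v` lie in the same `⟨s,t⟩`-orbit, then after conjugating `t` by
`swap u v` they lie in distinct orbits. -/
theorem split_sep (hεs : ∀ x, ε (s x) ≠ ε x) (hεt : ∀ x, ε (t x) ≠ ε x)
    (hs2 : ∀ x, s (s x) = x) (ht2 : ∀ x, t (t x) = x)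
    (huv : ε u = ε v) (hne : u ≠ v) (hrel : OrbRel s t u v) :
    ¬ OrbRel s (Equiv.swap u v * t * Equiv.swap u v) u v := by
  set τ : Equiv.Perm V := Equiv.swap u v with hτ
  set t' : Equiv.Perm V := τ * t * τ with ht'
  set ρ : Equiv.Perm V := t * s with hρ
  have hss : s * s = 1 := by ext x; exact hs2 x
  have htt : t * t = 1 := by ext x; exact ht2 x
  have hsinv : s⁻¹ = s := by rw [eq_comm, eq_inv_iff_mul_eq_one, hss]
  have hρ1 : ρ * s = t := by rw [hρ, mul_assoc, hss, mul_one]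
  -- conjugation relation
  have hconj : s * ρ * s⁻¹ = ρ⁻¹ := by
    rw [hsinv, hρ, mul_inv_rev]
    have : t⁻¹ = t := by rw [eq_comm, eq_inv_iff_mul_eq_one, htt]
    rw [hsinv, this]
    rw [← mul_assoc, mul_assoc (s * t) s s, hss, mul_one]
  have hkey : ∀ zz : ℤ, s * ρ ^ zz = ρ ^ (-zz) * s := by
    intro zz
    have h1 : (MulAut.conj s) (ρ ^ zz) = ((MulAut.conj s) ρ) ^ zz := map_zpow _ _ _
    rw [MulAut.conj_apply, MulAut.conj_apply, hconj] at h1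
    have h2 : (ρ⁻¹) ^ zz = ρ ^ (-zz) := by rw [inv_zpow, zpow_neg]
    rw [h2] at h1
    calc s * ρ ^ zz = (s * ρ ^ zz * s⁻¹) * s := by rw [mul_assoc, hsinv, hss, mul_one]
    _ = ρ ^ (-zz) * s := by rw [h1]
  -- normal form in the dihedral-like group
  have hnf : ∀ g ∈ Subgroup.closure ({s, t} : Set (Equiv.Perm V)),
      ∃ zz : ℤ, g = ρ ^ zz ∨ g = ρ ^ zz * s := by
    intro g hg
    refine Subgroup.closure_induction
      (p := fun g _ => ∃ zz : ℤ, g = ρ ^ zz ∨ g = ρ ^ zz * s) ?_ ?_ ?_ ?_ hg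
    · rintro w hw
      rcases hw with rfl | rfl
      · exact ⟨0, Or.inr (by simp)⟩
      · exact ⟨1, Or.inr (by rw [zpow_one, hρ1])⟩
    · exact ⟨0, Or.inl (by simp)⟩
    · rintro a b _ _ ⟨z1, ha⟩ ⟨z2, hb⟩
      rcases ha with rfl | rfl <;> rcases hb with rfl | rfl
      · exact ⟨z1 + z2, Or.inl (by rw [zpow_add])⟩
      · exact ⟨z1 + z2, Or.inr (by rw [zpow_add, mul_assoc])⟩
      · refine ⟨z1 - z2, Or.inr ?_⟩
        rw [mul_assoc, hkey z2, ← mul_assoc, ← zpow_add, sub_eq_add_neg]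
      · refine ⟨z1 - z2, Or.inl ?_⟩
        rw [mul_assoc, ← mul_assoc s (ρ ^ z2) s, hkey z2, mul_assoc, hss, mul_one,
          ← zpow_add, sub_eq_add_neg]
    · rintro a _ ⟨z1, ha⟩
      rcases ha with rfl | rfl
      · exact ⟨-z1, Or.inl (by rw [zpow_neg])⟩
      · refine ⟨z1, Or.inr ?_⟩
        rw [mul_inv_rev, hsinv, ← zpow_neg, hkey (-z1), neg_neg]
  -- zpow to pow
  have hzton : ∀ zz : ℤ, ∃ n : ℕ, ρ ^ zz = ρ ^ n := by
    intro zz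
    have hN : (0:ℤ) < (orderOf ρ : ℤ) := by exact_mod_cast orderOf_pos ρ
    have h1 : ρ ^ (zz % (orderOf ρ : ℤ)) = ρ ^ zz := zpow_mod_orderOf ρ zz
    refine ⟨(zz % (orderOf ρ : ℤ)).toNat, ?_⟩
    rw [← h1, ← zpow_natCast, Int.toNat_of_nonneg (Int.emod_nonneg zz (by omega))]
  have hpar := pow_parity (s := s) (t := t) hεs hεt
  -- get a positive power sending u to v
  have hn : ∃ n : ℕ, 0 < n ∧ (ρ ^ n) u = v := by
    obtain ⟨g, hg, hguv⟩ := hrel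
    obtain ⟨zz, hz⟩ := hnf g hg
    rcases hz with rfl | rfl
    · obtain ⟨n, hn⟩ := hzton zz
      rw [hn] at hguv
      refine ⟨n, ?_, hguv⟩
      rcases Nat.eq_zero_or_pos n with rfl | h
      · simp at hguv; exact absurd hguv hne
      · exact h
    · exfalso
      have : (ρ ^ zz * s) u = (ρ ^ zz) (s u) := rfl
      rw [this] at hguv
      obtain ⟨n, hn⟩ := hzton zz
      rw [hn] at hguv
      have hp : ε ((ρ ^ n) (s u)) = ε (s u) := hpar n (s u)
      rw [hguv, zmod2_ne (hεs u), huv] at hp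
      exact zmod2_add_one_ne _ hp.symm
  classical
  set r := Nat.find hn with hr
  obtain ⟨hr0, hrv⟩ : 0 < r ∧ (ρ ^ r) u = v := Nat.find_spec hn
  have hmin : ∀ n, 0 < n → n < r → (ρ ^ n) u ≠ v := by
    intro n h0 hlt h
    exact Nat.find_min hn hlt ⟨h0, h⟩
  have hminu : ∀ n, 0 < n → n < r → (ρ ^ n) u ≠ u := by
    intro n h0 hlt h
    have : (ρ ^ (r - n)) u = v := by
      have h2 : (ρ ^ (r - n)) ((ρ ^ n) u) = (ρ ^ r) u := by
        rw [← Equiv.Perm.mul_apply, ← pow_add]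
        congr 2
        omega
      rw [h] at h2
      rw [h2, hrv]
    exact hmin (r - n) (by omega) (by omega) this
  -- the trap set
  set T : Set V := {x | ∃ n, n < r ∧ x = (ρ ^ n) u} ∪ {x | ∃ n, n < r ∧ x = s ((ρ ^ n) u)}
    with hT
  have hstep : ∀ n : ℕ, (ρ ^ (n + 1)) u = t (s ((ρ ^ n) u)) := by
    intro n
    rw [pow_succ']
    rfl
  have htρ : ∀ n : ℕ, t ((ρ ^ (n + 1)) u) = s ((ρ ^ n) u) := by
    intro n; rw [hstep, ht2]
  have hppar1 : ∀ n, ε ((ρ ^ n) u) = ε u := fun n => hpar n u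
  have hppar2 : ∀ n, ε (s ((ρ ^ n) u)) = ε u + 1 := by
    intro n; rw [zmod2_ne (hεs _), hppar1]
  have hs_ne : ∀ n, s ((ρ ^ n) u) ≠ u ∧ s ((ρ ^ n) u) ≠ v := by
    intro n
    constructor <;> intro h
    · have h2 := hppar2 n; rw [h] at h2; exact zmod2_add_one_ne _ h2.symm
    · have h2 := hppar2 n; rw [h, ← huv] at h2; exact zmod2_add_one_ne _ h2.symm
  have huT : u ∈ T := Or.inl ⟨0, hr0, by simp⟩
  have hvT : v ∉ T := by
    rintro (⟨n, hnr, hvn⟩ | ⟨n, hnr, hvn⟩)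
    · rcases Nat.eq_zero_or_pos n with rfl | h0
      · simp at hvn; exact hne hvn.symm
      · exact hmin n h0 hnr hvn.symm
    · exact (hs_ne n).2 hvn.symm
  have ht'app : ∀ x, t' x = τ (t (τ x)) := by intro x; simp [ht', Equiv.Perm.mul_apply]
  -- invariance of T
  have hsT : ∀ x ∈ T, s x ∈ T := by
    rintro x (⟨n, hnr, rfl⟩ | ⟨n, hnr, rfl⟩)
    · exact Or.inr ⟨n, hnr, rfl⟩
    · exact Or.inl ⟨n, hnr, by rw [hs2]⟩
  have ht'T : ∀ x ∈ T, t' x ∈ T := by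
    rintro x (⟨n, hnr, rfl⟩ | ⟨n, hnr, rfl⟩)
    · rcases Nat.eq_zero_or_pos n with rfl | h0
      · -- x = u
        have hbv : t v = s ((ρ ^ (r - 1)) u) := by
          conv_lhs => rw [← hrv, show r = (r - 1) + 1 from by omega]
          exact htρ _
        have h1 : t' ((ρ ^ 0) u) = s ((ρ ^ (r - 1)) u) := by
          simp only [pow_zero, Equiv.Perm.one_apply]
          rw [ht'app, hτ, Equiv.swap_apply_left, hbv,
            Equiv.swap_apply_of_ne_of_ne (hs_ne _).1 (hs_ne _).2]
        rw [h1]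
        exact Or.inr ⟨r - 1, by omega, rfl⟩
      · have hbn : t ((ρ ^ n) u) = s ((ρ ^ (n - 1)) u) := by
          conv_lhs => rw [show n = (n - 1) + 1 from by omega]
          exact htρ _
        have h1 : t' ((ρ ^ n) u) = s ((ρ ^ (n - 1)) u) := by
          rw [ht'app, hτ,
            Equiv.swap_apply_of_ne_of_ne (hminu n h0 hnr) (hmin n h0 hnr), hbn,
            Equiv.swap_apply_of_ne_of_ne (hs_ne _).1 (hs_ne _).2]
        rw [h1]
        exact Or.inr ⟨n - 1, by omega, rfl⟩
    · -- x = s (ρ^n u)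
      have h1 : t' (s ((ρ ^ n) u)) = τ ((ρ ^ (n + 1)) u) := by
        rw [ht'app, hτ, Equiv.swap_apply_of_ne_of_ne (hs_ne n).1 (hs_ne n).2, ← hstep]
      rcases Nat.lt_or_ge (n + 1) r with hlt | hge
      · have h2 : τ ((ρ ^ (n + 1)) u) = (ρ ^ (n + 1)) u := by
          rw [hτ]
          exact Equiv.swap_apply_of_ne_of_ne (hminu (n+1) (by omega) hlt)
            (hmin (n+1) (by omega) hlt)
        rw [h1, h2]
        exact Or.inl ⟨n + 1, hlt, rfl⟩
      · have hnr1 : n + 1 = r := by omega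
        have h2 : τ ((ρ ^ (n + 1)) u) = u := by
          rw [hnr1, hrv, hτ, Equiv.swap_apply_right]
        rw [h1, h2]
        exact Or.inl ⟨0, hr0, by simp⟩
  have ht'2 : ∀ x, t' (t' x) = x := by
    intro x
    rw [ht'app, ht'app, hτ, Equiv.swap_apply_self, ht2, Equiv.swap_apply_self]
  intro hrel'
  exact hvT (orbRel_mem hsT (inv_mem_of_invol hs2 hsT) ht'T
    (inv_mem_of_invol ht'2 ht'T) hrel' huT)

theorem swap_parity [DecidableEq V] (huv : ε u = ε v) (y : V) :
    ε (Equiv.swap u v y) = ε y := by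
  rcases eq_or_ne y u with rfl | hyu
  · rw [Equiv.swap_apply_left, huv]
  rcases eq_or_ne y v with rfl | hyv
  · rw [Equiv.swap_apply_right, huv]
  · rw [Equiv.swap_apply_of_ne_of_ne hyu hyv]

/-- MERGE counting: if `u,v` lie in distinct orbits, conjugating `t` by the swap
decreases the number of orbits by one. -/
theorem merge_count (hεs : ∀ x, ε (s x) ≠ ε x) (hεt : ∀ x, ε (t x) ≠ ε x)
    (hs2 : ∀ x, s (s x) = x) (ht2 : ∀ x, t (t x) = x)
    (huv : ε u = ε v) (hne : u ≠ v) (hnrel : ¬ OrbRel s t u v) :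
    (orbs s t).ncard = (orbs s (Equiv.swap u v * t * Equiv.swap u v)).ncard + 1 := by
  classical
  set τ : Equiv.Perm V := Equiv.swap u v with hτ
  set t' : Equiv.Perm V := τ * t * τ with ht'def
  have ht'app : ∀ x, t' x = τ (t (τ x)) := by intro x; simp [ht'def, Equiv.Perm.mul_apply]
  have ht'2 : ∀ x, t' (t' x) = x := by
    intro x
    rw [ht'app, ht'app, hτ, Equiv.swap_apply_self, ht2, Equiv.swap_apply_self]
  have hτself : ∀ x, τ (τ x) = x := by intro x; rw [hτ, Equiv.swap_apply_self]
  have htt' : ∀ x, t x = τ (t' (τ x)) := by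
    intro x
    rw [ht'app, hτself, hτself]
  have hrel' : OrbRel s t' u v := merge_reach hεs hεt hs2 ht2 huv hne hnrel
  -- u, v not in outside orbits
  have hu_not : ∀ x : V, ¬ OrbRel s t u x → u ∉ orbSet s t x := by
    intro x hx hu
    exact hx (orbRel_symm hu)
  -- basic invariances
  have hOs : ∀ x : V, ∀ y ∈ orbSet s t x, s y ∈ orbSet s t x :=
    fun x y hy => orbRel_trans hy (orbRel_left s t y)
  have hOt : ∀ x : V, ∀ y ∈ orbSet s t x, t y ∈ orbSet s t x :=
    fun x y hy => orbRel_trans hy (orbRel_right s t y)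
  have hO's : ∀ x : V, ∀ y ∈ orbSet s t' x, s y ∈ orbSet s t' x :=
    fun x y hy => orbRel_trans hy (orbRel_left s t' y)
  have hO't : ∀ x : V, ∀ y ∈ orbSet s t' x, t' y ∈ orbSet s t' x :=
    fun x y hy => orbRel_trans hy (orbRel_right s t' y)
  -- K1 : outside orbits unchanged
  have K1 : ∀ x : V, ¬ OrbRel s t u x → ¬ OrbRel s t v x →
      orbSet s t' x = orbSet s t x := by
    intro x hux hvx
    have hu' : u ∉ orbSet s t x := fun hu => hux (orbRel_symm hu)
    have hv' : v ∉ orbSet s t x := fun hv => hvx (orbRel_symm hv)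
    have h1 : orbSet s t' x ⊆ orbSet s t x := by
      intro y hy
      refine orbRel_mem (hOs x) (inv_mem_of_invol hs2 (hOs x))
        (fun y hy => ?_) (inv_mem_of_invol ht'2 ?_) hy (mem_orbSet_self s t x)
      · have hyu : y ≠ u := fun h => hu' (h ▸ hy)
        have hyv : y ≠ v := fun h => hv' (h ▸ hy)
        have hty := hOt x y hy
        have htyu : t y ≠ u := fun h => hu' (h ▸ hty)
        have htyv : t y ≠ v := fun h => hv' (h ▸ hty)
        rw [ht'app, hτ, Equiv.swap_apply_of_ne_of_ne hyu hyv,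
          Equiv.swap_apply_of_ne_of_ne htyu htyv]
        exact hty
      · intro y hy
        have hyu : y ≠ u := fun h => hu' (h ▸ hy)
        have hyv : y ≠ v := fun h => hv' (h ▸ hy)
        have hty := hOt x y hy
        have htyu : t y ≠ u := fun h => hu' (h ▸ hty)
        have htyv : t y ≠ v := fun h => hv' (h ▸ hty)
        rw [ht'app, hτ, Equiv.swap_apply_of_ne_of_ne hyu hyv,
          Equiv.swap_apply_of_ne_of_ne htyu htyv]
        exact hty
    have h2 : orbSet s t x ⊆ orbSet s t' x := by
      have hu'' : u ∉ orbSet s t' x := fun h => hu' (h1 h)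
      have hv'' : v ∉ orbSet s t' x := fun h => hv' (h1 h)
      have htinv : ∀ y ∈ orbSet s t' x, t y ∈ orbSet s t' x := by
        intro y hy
        have hyu : y ≠ u := fun h => hu'' (h ▸ hy)
        have hyv : y ≠ v := fun h => hv'' (h ▸ hy)
        have ht'y := hO't x y hy
        have h3 : t' y ≠ u := fun h => hu'' (h ▸ ht'y)
        have h4 : t' y ≠ v := fun h => hv'' (h ▸ ht'y)
        rw [htt' y, hτ, Equiv.swap_apply_of_ne_of_ne hyu hyv,
          Equiv.swap_apply_of_ne_of_ne h3 h4]
        exact ht'y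
      intro y hy
      exact orbRel_mem (hO's x) (inv_mem_of_invol hs2 (hO's x))
        htinv (inv_mem_of_invol ht2 htinv) hy (mem_orbSet_self s t' x)
    exact h1.antisymm h2
  -- K2 : the two orbits of u and v merge
  have hτT : ∀ (T : Set V), u ∈ T → v ∈ T → ∀ y ∈ T, τ y ∈ T := by
    intro T hu hv y hy
    rcases eq_or_ne y u with rfl | hyu
    · rw [hτ, Equiv.swap_apply_left]; exact hv
    rcases eq_or_ne y v with rfl | hyv
    · rw [hτ, Equiv.swap_apply_right]; exact hu
    · rw [hτ, Equiv.swap_apply_of_ne_of_ne hyu hyv]; exact hy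
  have K2 : orbSet s t' u = orbSet s t u ∪ orbSet s t v := by
    apply Set.Subset.antisymm
    · -- ⊆
      have hT : ∀ y ∈ orbSet s t u ∪ orbSet s t v,
          t' y ∈ orbSet s t u ∪ orbSet s t v := by
        intro y hy
        have hτy := hτT _ (Or.inl (mem_orbSet_self s t u)) (Or.inr (mem_orbSet_self s t v)) y hy
        have hty : t (τ y) ∈ orbSet s t u ∪ orbSet s t v := by
          rcases hτy with h | h
          · exact Or.inl (hOt u _ h)
          · exact Or.inr (hOt v _ h)
        rw [ht'app]
        exact hτT _ (Or.inl (mem_orbSet_self s t u)) (Or.inr (mem_orbSet_self s t v)) _ hty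
      have hS : ∀ y ∈ orbSet s t u ∪ orbSet s t v,
          s y ∈ orbSet s t u ∪ orbSet s t v := by
        rintro y (h | h)
        · exact Or.inl (hOs u _ h)
        · exact Or.inr (hOs v _ h)
      intro y hy
      exact orbRel_mem hS (inv_mem_of_invol hs2 hS) hT (inv_mem_of_invol ht'2 hT) hy
        (Or.inl (mem_orbSet_self s t u))
    · -- ⊇
      have huT : u ∈ orbSet s t' u := mem_orbSet_self s t' u
      have hvT : v ∈ orbSet s t' u := hrel'
      have hT : ∀ y ∈ orbSet s t' u, t y ∈ orbSet s t' u := by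
        intro y hy
        rw [htt' y]
        exact hτT _ huT hvT _ (hO't u _ (hτT _ huT hvT y hy))
      have h1 : orbSet s t u ⊆ orbSet s t' u := fun y hy =>
        orbRel_mem (hO's u) (inv_mem_of_invol hs2 (hO's u)) hT
          (inv_mem_of_invol ht2 hT) hy huT
      have h2 : orbSet s t v ⊆ orbSet s t' u := fun y hy =>
        orbRel_mem (hO's u) (inv_mem_of_invol hs2 (hO's u)) hT
          (inv_mem_of_invol ht2 hT) hy hvT
      exact Set.union_subset h1 h2
  -- the orbit-set identity
  have horbs : orbs s t' =
      insert (orbSet s t u ∪ orbSet s t v)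
        ((orbs s t) \ {orbSet s t u, orbSet s t v}) := by
    ext O
    constructor
    · rintro ⟨x, rfl⟩
      by_cases hux : OrbRel s t u x
      · left
        rw [← K2]
        have hx : OrbRel s t' u x := by
          have : x ∈ orbSet s t' u := by rw [K2]; exact Or.inl hux
          exact this
        exact (orbSet_eq hx).symm
      by_cases hvx : OrbRel s t v x
      · left
        rw [← K2]
        have hx : OrbRel s t' u x := by
          have : x ∈ orbSet s t' u := by rw [K2]; exact Or.inr hvx
          exact this
        exact (orbSet_eq hx).symm
      · right
        refine ⟨⟨x, (K1 x hux hvx).symm ▸ rfl⟩, ?_⟩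
        rw [K1 x hux hvx]
        simp only [Set.mem_insert_iff, Set.mem_singleton_iff]
        push_neg
        constructor
        · intro h
          have hu : u ∈ orbSet s t x := by rw [h]; exact mem_orbSet_self s t u
          exact hux (orbRel_symm hu)
        · intro h
          have hv : v ∈ orbSet s t x := by rw [h]; exact mem_orbSet_self s t v
          exact hvx (orbRel_symm hv)
    · rintro (rfl | ⟨⟨x, rfl⟩, hO⟩)
      · exact ⟨u, K2.symm⟩
      · simp only [Set.mem_insert_iff, Set.mem_singleton_iff] at hO
        push_neg at hO
        have hux : ¬ OrbRel s t u x := by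
          intro h
          exact hO.1 (orbSet_eq h).symm
        have hvx : ¬ OrbRel s t v x := by
          intro h
          exact hO.2 (orbSet_eq h).symm
        exact ⟨x, (K1 x hux hvx).symm⟩
  -- counting
  have hfinA : (orbs s t).Finite := Set.toFinite _
  have hOne : orbSet s t u ≠ orbSet s t v := by
    intro h
    have hv : v ∈ orbSet s t u := by rw [h]; exact mem_orbSet_self s t v
    exact hnrel hv
  have hcnot : (orbSet s t u ∪ orbSet s t v) ∉ orbs s t := by
    rintro ⟨x, hx⟩
    have hu : u ∈ orbSet s t x := by rw [← hx]; exact Or.inl (mem_orbSet_self s t u)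
    have hv : v ∈ orbSet s t x := by rw [← hx]; exact Or.inr (mem_orbSet_self s t v)
    exact hnrel (orbRel_trans (orbRel_symm hu) hv)
  have hsub : ({orbSet s t u, orbSet s t v} : Set (Set V)) ⊆ orbs s t := by
    rintro O (rfl | rfl)
    · exact ⟨u, rfl⟩
    · exact ⟨v, rfl⟩
  have hpair : ({orbSet s t u, orbSet s t v} : Set (Set V)).ncard = 2 := Set.ncard_pair hOne
  have hdiff : ((orbs s t) \ {orbSet s t u, orbSet s t v}).ncard = (orbs s t).ncard - 2 := by
    rw [Set.ncard_diff hsub (Set.toFinite _), hpair]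
  have hnotmem : (orbSet s t u ∪ orbSet s t v) ∉
      (orbs s t) \ ({orbSet s t u, orbSet s t v} : Set (Set V)) :=
    fun h => hcnot h.1
  rw [horbs, Set.ncard_insert_of_notMem hnotmem hfinA.diff, hdiff]
  have hle : 2 ≤ (orbs s t).ncard := by
    calc 2 = ({orbSet s t u, orbSet s t v} : Set (Set V)).ncard := hpair.symm
    _ ≤ _ := Set.ncard_le_ncard hsub hfinA
  omega

end Walk

section Conj
variable [Fintype V] {s t : Equiv.Perm V}

theorem orbRel_conj (τ s t : Equiv.Perm V) (x y : V) :
    OrbRel (τ * s * τ⁻¹) (τ * t * τ⁻¹) x y ↔ OrbRel s t (τ⁻¹ x) (τ⁻¹ y) := by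
  have hcl : Subgroup.closure ({τ * s * τ⁻¹, τ * t * τ⁻¹} : Set (Equiv.Perm V)) =
      Subgroup.map (MulAut.conj τ).toMonoidHom (Subgroup.closure {s, t}) := by
    rw [MonoidHom.map_closure]
    congr 1
    rw [Set.image_pair]
    simp [MulAut.conj_apply]
  constructor
  · rintro ⟨g, hg, rfl⟩
    rw [hcl] at hg
    obtain ⟨g₀, hg₀, rfl⟩ := hg
    refine ⟨g₀, hg₀, ?_⟩
    simp [MulAut.conj_apply, Equiv.Perm.mul_apply]
  · rintro ⟨g, hg, hgx⟩
    refine ⟨τ * g * τ⁻¹, ?_, ?_⟩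
    · rw [hcl]
      exact ⟨g, hg, rfl⟩
    · have h2 := congrArg τ hgx
      simp only [Equiv.Perm.inv_def, Equiv.apply_symm_apply] at h2
      rw [← h2]
      simp [Equiv.Perm.mul_apply]

theorem conj_count (τ s t : Equiv.Perm V) :
    (orbs (τ * s * τ⁻¹) (τ * t * τ⁻¹)).ncard = (orbs s t).ncard := by
  have hset : ∀ x : V, orbSet (τ * s * τ⁻¹) (τ * t * τ⁻¹) x =
      (τ : V → V) '' orbSet s t (τ⁻¹ x) := by
    intro x
    ext y
    rw [Set.mem_image]
    constructor
    · intro hy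
      exact ⟨τ⁻¹ y, (orbRel_conj τ s t x y).1 hy, by simp⟩
    · rintro ⟨z, hz, rfl⟩
      refine (orbRel_conj τ s t x (τ z)).2 ?_
      simpa [orbSet] using hz
  have horbs : orbs (τ * s * τ⁻¹) (τ * t * τ⁻¹) =
      (fun O => (τ : V → V) '' O) '' orbs s t := by
    ext O
    constructor
    · rintro ⟨x, rfl⟩
      exact ⟨orbSet s t (τ⁻¹ x), ⟨τ⁻¹ x, rfl⟩, (hset x).symm⟩
    · rintro ⟨O₀, ⟨x, rfl⟩, rfl⟩
      refine ⟨τ x, ?_⟩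
      rw [hset (τ x)]
      congr 2
      simp
  rw [horbs]
  exact Set.ncard_image_of_injective _ (Set.image_injective.2 τ.injective)

end Conj

/-! ### Bridges between `SameResidue` and `OrbRel`, and residue machinery -/

theorem sameResidue_pair_iff (σ : Fin 4 → Equiv.Perm V) (a b : Fin 4) (x y : V) :
    SameResidue σ ({a, b} : Set (Fin 4)) x y ↔ OrbRel (σ a) (σ b) x y := by
  unfold SameResidue OrbRel
  rw [Set.image_pair]

theorem numResidues_pair (σ : Fin 4 → Equiv.Perm V) (a b : Fin 4) :
    numResidues σ ({a, b} : Set (Fin 4)) = (orbs (σ a) (σ b)).ncard := by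
  unfold numResidues
  congr 1
  unfold residues orbs
  ext O
  constructor
  · rintro ⟨x, rfl⟩
    refine ⟨x, ?_⟩
    ext y
    exact sameResidue_pair_iff σ a b x y
  · rintro ⟨x, rfl⟩
    refine ⟨x, ?_⟩
    ext y
    exact (sameResidue_pair_iff σ a b x y).symm

theorem orbs_comm (s t : Equiv.Perm V) : orbs s t = orbs t s := by
  have h : ∀ x y : V, OrbRel s t x y ↔ OrbRel t s x y :=
    fun x y => ⟨orbRel_comm, orbRel_comm⟩
  unfold orbs orbSet
  ext O
  simp only [Set.mem_setOf_eq]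
  constructor <;> rintro ⟨x, rfl⟩ <;> exact ⟨x, by ext y; simp [OrbRel] at *; rw [h x y]⟩

theorem sameResidue_refl (σ : Fin 4 → Equiv.Perm V) (I : Set (Fin 4)) (x : V) :
    SameResidue σ I x x := ⟨1, one_mem _, rfl⟩

theorem sameResidue_symm {σ : Fin 4 → Equiv.Perm V} {I : Set (Fin 4)} {x y : V}
    (h : SameResidue σ I x y) : SameResidue σ I y x := by
  obtain ⟨g, hg, rfl⟩ := h
  exact ⟨g⁻¹, inv_mem hg, by simp⟩

theorem sameResidue_trans {σ : Fin 4 → Equiv.Perm V} {I : Set (Fin 4)} {x y z : V}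
    (h : SameResidue σ I x y) (h' : SameResidue σ I y z) : SameResidue σ I x z := by
  obtain ⟨g, hg, rfl⟩ := h
  obtain ⟨g', hg', rfl⟩ := h'
  exact ⟨g' * g, mul_mem hg' hg, rfl⟩

theorem sameResidue_step {σ : Fin 4 → Equiv.Perm V} {I : Set (Fin 4)} {d : Fin 4}
    (hd : d ∈ I) (x : V) : SameResidue σ I x (σ d x) :=
  ⟨σ d, Subgroup.subset_closure ⟨d, hd, rfl⟩, rfl⟩

theorem sameResidue_mono {σ : Fin 4 → Equiv.Perm V} {I J : Set (Fin 4)} (hIJ : I ⊆ J)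
    {x y : V} (h : SameResidue σ I x y) : SameResidue σ J x y := by
  obtain ⟨g, hg, rfl⟩ := h
  exact ⟨g, Subgroup.closure_mono (Set.image_mono hIJ) hg, rfl⟩

theorem sameResidue_propagate {σ σ' : Fin 4 → Equiv.Perm V} {I J : Set (Fin 4)}
    (h : ∀ d ∈ J, ∀ x : V, SameResidue σ' I x (σ d x)) {x y : V}
    (hxy : SameResidue σ J x y) : SameResidue σ' I x y := by
  obtain ⟨g, hg, rfl⟩ := hxy
  have key : ∀ z : V, SameResidue σ' I z (g z) := by
    refine Subgroup.closure_induction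
      (p := fun g _ => ∀ z : V, SameResidue σ' I z (g z)) ?_ ?_ ?_ ?_ hg
    · rintro w ⟨d, hd, rfl⟩ z
      exact h d hd z
    · intro z
      exact sameResidue_refl σ' I z
    · intro a b _ _ ha hb z
      exact sameResidue_trans (hb z) (ha (b z))
    · intro a _ ha z
      have := ha (a⁻¹ z)
      simp only [Equiv.Perm.inv_def, Equiv.apply_symm_apply] at this
      exact sameResidue_symm this
  exact key x

theorem numResidues_eq_one [Nonempty V] {σ : Fin 4 → Equiv.Perm V} {I : Set (Fin 4)}
    (h : ∀ x y : V, SameResidue σ I x y) : numResidues σ I = 1 := by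
  have hres : residues σ I = {Set.univ} := by
    ext O
    constructor
    · rintro ⟨x, rfl⟩
      have : {y | SameResidue σ I x y} = Set.univ := by
        ext y; simp [h x y]
      simp [this]
    · rintro rfl
      refine ⟨Classical.arbitrary V, ?_⟩
      ext y
      simp [h _ y]
  rw [numResidues, hres, Set.ncard_singleton]


theorem bCount_expand (σ : Fin 4 → Equiv.Perm V) :
    bCount σ = numResidues σ ({0, 1} : Set (Fin 4)) + numResidues σ ({0, 2} : Set (Fin 4)) +
      numResidues σ ({0, 3} : Set (Fin 4)) + numResidues σ ({1, 2} : Set (Fin 4)) +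
      numResidues σ ({1, 3} : Set (Fin 4)) + numResidues σ ({2, 3} : Set (Fin 4)) := by
  unfold bCount
  rw [show Finset.univ.filter (fun p : Fin 4 × Fin 4 => p.1 < p.2) =
      ({((0:Fin 4),(1:Fin 4)), (0,2), (0,3), (1,2), (1,3), (2,3)} :
        Finset (Fin 4 × Fin 4)) from by decide]
  rw [Finset.sum_insert (by decide), Finset.sum_insert (by decide),
    Finset.sum_insert (by decide), Finset.sum_insert (by decide),
    Finset.sum_insert (by decide), Finset.sum_singleton]
  ring

theorem core {V : Type*} [Fintype V] [DecidableEq V] [Nonempty V]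
    (σ : Fin 4 → Equiv.Perm V) (ε : V → ZMod 2)
    (hcr : IsCrystallization σ) (hbip : ∀ (c : Fin 4) (x : V), ε (σ c x) ≠ ε x)
    (i j k : Fin 4)
    (hij : i ≠ j) (hik : i ≠ k) (hjk : j ≠ k)
    (hi0 : i ≠ 0) (hj0 : j ≠ 0) (hk0 : k ≠ 0)
    (hcov : ∀ c : Fin 4, c = 0 ∨ c = i ∨ c = j ∨ c = k)
    (u v : V) (htw : IsTwistor σ ε j i k u v) :
    (numResidues σ ({0, i} : Set (Fin 4)) =
        numResidues (jiTwisting σ i j u v) ({0, i} : Set (Fin 4)) + 1 ∧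
      numResidues (jiTwisting σ i j u v) ({0, j} : Set (Fin 4)) =
        numResidues σ ({0, j} : Set (Fin 4)) + 1 ∧
      numResidues (jiTwisting σ i j u v) ({0, k} : Set (Fin 4)) =
        numResidues σ ({0, k} : Set (Fin 4)) ∧
      numResidues (jiTwisting σ i j u v) ({i, j} : Set (Fin 4)) =
        numResidues σ ({i, j} : Set (Fin 4)) ∧
      numResidues (jiTwisting σ i j u v) ({i, k} : Set (Fin 4)) =
        numResidues σ ({i, k} : Set (Fin 4)) + 1 ∧
      numResidues σ ({j, k} : Set (Fin 4)) =
        numResidues (jiTwisting σ i j u v) ({j, k} : Set (Fin 4)) + 1) ∧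
    (bCount (jiTwisting σ i j u v) = bCount σ →
      (IsCrystallization (jiTwisting σ i j u v) ∧
      (∀ (c : Fin 4) (x : V), ε (jiTwisting σ i j u v c x) ≠ ε x) ∧
      ∀ c : Fin 4,
        numResidues (jiTwisting σ i j u v) (({c}ᶜ : Set (Fin 4))) =
          numResidues σ (({c}ᶜ : Set (Fin 4))) ∧
        numResidues (jiTwisting σ i j u v) (({c}ᶜ : Set (Fin 4))) = 1)) := by
  classical
  obtain ⟨⟨⟨hfpf, htrans⟩, hgem⟩, hdip⟩ := hcr
  obtain ⟨hne, hpε, h0j, hikr, hn0i, hnjk, hn0k, hnji⟩ := htw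
  set τ : Equiv.Perm V := Equiv.swap u v with hτdef
  set σ' : Fin 4 → Equiv.Perm V := jiTwisting σ i j u v with hσ'def
  have hσ'c : ∀ c, σ' c = if c = i ∨ c = j then τ * σ c * τ else σ c := fun c => rfl
  have hσ'i : σ' i = τ * σ i * τ := by rw [hσ'c i, if_pos (Or.inl rfl)]
  have hσ'j : σ' j = τ * σ j * τ := by rw [hσ'c j, if_pos (Or.inr rfl)]
  have hσ'0 : σ' 0 = σ 0 := by
    rw [hσ'c 0, if_neg]
    rintro (h | h)
    · exact hi0 h.symm
    · exact hj0 h.symm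
  have hσ'k : σ' k = σ k := by
    rw [hσ'c k, if_neg]
    rintro (h | h)
    · exact hik h.symm
    · exact hjk h.symm
  have hτapp : ∀ (w : Equiv.Perm V) (x : V), (τ * w * τ) x = τ (w (τ x)) := by
    intro w x; rfl
  have hconj2 : ∀ w : Equiv.Perm V, τ * (τ * w * τ) * τ = w := by
    intro w
    ext x
    simp [Equiv.Perm.mul_apply, hτdef, Equiv.swap_apply_self]
  have hparconj : ∀ (w : Equiv.Perm V), (∀ x, ε (w x) ≠ ε x) →
      ∀ x, ε ((τ * w * τ) x) ≠ ε x := by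
    intro w hw x
    rw [hτapp, hτdef, swap_parity hpε]
    have := hw ((Equiv.swap u v) x)
    rwa [swap_parity hpε] at this
  have hinvconj : ∀ (w : Equiv.Perm V), (∀ x, w (w x) = x) →
      ∀ x, (τ * w * τ) ((τ * w * τ) x) = x := by
    intro w hw x
    simp [hτapp, hτdef, Equiv.swap_apply_self, hw]
  -- merged residues
  have h0i' : SameResidue σ' ({0, i} : Set (Fin 4)) u v := by
    rw [sameResidue_pair_iff, hσ'0, hσ'i, hτdef]
    exact merge_reach (hbip 0) (hbip i) (hfpf 0).2 (hfpf i).2 hpε hne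
      (fun h => hn0i ((sameResidue_pair_iff σ 0 i u v).2 h))
  have hjk' : SameResidue σ' ({j, k} : Set (Fin 4)) u v := by
    rw [sameResidue_pair_iff]
    apply orbRel_comm
    rw [hσ'k, hσ'j, hτdef]
    exact merge_reach (hbip k) (hbip j) (hfpf k).2 (hfpf j).2 hpε hne
      (fun h => hnjk ((sameResidue_pair_iff σ j k u v).2 (orbRel_comm h)))
  -- u ~ v in every 3-residue of σ'
  have huv' : ∀ c : Fin 4, SameResidue σ' (({c}ᶜ : Set (Fin 4))) u v := by
    intro c
    rcases hcov c with rfl | rfl | rfl | rfl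
    · refine sameResidue_mono ?_ hjk'
      rintro x (rfl | rfl) <;> simp [hj0, hk0]
    · refine sameResidue_mono ?_ hjk'
      rintro x (rfl | rfl) <;> simp [hij.symm, hik.symm]
    · refine sameResidue_mono ?_ h0i'
      rintro x (rfl | rfl) <;> simp [hj0.symm, hij]
    · refine sameResidue_mono ?_ h0i'
      rintro x (rfl | rfl) <;> simp [hk0.symm, hik]
  -- step lemma for original permutations in σ'-residues
  have hB : ∀ (I : Set (Fin 4)), SameResidue σ' I u v →
      ∀ d ∈ I, ∀ x, SameResidue σ' I x (σ d x) := by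
    intro I hIuv d hd x
    by_cases hdij : d = i ∨ d = j
    · have happ : ∀ y, σ' d y = τ (σ d (τ y)) := by
        intro y
        rw [hσ'c d, if_pos hdij, hτapp]
      have hdu : σ d u ≠ u := (hfpf d).1 u
      have hdv : σ d v ≠ v := (hfpf d).1 v
      have hduv : σ d u ≠ v := by
        intro h
        have := hbip d u
        rw [h, ← hpε] at this
        exact this rfl
      have hdvu : σ d v ≠ u := by
        intro h
        have := hbip d v
        rw [h, hpε] at this
        exact this rfl
      by_cases hxu : x = u
      · -- u ~ v ~ σ' d v = σ d u
        rw [hxu]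
        have h2 : σ' d v = σ d u := by
          rw [happ, hτdef, Equiv.swap_apply_right,
            Equiv.swap_apply_of_ne_of_ne hdu hduv]
        exact sameResidue_trans hIuv (h2 ▸ sameResidue_step (σ := σ') hd v)
      by_cases hxv : x = v
      · rw [hxv]
        have h2 : σ' d u = σ d v := by
          rw [happ, hτdef, Equiv.swap_apply_left,
            Equiv.swap_apply_of_ne_of_ne hdvu hdv]
        exact sameResidue_trans (sameResidue_symm hIuv)
          (h2 ▸ sameResidue_step (σ := σ') hd u)
      rcases eq_or_ne (σ d x) u with hdx | hdxu
      · have h2 : σ' d x = v := by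
          rw [happ, hτdef, Equiv.swap_apply_of_ne_of_ne hxu hxv, hdx,
            Equiv.swap_apply_left]
        rw [hdx]
        exact sameResidue_trans (h2 ▸ sameResidue_step (σ := σ') hd x)
          (sameResidue_symm hIuv)
      rcases eq_or_ne (σ d x) v with hdx | hdxv
      · have h2 : σ' d x = u := by
          rw [happ, hτdef, Equiv.swap_apply_of_ne_of_ne hxu hxv, hdx,
            Equiv.swap_apply_right]
        rw [hdx]
        exact sameResidue_trans (h2 ▸ sameResidue_step (σ := σ') hd x) hIuv
      · have h2 : σ' d x = σ d x := by
          rw [happ, hτdef, Equiv.swap_apply_of_ne_of_ne hxu hxv,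
            Equiv.swap_apply_of_ne_of_ne hdxu hdxv]
        exact h2 ▸ sameResidue_step (σ := σ') hd x
    · have h2 : σ' d = σ d := by rw [hσ'c d, if_neg hdij]
      exact h2 ▸ sameResidue_step (σ := σ') hd x
  -- all 3-residues of σ' are everything
  have hD : ∀ c : Fin 4, ∀ x y : V, SameResidue σ' (({c}ᶜ : Set (Fin 4))) x y := by
    intro c
    have hstepAll : ∀ d : Fin 4, ∀ x, SameResidue σ' (({c}ᶜ : Set (Fin 4))) x (σ d x) := by
      intro d x
      by_cases hdc : d = c
      · subst hdc
        exact sameResidue_propagate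
          (fun e he x => hB _ (huv' d) e he x) (hdip d x)
      · exact hB _ (huv' c) d (by simp [hdc]) x
    exact fun x y => sameResidue_propagate (fun d _ x => hstepAll d x) (htrans x y)
  -- all 3-residues of σ are everything
  have hE : ∀ c : Fin 4, ∀ x y : V, SameResidue σ (({c}ᶜ : Set (Fin 4))) x y := by
    intro c
    have hstepAll : ∀ d : Fin 4, ∀ x, SameResidue σ (({c}ᶜ : Set (Fin 4))) x (σ d x) := by
      intro d x
      by_cases hdc : d = c
      · subst hdc; exact hdip d x
      · exact sameResidue_step (by simp [hdc]) x
    exact fun x y => sameResidue_propagate (fun d _ x => hstepAll d x) (htrans x y)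
  -- the six pair equations
  refine ⟨⟨?_, ?_, ?_, ?_, ?_, ?_⟩, ?_⟩
  · -- {0,i} : merge
    rw [numResidues_pair, numResidues_pair, hσ'0, hσ'i, hτdef]
    exact merge_count (hbip 0) (hbip i) (hfpf 0).2 (hfpf i).2 hpε hne
      (fun h => hn0i ((sameResidue_pair_iff σ 0 i u v).2 h))
  · -- {0,j} : split
    rw [numResidues_pair, numResidues_pair, hσ'0, hσ'j]
    have hsplit : ¬ OrbRel (σ 0) (τ * σ j * τ) u v := by
      rw [hτdef]
      exact split_sep (hbip 0) (hbip j) (hfpf 0).2 (hfpf j).2 hpε hne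
        ((sameResidue_pair_iff σ 0 j u v).1 h0j)
    have := merge_count (s := σ 0) (t := τ * σ j * τ) (hbip 0)
      (hparconj _ (hbip j)) (hfpf 0).2 (hinvconj _ (hfpf j).2) hpε hne
      hsplit
    rw [← hτdef, hconj2] at this
    exact this
  · -- {0,k} : unchanged
    rw [numResidues_pair, numResidues_pair, hσ'0, hσ'k]
  · -- {i,j} : conjugate
    rw [numResidues_pair, numResidues_pair, hσ'i, hσ'j]
    have := conj_count τ (σ i) (σ j)
    rwa [hτdef, Equiv.swap_inv, ← hτdef] at this
  · -- {i,k} : split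
    rw [numResidues_pair, numResidues_pair, hσ'i, hσ'k, orbs_comm (τ * σ i * τ) (σ k),
      orbs_comm (σ i) (σ k)]
    have hsplit : ¬ OrbRel (σ k) (τ * σ i * τ) u v := by
      rw [hτdef]
      exact split_sep (hbip k) (hbip i) (hfpf k).2 (hfpf i).2 hpε hne
        (orbRel_comm ((sameResidue_pair_iff σ i k u v).1 hikr))
    have := merge_count (s := σ k) (t := τ * σ i * τ) (hbip k)
      (hparconj _ (hbip i)) (hfpf k).2 (hinvconj _ (hfpf i).2) hpε hne
      hsplit
    rw [← hτdef, hconj2] at this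
    exact this
  · -- {j,k} : merge
    rw [numResidues_pair, numResidues_pair, hσ'j, hσ'k, orbs_comm (σ j) (σ k),
      orbs_comm (τ * σ j * τ) (σ k), hτdef]
    exact merge_count (hbip k) (hbip j) (hfpf k).2 (hfpf j).2 hpε hne
      (fun h => hnjk ((sameResidue_pair_iff σ j k u v).2 (orbRel_comm h)))
  -- main conclusion given the b-count equality
  intro hb
  have hone' : ∀ c : Fin 4, numResidues σ' (({c}ᶜ : Set (Fin 4))) = 1 :=
    fun c => numResidues_eq_one (hD c)
  have hone : ∀ c : Fin 4, numResidues σ (({c}ᶜ : Set (Fin 4))) = 1 :=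
    fun c => numResidues_eq_one (hE c)
  have htC : tCount σ = 4 := by
    unfold tCount
    rw [Fin.sum_univ_four, hone 0, hone 1, hone 2, hone 3]
  have htC' : tCount σ' = 4 := by
    unfold tCount
    rw [Fin.sum_univ_four, hone' 0, hone' 1, hone' 2, hone' 3]
  have hfpf' : ∀ c, IsFPFInvolution (σ' c) := by
    intro c
    by_cases hc : c = i ∨ c = j
    · rw [hσ'c c, if_pos hc]
      constructor
      · intro x h
        rw [hτapp] at h
        have h2 := congrArg τ h
        rw [hτdef, Equiv.swap_apply_self] at h2
        have h3 : τ x = τ x := rfl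
        exact (hfpf c).1 (τ x) h2
      · exact hinvconj _ (hfpf c).2
    · rw [hσ'c c, if_neg hc]
      exact hfpf c
  have htrans' : ∀ x y : V, SameResidue σ' Set.univ x y :=
    fun x y => sameResidue_mono (Set.subset_univ _) (hD 0 x y)
  refine ⟨⟨⟨⟨hfpf', htrans'⟩, ?_⟩, fun c x => hD c x (σ' c x)⟩,
    ?_, fun c => ⟨by rw [hone' c, hone c], hone' c⟩⟩
  · rw [htC', hb, ← htC]
    exact hgem
  · -- parity
    intro c x
    by_cases hc : c = i ∨ c = j
    · rw [hσ'c c, if_pos hc]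
      exact hparconj _ (hbip c) x
    · rw [hσ'c c, if_neg hc]
      exact hbip c x

end Twist


/-- Let `C` be a bipartite crystallization, `(i,j,k)` a permutation of
`(1,2,3)`, and `{u,v}` a `j`-twistor of `C`. Then the `ji`-twisting of `C` at `{u,v}` is
again a bipartite crystallization; in particular the twisting does not change the number
of 3-residues: for each 3-element subset `I` of the colors, the twisted graph has the
same number of `I`-residues as `C`, namely one. -/
theorem jiTwisting_isCrystallization {V : Type*} [Fintype V] [DecidableEq V] [Nonempty V]
    (σ : Fin 4 → Equiv.Perm V) (ε : V → ZMod 2)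
    (hcr : IsCrystallization σ) (hbip : ∀ (c : Fin 4) (x : V), ε (σ c x) ≠ ε x)
    (i j k : Fin 4) (hperm : ({i, j, k} : Finset (Fin 4)) = ({1, 2, 3} : Finset (Fin 4)))
    (u v : V) (htw : IsTwistor σ ε j i k u v) :
    IsCrystallization (jiTwisting σ i j u v) ∧
    (∀ (c : Fin 4) (x : V), ε (jiTwisting σ i j u v c x) ≠ ε x) ∧
    ∀ c : Fin 4,
      numResidues (jiTwisting σ i j u v) (({c}ᶜ : Set (Fin 4))) =
        numResidues σ (({c}ᶜ : Set (Fin 4))) ∧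
      numResidues (jiTwisting σ i j u v) (({c}ᶜ : Set (Fin 4))) = 1 := by
  classical
  have hcomm : ∀ (σ₀ : Fin 4 → Equiv.Perm V) (a b : Fin 4),
      numResidues σ₀ ({a, b} : Set (Fin 4)) = numResidues σ₀ ({b, a} : Set (Fin 4)) :=
    fun σ₀ a b => by rw [Set.pair_comm]
  have hi : i = 1 ∨ i = 2 ∨ i = 3 := by
    have h : i ∈ ({1, 2, 3} : Finset (Fin 4)) := by rw [← hperm]; simp
    simpa using h
  have hj : j = 1 ∨ j = 2 ∨ j = 3 := by
    have h : j ∈ ({1, 2, 3} : Finset (Fin 4)) := by rw [← hperm]; simp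
    simpa using h
  have hk : k = 1 ∨ k = 2 ∨ k = 3 := by
    have h : k ∈ ({1, 2, 3} : Finset (Fin 4)) := by rw [← hperm]; simp
    simpa using h
  rcases hi with rfl | rfl | rfl <;> rcases hj with rfl | rfl | rfl <;>
      rcases hk with rfl | rfl | rfl <;>
    first
    | exact absurd hperm (by decide)
    | · obtain ⟨⟨E1, E2, E3, E4, E5, E6⟩, himp⟩ :=
          Twist.core σ ε hcr hbip _ _ _ (by decide) (by decide) (by decide) (by decide)
            (by decide) (by decide) (by decide) u v htw
        refine himp ?_
        rw [Twist.bCount_expand, Twist.bCount_expand]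
        try simp only [Set.pair_comm (2 : Fin 4) 1, Set.pair_comm (3 : Fin 4) 1,
          Set.pair_comm (3 : Fin 4) 2] at E1 E2 E3 E4 E5 E6
        linarith [E1, E2, E3, E4, E5, E6]
end
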